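/- arXiv:1411.0944 — 4 statements merged into one kernel-verified Lean document; each statement's English description precedes it below -/
import Mathlib

section
/- The cost of local monotonicity on the class 𝔚 of weighted games tends to 1 as the number of players tends to infinity, for each of the collections (Bz^r, PGI^r), (Bz^r, S^r), and (Bz^r, PGI^r, S^r): lim_{n→∞} c_{(Bz^r,PGI^r)}(n,𝔚) = lim_{n→∞} c_{(Bz^r,S^r)}(n,𝔚) = lim_{n→∞} c_{(Bz^r,PGI^r,S^r)}(n,𝔚) = 1. -/
open scoped Classical

/-- A simple game on the player set `{1,…,n}` (modeled as `Fin n`):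
a monotone map from coalitions to `{0,1}` (modeled as `Bool`) that is
`0` on the empty coalition and `1` on the grand coalition. -/
structure SimpleGame (n : ℕ) where
  win : Finset (Fin n) → Bool
  win_empty : win ∅ = false
  win_univ : win Finset.univ = true
  win_mono : ∀ ⦃S T : Finset (Fin n)⦄, S ⊆ T → win S = true → win T = true

namespace SimpleGame

variable {n : ℕ}

/-- Player `i` dominates player `j`: `v((S ∪ {i}) \ {j}) ≥ v(S)` for every
coalition `S` with `j ∈ S` and `i ∉ S`. -/
def Dominates (v : SimpleGame n) (i j : Fin n) : Prop :=
  ∀ S : Finset (Fin n), j ∈ S → i ∉ S → v.win S ≤ v.win ((S ∪ {i}) \ {j})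

/-- The game is complete if the dominance relation is a total preorder. -/
def IsComplete (v : SimpleGame n) : Prop :=
  (∀ i, v.Dominates i i) ∧
  (∀ i j, v.Dominates i j ∨ v.Dominates j i) ∧
  (∀ i j k, v.Dominates i j → v.Dominates j k → v.Dominates i k)

/-- `S` is a minimal winning coalition: winning and every proper subset is losing. -/
def IsMWC (v : SimpleGame n) (S : Finset (Fin n)) : Prop :=
  v.win S = true ∧ ∀ T ⊂ S, v.win T = false

/-- `M_i`: the set of minimal winning coalitions containing player `i`. -/
noncomputable def Mset (v : SimpleGame n) (i : Fin n) : Finset (Finset (Fin n)) :=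
  Finset.univ.filter fun S => v.IsMWC S ∧ i ∈ S

/-- `M_i(l)`: minimal winning coalitions of cardinality `l` containing `i`. -/
noncomputable def Mlset (v : SimpleGame n) (i : Fin n) (l : ℕ) : Finset (Finset (Fin n)) :=
  (v.Mset i).filter fun S => S.card = l

/-- Raw Public Good index: `PGI^r_i(v) = |M_i|`. -/
noncomputable def PGI (v : SimpleGame n) (i : Fin n) : ℕ := (v.Mset i).card

/-- Raw Deegan-Packel index: `DP^r_i(v) = Σ_{S ∈ M_i} 1/|S|`. -/
noncomputable def DP (v : SimpleGame n) (i : Fin n) : ℝ :=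
  ∑ S ∈ v.Mset i, (1 : ℝ) / (S.card : ℝ)

/-- The game is uniform if all minimal winning coalitions have the same cardinality. -/
def IsUniform (v : SimpleGame n) : Prop :=
  ∀ S T, v.IsMWC S → v.IsMWC T → S.card = T.card

/-- `[q; w]` is a weighted representation of `v`. -/
def IsWeightedRep (v : SimpleGame n) (q : ℝ) (w : Fin n → ℝ) : Prop :=
  0 < q ∧ (∀ i, 0 ≤ w i) ∧ ∀ S : Finset (Fin n), v.win S = true ↔ q ≤ ∑ i ∈ S, w i

/-- The game is weighted. -/
def IsWeighted (v : SimpleGame n) : Prop := ∃ q w, v.IsWeightedRep q w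

/-- `D_i`: coalitions decisive for player `i`. -/
noncomputable def Dset (v : SimpleGame n) (i : Fin n) : Finset (Finset (Fin n)) :=
  Finset.univ.filter fun S => i ∈ S ∧ v.win S = true ∧ v.win (S.erase i) = false

/-- Raw Banzhaf index: `Bz^r_i(v) = |D_i|`. -/
noncomputable def Bz (v : SimpleGame n) (i : Fin n) : ℕ := (v.Dset i).card

/-- `S` is a shift-minimal winning coalition. -/
def IsSMWC (v : SimpleGame n) (S : Finset (Fin n)) : Prop :=
  v.IsMWC S ∧ ∀ i ∈ S, ∀ j ∉ S, v.Dominates i j → ¬ v.Dominates j i →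
    v.win ((S \ {i}) ∪ {j}) = false

/-- `𝒮_i`: the set of shift-minimal winning coalitions containing player `i`. -/
noncomputable def Sset (v : SimpleGame n) (i : Fin n) : Finset (Finset (Fin n)) :=
  Finset.univ.filter fun S => v.IsSMWC S ∧ i ∈ S

/-- Raw Shift index: `S^r_i(v) = |𝒮_i|`. -/
noncomputable def ShiftIdx (v : SimpleGame n) (i : Fin n) : ℕ := (v.Sset i).card

/-- The number of players for which the coalition `S` is decisive. -/
noncomputable def numDecisive (v : SimpleGame n) (S : Finset (Fin n)) : ℕ :=
  (Finset.univ.filter fun k => k ∈ S ∧ v.win S = true ∧ v.win (S.erase k) = false).card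

/-- Raw Johnston index: `Jo^r_i(v) = Σ_{S ∈ D_i} 1/#{decisive players of S}`. -/
noncomputable def Jo (v : SimpleGame n) (i : Fin n) : ℝ :=
  ∑ S ∈ v.Dset i, (1 : ℝ) / (v.numDecisive S : ℝ)

/-- `i` is a null player: it belongs to no minimal winning coalition. -/
def IsNull (v : SimpleGame n) (i : Fin n) : Prop := ∀ S, v.IsMWC S → i ∉ S

end SimpleGame

/-- A power index: assigns to every `n`-player simple game a vector in `ℝ^n`. -/
abbrev PowerIndex : Type := ∀ n : ℕ, SimpleGame n → Fin n → ℝ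

/-- A class of games (one set of games for every number of players). -/
abbrev GameClass : Type := ∀ n : ℕ, Set (SimpleGame n)

/-- Convex combination `P^α = Σ_h α_h P^h` of power indices. -/
noncomputable def convexComb {r : ℕ} (α : Fin r → ℝ) (P : Fin r → PowerIndex) : PowerIndex :=
  fun n v i => ∑ h, α h * P h n v i

/-- `Q` satisfies local monotonicity on the `n`-player games of `𝔊`. -/
def LMon (𝔊 : GameClass) (n : ℕ) (Q : PowerIndex) : Prop :=
  ∀ v ∈ 𝔊 n, ∀ i j : Fin n, v.Dominates i j → Q n v j ≤ Q n v i

/-- The cost of local monotonicity `c_𝒫(n,𝔊)`. -/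
noncomputable def costLM {r : ℕ} [NeZero r] (P : Fin r → PowerIndex) (n : ℕ)
    (𝔊 : GameClass) : ℝ :=
  sInf {β : ℝ | β ∈ Set.Icc (0 : ℝ) 1 ∧
    ∀ α ∈ stdSimplex ℝ (Fin r), β ≤ α 0 → LMon 𝔊 n (convexComb α P)}

/-- The raw Banzhaf index as a power index. -/
noncomputable def BzPI : PowerIndex := fun _ v i => (v.Bz i : ℝ)

/-- The raw Public Good index as a power index. -/
noncomputable def PGIPI : PowerIndex := fun _ v i => (v.PGI i : ℝ)

/-- The raw Shift index as a power index. -/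
noncomputable def ShiftPI : PowerIndex := fun _ v i => (v.ShiftIdx i : ℝ)

/-- The raw Johnston index as a power index. -/
noncomputable def JoPI : PowerIndex := fun _ v i => v.Jo i

/-- The raw Deegan-Packel index as a power index. -/
noncomputable def DPPI : PowerIndex := fun _ v i => v.DP i

/-- `𝔚`: the class of weighted games. -/
def WeightedClass : GameClass := fun _ => {v | v.IsWeighted}

open Finset

lemma countA {n : ℕ} (a : Fin n) (k : ℕ) :
    ((Finset.univ : Finset (Finset (Fin n))).filter
      (fun S => a ∈ S ∧ S.card = k + 1)).card = (n - 1).choose k := by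
  have h : ((Finset.univ : Finset (Finset (Fin n))).filter
      (fun S => a ∈ S ∧ S.card = k + 1)).card
      = ((Finset.univ.erase a).powersetCard k).card := by
    refine Finset.card_nbij' (fun S => S.erase a) (fun T => insert a T) ?_ ?_ ?_ ?_
    · intro S hS
      simp only [mem_coe, mem_filter, mem_univ, true_and] at hS
      rw [Finset.mem_coe, Finset.mem_powersetCard]
      exact ⟨Finset.erase_subset_erase a (Finset.subset_univ S),
        by rw [Finset.card_erase_of_mem hS.1, hS.2]; rfl⟩
    · intro T hT
      rw [Finset.mem_coe, Finset.mem_powersetCard] at hT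
      have ha : a ∉ T := fun h => (Finset.mem_erase.mp (hT.1 h)).1 rfl
      simp only [mem_coe, mem_filter, mem_univ, true_and]
      exact ⟨Finset.mem_insert_self _ _, by rw [Finset.card_insert_of_notMem ha, hT.2]⟩
    · intro S hS
      simp only [mem_coe, mem_filter, mem_univ, true_and] at hS
      exact Finset.insert_erase hS.1
    · intro T hT
      rw [Finset.mem_coe, Finset.mem_powersetCard] at hT
      exact Finset.erase_insert (fun h => (Finset.mem_erase.mp (hT.1 h)).1 rfl)
  rw [h, Finset.card_powersetCard, Finset.card_erase_of_mem (Finset.mem_univ a),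
    Finset.card_univ, Fintype.card_fin]

-- subsets containing a, avoiding b
lemma countB {n : ℕ} {a b : Fin n} (hab : a ≠ b) (k : ℕ) :
    ((Finset.univ : Finset (Finset (Fin n))).filter
      (fun S => b ∉ S ∧ a ∈ S ∧ S.card = k + 1)).card = (n - 2).choose k := by
  have h : ((Finset.univ : Finset (Finset (Fin n))).filter
      (fun S => b ∉ S ∧ a ∈ S ∧ S.card = k + 1)).card
      = (((Finset.univ.erase b).erase a).powersetCard k).card := by
    refine Finset.card_nbij' (fun S => S.erase a) (fun T => insert a T) ?_ ?_ ?_ ?_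
    · intro S hS
      simp only [mem_coe, mem_filter, mem_univ, true_and] at hS
      rw [Finset.mem_coe, Finset.mem_powersetCard]
      refine ⟨?_, by rw [Finset.card_erase_of_mem hS.2.1, hS.2.2]; rfl⟩
      intro x hx
      rw [Finset.mem_erase] at hx ⊢
      exact ⟨hx.1, Finset.mem_erase.mpr ⟨fun h => hS.1 (h ▸ hx.2), Finset.mem_univ x⟩⟩
    · intro T hT
      rw [Finset.mem_coe, Finset.mem_powersetCard] at hT
      have ha : a ∉ T := fun h => (Finset.mem_erase.mp (hT.1 h)).1 rfl
      have hb : b ∉ insert a T := by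
        intro h
        rcases Finset.mem_insert.mp h with h | h
        · exact hab h.symm
        · exact (Finset.mem_erase.mp ((Finset.erase_subset a _) (hT.1 h))).1 rfl
      simp only [mem_coe, mem_filter, mem_univ, true_and]
      exact ⟨hb, Finset.mem_insert_self _ _,
        by rw [Finset.card_insert_of_notMem ha, hT.2]⟩
    · intro S hS
      simp only [mem_coe, mem_filter, mem_univ, true_and] at hS
      exact Finset.insert_erase hS.2.1
    · intro T hT
      rw [Finset.mem_coe, Finset.mem_powersetCard] at hT
      exact Finset.erase_insert (fun h => (Finset.mem_erase.mp (hT.1 h)).1 rfl)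
  rw [h, Finset.card_powersetCard, Finset.card_erase_of_mem, Finset.card_erase_of_mem
    (Finset.mem_univ b), Finset.card_univ, Fintype.card_fin]
  · rfl
  · exact Finset.mem_erase.mpr ⟨hab, Finset.mem_univ a⟩

namespace SimpleGame

lemma bz_mono {n : ℕ} (v : SimpleGame n) {i j : Fin n} (h : v.Dominates i j) :
    v.Bz j ≤ v.Bz i := by
  rcases eq_or_ne i j with rfl | hij
  · exact le_refl _
  apply Finset.card_le_card_of_injOn
    (fun S => if i ∈ S then S else insert i (S.erase j))
  · intro S hS
    simp only [Dset, mem_coe, mem_filter, mem_univ, true_and] at hS ⊢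
    obtain ⟨hjS, hwin, hlose⟩ := hS
    by_cases hiS : i ∈ S
    · simp only [if_pos hiS]
      refine ⟨hiS, hwin, ?_⟩
      by_contra hw
      have hw' : v.win (S.erase i) = true := by
        cases hww : v.win (S.erase i)
        · exact absurd hww hw
        · rfl
      have hd := h (S.erase i) (Finset.mem_erase.mpr ⟨hij.symm, hjS⟩)
        (Finset.notMem_erase i S)
      have e2 : (S.erase i ∪ {i}) \ {j} = S.erase j := by
        rw [Finset.union_comm, ← Finset.insert_eq, Finset.insert_erase hiS,
          Finset.sdiff_singleton_eq_erase]
      rw [e2, hlose, hw'] at hd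
      exact absurd hd (by simp)
    · simp only [if_neg hiS]
      have hd := h S hjS hiS
      have e1 : (S ∪ {i}) \ {j} = insert i (S.erase j) := by
        rw [Finset.union_comm, ← Finset.insert_eq, Finset.sdiff_singleton_eq_erase,
          Finset.erase_insert_of_ne hij]
      rw [e1, hwin] at hd
      have hwT : v.win (insert i (S.erase j)) = true := by
        cases hww : v.win (insert i (S.erase j))
        · rw [hww] at hd; exact absurd hd (by simp)
        · rfl
      refine ⟨Finset.mem_insert_self _ _, hwT, ?_⟩
      rw [Finset.erase_insert (fun hmem => hiS (Finset.mem_of_mem_erase hmem))]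
      exact hlose
  · intro S1 h1 S2 h2 heq
    simp only [Finset.coe_filter, Set.mem_setOf_eq, mem_univ, true_and, Dset,
      mem_filter] at h1 h2
    simp only at heq
    by_cases hi1 : i ∈ S1 <;> by_cases hi2 : i ∈ S2
    · rwa [if_pos hi1, if_pos hi2] at heq
    · rw [if_pos hi1, if_neg hi2] at heq
      exact absurd (heq ▸ h1.1) (by
        intro hj
        rcases Finset.mem_insert.mp hj with hh | hh
        · exact hij hh.symm
        · exact (Finset.notMem_erase j S2) hh)
    · rw [if_neg hi1, if_pos hi2] at heq
      exact absurd (heq ▸ h2.1) (by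
        intro hj
        rcases Finset.mem_insert.mp hj with hh | hh
        · exact hij hh.symm
        · exact (Finset.notMem_erase j S1) hh)
    · rw [if_neg hi1, if_neg hi2] at heq
      have := congrArg (fun T => Finset.erase T i) heq
      simp only [Finset.erase_insert (fun hm => hi1 (Finset.mem_of_mem_erase hm)),
        Finset.erase_insert (fun hm => hi2 (Finset.mem_of_mem_erase hm))] at this
      have := congrArg (fun T => insert j T) this
      simpa [Finset.insert_erase h1.1, Finset.insert_erase h2.1] using this

end SimpleGame

/-- The weight of a coalition in our example game: player 0 has weight 2,
all others weight 1. -/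
def wgt {N : ℕ} [NeZero N] (S : Finset (Fin N)) : ℕ :=
  S.card + (if (0 : Fin N) ∈ S then 1 else 0)

lemma wgt_mono {N : ℕ} [NeZero N] {S T : Finset (Fin N)} (h : S ⊆ T) : wgt S ≤ wgt T := by
  unfold wgt
  gcongr ?_ + ?_
  · exact Finset.card_le_card h
  · by_cases h0 : (0 : Fin N) ∈ S
    · rw [if_pos h0, if_pos (h h0)]
    · rw [if_neg h0]; exact Nat.zero_le _

/-- The example game on `m + 6` players: quota 3, player 0 has weight 2,
the remaining `m+5` players have weight 1. -/
def Gex (m : ℕ) : SimpleGame (m + 6) where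
  win S := decide (3 ≤ wgt S)
  win_empty := by simp [wgt]
  win_univ := by
    simp only [decide_eq_true_eq, wgt, Finset.card_univ, Fintype.card_fin,
      Finset.mem_univ, if_pos]
    omega
  win_mono := by
    intro S T hST h
    simp only [decide_eq_true_eq] at h ⊢
    exact le_trans h (wgt_mono hST)

lemma Gex_win_iff {m : ℕ} (S : Finset (Fin (m + 6))) :
    (Gex m).win S = true ↔ 3 ≤ wgt S := by simp [Gex]

lemma Gex_win_false_iff {m : ℕ} (S : Finset (Fin (m + 6))) :
    (Gex m).win S = false ↔ wgt S < 3 := by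
  rw [← Bool.not_eq_true, Gex_win_iff]; omega

lemma Gex_weighted (m : ℕ) : (Gex m).IsWeighted := by
  refine ⟨3, fun i => if i = 0 then 2 else 1, by norm_num, ?_, ?_⟩
  · intro i; by_cases h : i = 0 <;> simp [h]
  · intro S
    rw [Gex_win_iff]
    have : ∑ i ∈ S, (if i = 0 then (2:ℝ) else 1) = (wgt S : ℝ) := by
      have : ∀ i ∈ S, (if i = 0 then (2:ℝ) else 1) = 1 + (if i = 0 then 1 else 0) := by
        intro i _; split_ifs <;> norm_num
      rw [Finset.sum_congr rfl this, Finset.sum_add_distrib, Finset.sum_const,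
        Finset.sum_ite_eq' S (0 : Fin (m+6)) (fun _ => (1:ℝ))]
      by_cases h0 : (0 : Fin (m+6)) ∈ S <;> simp [wgt, h0]
    rw [this]
    constructor
    · intro h; exact_mod_cast Nat.cast_le.mpr h
    · intro h; exact_mod_cast h

/-- Player 0 dominates every player. -/
lemma Gex_dom_zero {m : ℕ} (j : Fin (m + 6)) : (Gex m).Dominates 0 j := by
  intro S hjS h0S
  have hne : j ≠ 0 := fun h => h0S (h ▸ hjS)
  have hw : wgt S ≤ wgt ((S ∪ {0}) \ {j}) := by
    have e : (S ∪ {0}) \ {j} = (insert 0 S).erase j := by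
      rw [Finset.union_comm, ← Finset.insert_eq, Finset.sdiff_singleton_eq_erase]
    rw [e]
    unfold wgt
    have hc : ((insert 0 S).erase j).card = S.card := by
      rw [Finset.card_erase_of_mem (Finset.mem_insert_of_mem hjS),
        Finset.card_insert_of_notMem h0S]
      omega
    have h0 : (0 : Fin (m+6)) ∈ (insert 0 S).erase j :=
      Finset.mem_erase.mpr ⟨hne.symm, Finset.mem_insert_self _ _⟩
    rw [hc, if_pos h0, if_neg h0S]
    omega
  rcases hww : (Gex m).win S with _ | _
  · exact Bool.false_le _
  · have := (Gex_win_iff S).mp hww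
    rw [(Gex_win_iff _).mpr (le_trans this hw)]

/-- Every small player dominates every small player. -/
lemma Gex_dom_small {m : ℕ} {i j : Fin (m + 6)} (hi : i ≠ 0) (hj : j ≠ 0) :
    (Gex m).Dominates i j := by
  intro S hjS hiS
  have hw : wgt ((S ∪ {i}) \ {j}) = wgt S := by
    have e : (S ∪ {i}) \ {j} = (insert i S).erase j := by
      rw [Finset.union_comm, ← Finset.insert_eq, Finset.sdiff_singleton_eq_erase]
    rw [e]
    unfold wgt
    have hc : ((insert i S).erase j).card = S.card := by
      rw [Finset.card_erase_of_mem (Finset.mem_insert_of_mem hjS),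
        Finset.card_insert_of_notMem hiS]
      omega
    have h0 : (0 : Fin (m+6)) ∈ (insert i S).erase j ↔ (0 : Fin (m+6)) ∈ S := by
      constructor
      · intro h
        rcases Finset.mem_insert.mp (Finset.mem_of_mem_erase h) with h' | h'
        · exact absurd h'.symm hi
        · exact h'
      · intro h
        exact Finset.mem_erase.mpr ⟨hj.symm, Finset.mem_insert_of_mem h⟩
    rw [hc]
    by_cases h0S : (0 : Fin (m+6)) ∈ S
    · rw [if_pos (h0.mpr h0S), if_pos h0S]
    · rw [if_neg (fun h => h0S (h0.mp h)), if_neg h0S]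
  rcases hww : (Gex m).win S with _ | _
  · exact Bool.false_le _
  · have := (Gex_win_iff S).mp hww
    rw [(Gex_win_iff _).mpr (hw ▸ this)]

lemma wgt_le_card_add_one {N : ℕ} [NeZero N] (S : Finset (Fin N)) :
    wgt S ≤ S.card + 1 := by
  unfold wgt
  by_cases h : (0 : Fin N) ∈ S <;> simp [h]

lemma card_le_wgt {N : ℕ} [NeZero N] (S : Finset (Fin N)) : S.card ≤ wgt S :=
  Nat.le_add_right _ _

lemma fin_zero_ne_one (m : ℕ) : (0 : Fin (m + 6)) ≠ 1 := by
  simp [Fin.ext_iff]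

lemma Gex_mwc_iff {m : ℕ} (S : Finset (Fin (m + 6))) :
    (Gex m).IsMWC S ↔
      ((0 : Fin (m+6)) ∈ S ∧ S.card = 2) ∨ ((0 : Fin (m+6)) ∉ S ∧ S.card = 3) := by
  constructor
  · rintro ⟨hwin, hmin⟩
    rw [Gex_win_iff] at hwin
    by_cases h0 : (0 : Fin (m+6)) ∈ S
    · left
      refine ⟨h0, ?_⟩
      have hc2 : 2 ≤ S.card := by
        unfold wgt at hwin; rw [if_pos h0] at hwin; omega
      by_contra hne
      have hc3 : 3 ≤ S.card := by omega
      -- pick s ∈ S, s ≠ 0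
      have hne' : (S.erase 0).Nonempty := by
        rw [← Finset.card_pos, Finset.card_erase_of_mem h0]; omega
      obtain ⟨s, hs⟩ := hne'
      have hs0 : s ≠ 0 := (Finset.mem_erase.mp hs).1
      have hsS : s ∈ S := Finset.mem_of_mem_erase hs
      have hTsub : ({0, s} : Finset (Fin (m+6))) ⊆ S := by
        intro x hx
        rcases Finset.mem_insert.mp hx with rfl | hx
        · exact h0
        · rwa [Finset.mem_singleton.mp hx]
      have hTcard : ({0, s} : Finset (Fin (m+6))).card = 2 := Finset.card_pair (Ne.symm hs0)
      have hT : ({0, s} : Finset (Fin (m+6))) ⊂ S :=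
        Finset.ssubset_iff_subset_ne.mpr ⟨hTsub, fun h => by rw [h] at hTcard; omega⟩
      have := hmin _ hT
      rw [Gex_win_false_iff] at this
      unfold wgt at this
      rw [if_pos (Finset.mem_insert_self _ _), hTcard] at this
      omega
    · right
      refine ⟨h0, ?_⟩
      have hc3 : 3 ≤ S.card := by
        unfold wgt at hwin; rw [if_neg h0] at hwin; omega
      by_contra hne
      have hc4 : 4 ≤ S.card := by omega
      obtain ⟨T, hTsub, hTcard⟩ := Finset.exists_subset_card_eq (show 3 ≤ S.card by omega)
      have hT : T ⊂ S := Finset.ssubset_iff_subset_ne.mpr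
        ⟨hTsub, fun h => by rw [h] at hTcard; omega⟩
      have := hmin _ hT
      rw [Gex_win_false_iff] at this
      have := card_le_wgt T
      omega
  · rintro (⟨h0, hc⟩ | ⟨h0, hc⟩)
    · constructor
      · rw [Gex_win_iff]
        unfold wgt; rw [if_pos h0]; omega
      · intro T hT
        rw [Gex_win_false_iff]
        have hcT : T.card < 2 := hc ▸ Finset.card_lt_card hT
        have := wgt_le_card_add_one T
        omega
    · constructor
      · rw [Gex_win_iff]
        have := card_le_wgt S; omega
      · intro T hT
        rw [Gex_win_false_iff]
        have hcT : T.card < 3 := hc ▸ Finset.card_lt_card hT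
        have h0T : (0 : Fin (m+6)) ∉ T := fun h => h0 (hT.1 h)
        unfold wgt; rw [if_neg h0T]; omega

lemma Gex_smwc {m : ℕ} {S : Finset (Fin (m + 6))} (h : (Gex m).IsMWC S) :
    (Gex m).IsSMWC S := by
  refine ⟨h, ?_⟩
  intro i hiS j hjS hij hji
  by_cases hi0 : i = 0
  · subst hi0
    have hj0 : j ≠ 0 := fun hh => hjS (hh ▸ hiS)
    have hc : S.card = 2 := by
      rcases (Gex_mwc_iff S).mp h with ⟨_, hc⟩ | ⟨h0, _⟩
      · exact hc
      · exact absurd hiS h0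
    rw [Gex_win_false_iff]
    have hj' : j ∉ S \ {0} := fun hh => hjS (Finset.mem_sdiff.mp hh).1
    have hcT : ((S \ {0}) ∪ {j}).card = 2 := by
      rw [Finset.union_comm, ← Finset.insert_eq, Finset.card_insert_of_notMem hj',
        Finset.sdiff_singleton_eq_erase, Finset.card_erase_of_mem hiS, hc]
    have h0T : (0 : Fin (m+6)) ∉ (S \ {0}) ∪ {j} := by
      intro hh
      rcases Finset.mem_union.mp hh with hh | hh
      · exact (Finset.mem_sdiff.mp hh).2 (Finset.mem_singleton_self 0)
      · exact hj0 (Finset.mem_singleton.mp hh).symm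
    unfold wgt; rw [if_neg h0T]; omega
  · by_cases hj0 : j = 0
    · exact absurd (hj0 ▸ Gex_dom_zero i) hji
    · exact absurd (Gex_dom_small hj0 hi0) hji

open SimpleGame

lemma Gex_Mset0 (m : ℕ) : (Gex m).Mset 0 =
    Finset.univ.filter (fun S => (0 : Fin (m+6)) ∈ S ∧ S.card = 2) := by
  ext S
  simp only [Mset, mem_filter, mem_univ, true_and, Gex_mwc_iff]
  tauto

lemma Gex_Mset1 (m : ℕ) : (Gex m).Mset 1 =
    Finset.univ.filter (fun S => ((0 : Fin (m+6)) ∈ S ∧ (1 : Fin (m+6)) ∈ S ∧ S.card = 2)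
      ∨ ((0 : Fin (m+6)) ∉ S ∧ (1 : Fin (m+6)) ∈ S ∧ S.card = 3)) := by
  ext S
  simp only [Mset, mem_filter, mem_univ, true_and, Gex_mwc_iff]
  tauto

lemma Gex_Dset0 (m : ℕ) : (Gex m).Dset 0 =
    Finset.univ.filter (fun S => (0 : Fin (m+6)) ∈ S ∧ (S.card = 2 ∨ S.card = 3)) := by
  ext S
  simp only [Dset, mem_filter, mem_univ, true_and, Gex_win_iff, Gex_win_false_iff]
  constructor
  · rintro ⟨h0, hw, hl⟩
    refine ⟨h0, ?_⟩
    have hcard : 1 ≤ S.card := Finset.card_pos.mpr ⟨0, h0⟩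
    unfold wgt at hw hl
    rw [if_pos h0] at hw
    rw [if_neg (Finset.notMem_erase 0 S), Finset.card_erase_of_mem h0] at hl
    omega
  · rintro ⟨h0, hc⟩
    have hcard : 1 ≤ S.card := Finset.card_pos.mpr ⟨0, h0⟩
    refine ⟨h0, ?_, ?_⟩
    · unfold wgt; rw [if_pos h0]; omega
    · unfold wgt
      rw [if_neg (Finset.notMem_erase 0 S), Finset.card_erase_of_mem h0]; omega

lemma Gex_Dset1 (m : ℕ) : (Gex m).Dset 1 =
    Finset.univ.filter (fun S => ((0 : Fin (m+6)) ∈ S ∧ (1 : Fin (m+6)) ∈ S ∧ S.card = 2)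
      ∨ ((0 : Fin (m+6)) ∉ S ∧ (1 : Fin (m+6)) ∈ S ∧ S.card = 3)) := by
  ext S
  simp only [Dset, mem_filter, mem_univ, true_and, Gex_win_iff, Gex_win_false_iff]
  constructor
  · rintro ⟨h1, hw, hl⟩
    have hcard : 1 ≤ S.card := Finset.card_pos.mpr ⟨1, h1⟩
    unfold wgt at hw hl
    rw [Finset.card_erase_of_mem h1] at hl
    by_cases h0 : (0 : Fin (m+6)) ∈ S
    · left
      refine ⟨h0, h1, ?_⟩
      rw [if_pos h0] at hw
      rw [if_pos (Finset.mem_erase.mpr ⟨fin_zero_ne_one m, h0⟩)] at hl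
      omega
    · right
      refine ⟨h0, h1, ?_⟩
      rw [if_neg h0] at hw
      rw [if_neg (fun hh => h0 (Finset.mem_of_mem_erase hh))] at hl
      omega
  · rintro (⟨h0, h1, hc⟩ | ⟨h0, h1, hc⟩)
    · refine ⟨h1, ?_, ?_⟩
      · unfold wgt; rw [if_pos h0]; omega
      · unfold wgt
        rw [if_pos (Finset.mem_erase.mpr ⟨fin_zero_ne_one m, h0⟩),
          Finset.card_erase_of_mem h1]
        omega
    · refine ⟨h1, ?_, ?_⟩
      · unfold wgt; rw [if_neg h0]; omega
      · unfold wgt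
        rw [if_neg (fun hh => h0 (Finset.mem_of_mem_erase hh)),
          Finset.card_erase_of_mem h1]
        omega

lemma Gex_Sset (m : ℕ) (p : Fin (m+6)) : (Gex m).Sset p = (Gex m).Mset p := by
  ext S
  simp only [Sset, Mset, mem_filter, mem_univ, true_and]
  exact ⟨fun ⟨hs, hp⟩ => ⟨hs.1, hp⟩, fun ⟨hm, hp⟩ => ⟨Gex_smwc hm, hp⟩⟩

lemma Gex_PGI0 (m : ℕ) : (Gex m).PGI 0 = m + 5 := by
  unfold PGI
  rw [Gex_Mset0]
  have := countA (0 : Fin (m+6)) 1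
  norm_num at this
  rw [this]

lemma filter_pair (m : ℕ) :
    (Finset.univ.filter (fun S : Finset (Fin (m+6)) => (0 : Fin (m+6)) ∈ S ∧ (1 : Fin (m+6)) ∈ S ∧ S.card = 2))
      = {({0, 1} : Finset (Fin (m+6)))} := by
  ext S
  simp only [mem_filter, mem_univ, true_and, Finset.mem_singleton]
  constructor
  · rintro ⟨h0, h1, hc⟩
    have hsub : ({0, 1} : Finset (Fin (m+6))) ⊆ S := by
      intro x hx
      rcases Finset.mem_insert.mp hx with rfl | hx
      · exact h0
      · rwa [Finset.mem_singleton.mp hx]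
    refine (Finset.eq_of_subset_of_card_le hsub ?_).symm
    rw [hc, Finset.card_pair (fin_zero_ne_one m)]
  · rintro rfl
    refine ⟨Finset.mem_insert_self _ _, ?_, Finset.card_pair (fin_zero_ne_one m)⟩
    exact Finset.mem_insert_of_mem (Finset.mem_singleton_self 1)

lemma card_two_filter (m : ℕ) :
    (Finset.univ.filter (fun S : Finset (Fin (m+6)) => ((0 : Fin (m+6)) ∈ S ∧ (1 : Fin (m+6)) ∈ S ∧ S.card = 2)
      ∨ ((0 : Fin (m+6)) ∉ S ∧ (1 : Fin (m+6)) ∈ S ∧ S.card = 3))).card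
      = 1 + (m + 4).choose 2 := by
  rw [Finset.filter_or, Finset.card_union_of_disjoint]
  · rw [filter_pair, Finset.card_singleton]
    have := countB (a := (1 : Fin (m+6))) (b := (0 : Fin (m+6)))
      (fun h => (fin_zero_ne_one m) h.symm) 2
    norm_num at this
    rw [this]
    have : m + 6 - 2 = m + 4 := by omega
    rw [this]
  · rw [Finset.disjoint_left]
    intro S hS1 hS2
    rw [mem_filter] at hS1 hS2
    exact hS2.2.1 hS1.2.1

lemma Gex_PGI1 (m : ℕ) : (Gex m).PGI 1 = 1 + (m + 4).choose 2 := by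
  unfold PGI
  rw [Gex_Mset1, card_two_filter]

lemma Gex_Bz1 (m : ℕ) : (Gex m).Bz 1 = 1 + (m + 4).choose 2 := by
  unfold Bz
  rw [Gex_Dset1, card_two_filter]

lemma Gex_Bz0 (m : ℕ) : (Gex m).Bz 0 = (m + 5) + (m + 5).choose 2 := by
  unfold Bz
  rw [Gex_Dset0]
  have hsplit : (Finset.univ.filter
      (fun S => (0 : Fin (m+6)) ∈ S ∧ (S.card = 2 ∨ S.card = 3)))
      = Finset.univ.filter (fun S : Finset (Fin (m+6)) => (0 : Fin (m+6)) ∈ S ∧ S.card = 2)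
        ∪ Finset.univ.filter (fun S : Finset (Fin (m+6)) => (0 : Fin (m+6)) ∈ S ∧ S.card = 3) := by
    ext S
    simp only [mem_filter, Finset.mem_union, mem_univ, true_and]
    tauto
  rw [hsplit, Finset.card_union_of_disjoint]
  · have h1 := countA (0 : Fin (m+6)) 1
    have h2 := countA (0 : Fin (m+6)) 2
    norm_num at h1 h2
    rw [h1, h2]
  · rw [Finset.disjoint_left]
    intro S hS1 hS2
    rw [mem_filter] at hS1 hS2
    omega
  
lemma Gex_Shift0 (m : ℕ) : (Gex m).ShiftIdx 0 = m + 5 := by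
  unfold ShiftIdx
  rw [Gex_Sset]
  exact Gex_PGI0 m

lemma Gex_Shift1 (m : ℕ) : (Gex m).ShiftIdx 1 = 1 + (m + 4).choose 2 := by
  unfold ShiftIdx
  rw [Gex_Sset]
  exact Gex_PGI1 m

/-- If `α 0 ≥ 1` on the standard simplex and the first index is the raw Banzhaf
index, the convex combination satisfies local monotonicity. -/
lemma lmon_of_one {r n : ℕ} [NeZero r] (P : Fin r → PowerIndex) (hP : P 0 = BzPI)
    {α : Fin r → ℝ} (hα : α ∈ stdSimplex ℝ (Fin r)) (h1 : 1 ≤ α 0) :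
    LMon WeightedClass n (convexComb α P) := by
  obtain ⟨hnn, hsum⟩ := hα
  have hkey : α 0 + ∑ h ∈ Finset.univ.erase 0, α h = 1 := by
    rw [Finset.add_sum_erase Finset.univ α (Finset.mem_univ 0)]
    exact hsum
  have hge : (0:ℝ) ≤ ∑ h ∈ Finset.univ.erase 0, α h :=
    Finset.sum_nonneg (fun h _ => hnn h)
  have hzsum : ∑ h ∈ Finset.univ.erase 0, α h = 0 := by linarith
  have hz : ∀ h ∈ Finset.univ.erase 0, α h = 0 :=
    (Finset.sum_eq_zero_iff_of_nonneg (fun h _ => hnn h)).mp hzsum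
  have hα0 : α 0 = 1 := by linarith
  intro v hv i j hij
  have hQ : ∀ x, convexComb α P n v x = P 0 n v x := by
    intro x
    unfold convexComb
    rw [Finset.sum_eq_single_of_mem 0 (Finset.mem_univ 0)]
    · rw [hα0, one_mul]
    · intro b _ hb
      rw [hz b (Finset.mem_erase.mpr ⟨hb, Finset.mem_univ b⟩), zero_mul]
  rw [hQ i, hQ j, hP]
  exact_mod_cast Nat.cast_le.mpr (v.bz_mono hij)

lemma one_mem_costLM_set {r : ℕ} [NeZero r] (P : Fin r → PowerIndex) (hP : P 0 = BzPI)
    (n : ℕ) : (1:ℝ) ∈ {β : ℝ | β ∈ Set.Icc (0 : ℝ) 1 ∧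
      ∀ α ∈ stdSimplex ℝ (Fin r), β ≤ α 0 → LMon WeightedClass n (convexComb α P)} :=
  ⟨⟨zero_le_one, le_refl 1⟩, fun α hα h1 => lmon_of_one P hP hα h1⟩

lemma costLM_le_one {r : ℕ} [NeZero r] (P : Fin r → PowerIndex) (hP : P 0 = BzPI)
    (n : ℕ) : costLM P n WeightedClass ≤ 1 :=
  csInf_le ⟨0, fun _ hx => hx.1.1⟩ (one_mem_costLM_set P hP n)

lemma costLM_nonneg {r : ℕ} [NeZero r] (P : Fin r → PowerIndex) (hP : P 0 = BzPI)
    (n : ℕ) : 0 ≤ costLM P n WeightedClass :=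
  le_csInf ⟨1, one_mem_costLM_set P hP n⟩ (fun _ hx => hx.1.1)

/-- The violation of local monotonicity in the example game. -/
lemma Gex_violation (m : ℕ) {β : ℝ} (hβ0 : 0 ≤ β)
    (hβ : β * ((m:ℝ)+5) < (m:ℝ)+1) :
    β * ((Gex m).Bz 0 : ℝ) + (1 - β) * ((Gex m).PGI 0 : ℝ)
      < β * ((Gex m).Bz 1 : ℝ) + (1 - β) * ((Gex m).PGI 1 : ℝ) := by
  rw [Gex_Bz0, Gex_Bz1, Gex_PGI0, Gex_PGI1]
  have c5 : (((m+5).choose 2 : ℕ) : ℝ) = ((m:ℝ)+5) * ((m:ℝ)+4) / 2 := by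
    rw [Nat.cast_choose_two]; push_cast; ring
  have c4 : (((m+4).choose 2 : ℕ) : ℝ) = ((m:ℝ)+4) * ((m:ℝ)+3) / 2 := by
    rw [Nat.cast_choose_two]; push_cast; ring
  push_cast [c5, c4]
  have key : β * (((m:ℝ)+5) * ((m:ℝ)+4)) < ((m:ℝ)+1) * ((m:ℝ)+4) := by
    have hpos : (0:ℝ) < (m:ℝ)+4 := by positivity
    calc β * (((m:ℝ)+5) * ((m:ℝ)+4)) = (β * ((m:ℝ)+5)) * ((m:ℝ)+4) := by ring
    _ < ((m:ℝ)+1) * ((m:ℝ)+4) := by exact mul_lt_mul_of_pos_right hβ hpos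
  nlinarith [key]

lemma alpha2_mem {β : ℝ} (h0 : 0 ≤ β) (h1 : β ≤ 1) :
    (![β, 1-β] : Fin 2 → ℝ) ∈ stdSimplex ℝ (Fin 2) := by
  constructor
  · intro h
    fin_cases h <;> simp <;> linarith
  · simp [Fin.sum_univ_two]

lemma alpha3_mem {β : ℝ} (h0 : 0 ≤ β) (h1 : β ≤ 1) :
    (![β, 1-β, 0] : Fin 3 → ℝ) ∈ stdSimplex ℝ (Fin 3) := by
  constructor
  · intro h
    fin_cases h <;> simp <;> linarith
  · simp [Fin.sum_univ_three]

lemma lb_PGI (m : ℕ) :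
    ((m:ℝ)+1)/((m:ℝ)+5) ≤ costLM ![BzPI, PGIPI] (m+6) WeightedClass := by
  apply le_csInf ⟨1, one_mem_costLM_set _ rfl _⟩
  rintro β ⟨⟨hβ0, hβ1⟩, hall⟩
  by_contra hlt
  push_neg at hlt
  have hβ : β * ((m:ℝ)+5) < (m:ℝ)+1 := by
    exact (lt_div_iff₀ (by positivity : (0:ℝ) < (m:ℝ)+5)).mp hlt
  have hmem := alpha2_mem hβ0 hβ1
  have hLM := hall _ hmem (le_of_eq (by simp))
  have hmono := hLM (Gex m) (Gex_weighted m) 0 1 (Gex_dom_zero 1)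
  have hQ : ∀ x, convexComb ![β, 1-β] ![BzPI, PGIPI] (m+6) (Gex m) x
      = β * ((Gex m).Bz x : ℝ) + (1-β) * ((Gex m).PGI x : ℝ) := by
    intro x
    simp [convexComb, Fin.sum_univ_two, BzPI, PGIPI]
  rw [hQ 0, hQ 1] at hmono
  exact absurd hmono (not_le.mpr (Gex_violation m hβ0 hβ))

lemma lb_Shift (m : ℕ) :
    ((m:ℝ)+1)/((m:ℝ)+5) ≤ costLM ![BzPI, ShiftPI] (m+6) WeightedClass := by
  apply le_csInf ⟨1, one_mem_costLM_set _ rfl _⟩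
  rintro β ⟨⟨hβ0, hβ1⟩, hall⟩
  by_contra hlt
  push_neg at hlt
  have hβ : β * ((m:ℝ)+5) < (m:ℝ)+1 := by
    exact (lt_div_iff₀ (by positivity : (0:ℝ) < (m:ℝ)+5)).mp hlt
  have hmem := alpha2_mem hβ0 hβ1
  have hLM := hall _ hmem (le_of_eq (by simp))
  have hmono := hLM (Gex m) (Gex_weighted m) 0 1 (Gex_dom_zero 1)
  have hQ : ∀ x, convexComb ![β, 1-β] ![BzPI, ShiftPI] (m+6) (Gex m) x
      = β * ((Gex m).Bz x : ℝ) + (1-β) * ((Gex m).ShiftIdx x : ℝ) := by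
    intro x
    simp [convexComb, Fin.sum_univ_two, BzPI, ShiftPI]
  rw [hQ 0, hQ 1] at hmono
  rw [Gex_Shift0, Gex_Shift1] at hmono
  have hviol := Gex_violation m hβ0 hβ
  rw [Gex_Bz0, Gex_Bz1, Gex_PGI0, Gex_PGI1] at hviol
  rw [Gex_Bz0, Gex_Bz1] at hmono
  exact absurd hmono (not_le.mpr hviol)

lemma lb_Both (m : ℕ) :
    ((m:ℝ)+1)/((m:ℝ)+5) ≤ costLM ![BzPI, PGIPI, ShiftPI] (m+6) WeightedClass := by
  apply le_csInf ⟨1, one_mem_costLM_set _ rfl _⟩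
  rintro β ⟨⟨hβ0, hβ1⟩, hall⟩
  by_contra hlt
  push_neg at hlt
  have hβ : β * ((m:ℝ)+5) < (m:ℝ)+1 := by
    exact (lt_div_iff₀ (by positivity : (0:ℝ) < (m:ℝ)+5)).mp hlt
  have hmem := alpha3_mem hβ0 hβ1
  have hLM := hall _ hmem (le_of_eq (by simp))
  have hmono := hLM (Gex m) (Gex_weighted m) 0 1 (Gex_dom_zero 1)
  have hQ : ∀ x, convexComb ![β, 1-β, 0] ![BzPI, PGIPI, ShiftPI] (m+6) (Gex m) x
      = β * ((Gex m).Bz x : ℝ) + (1-β) * ((Gex m).PGI x : ℝ) := by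
    intro x
    simp [convexComb, Fin.sum_univ_three, BzPI, PGIPI, ShiftPI]
  rw [hQ 0, hQ 1] at hmono
  exact absurd hmono (not_le.mpr (Gex_violation m hβ0 hβ))

lemma squeeze_costLM {f : ℕ → ℝ} (hub : ∀ n, f n ≤ 1)
    (hlb : ∀ m : ℕ, ((m:ℝ)+1)/((m:ℝ)+5) ≤ f (m+6)) :
    Filter.Tendsto f Filter.atTop (nhds 1) := by
  have h1 : Filter.Tendsto (fun n : ℕ => ((n:ℝ)-1)) Filter.atTop Filter.atTop := by
    have := Filter.tendsto_atTop_add_const_right Filter.atTop (-1 : ℝ)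
      tendsto_natCast_atTop_atTop
    simpa [sub_eq_add_neg] using this
  have h2 : Filter.Tendsto (fun n : ℕ => 4/((n:ℝ)-1)) Filter.atTop (nhds 0) :=
    Filter.Tendsto.div_atTop tendsto_const_nhds h1
  have hg : Filter.Tendsto (fun n : ℕ => 1 - 4/((n:ℝ)-1)) Filter.atTop (nhds 1) := by
    have := Filter.Tendsto.const_sub (1:ℝ) h2
    simpa using this
  refine tendsto_of_tendsto_of_tendsto_of_le_of_le' hg tendsto_const_nhds ?_ ?_
  · rw [Filter.eventually_atTop]
    refine ⟨6, fun n hn => ?_⟩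
    obtain ⟨m, rfl⟩ := Nat.exists_eq_add_of_le hn
    have hlbm := hlb m
    have heq : 1 - 4/(((6+m:ℕ):ℝ)-1) = ((m:ℝ)+1)/((m:ℝ)+5) := by
      have hpos : ((m:ℝ)+5) ≠ 0 := by positivity
      have h5 : ((6+m:ℕ):ℝ) - 1 = (m:ℝ)+5 := by push_cast; ring
      rw [h5, eq_div_iff hpos, sub_mul, div_mul_cancel₀ _ hpos]
      ring
    rw [heq]
    have : (6 + m) = (m + 6) := by omega
    rw [this]
    exact hlbm
  · exact Filter.Eventually.of_forall hub

theorem costLM_tendsto_one' :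
    Filter.Tendsto (fun n => costLM ![BzPI, PGIPI] n WeightedClass)
      Filter.atTop (nhds 1) ∧
    Filter.Tendsto (fun n => costLM ![BzPI, ShiftPI] n WeightedClass)
      Filter.atTop (nhds 1) ∧
    Filter.Tendsto (fun n => costLM ![BzPI, PGIPI, ShiftPI] n WeightedClass)
      Filter.atTop (nhds 1) := by
  exact ⟨squeeze_costLM (fun n => costLM_le_one _ rfl n) lb_PGI,
    squeeze_costLM (fun n => costLM_le_one _ rfl n) lb_Shift,
    squeeze_costLM (fun n => costLM_le_one _ rfl n) lb_Both⟩

/-- the cost of local monotonicity on weighted games tends to `1`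
as the number of players tends to infinity, for `(Bz^r, PGI^r)`, `(Bz^r, S^r)`
and `(Bz^r, PGI^r, S^r)`. -/
theorem costLM_tendsto_one :
    Filter.Tendsto (fun n => costLM ![BzPI, PGIPI] n WeightedClass)
      Filter.atTop (nhds 1) ∧
    Filter.Tendsto (fun n => costLM ![BzPI, ShiftPI] n WeightedClass)
      Filter.atTop (nhds 1) ∧
    Filter.Tendsto (fun n => costLM ![BzPI, PGIPI, ShiftPI] n WeightedClass)
      Filter.atTop (nhds 1) := by
  exact costLM_tendsto_one'
end

section
/- For 𝒫 = (Bz^r, PGI^r) and all n ≥ 3, the cost of local monotonicity on the class 𝔚^p of proper weighted games satisfies c_𝒫(n,𝔚^p) ≥ max(0, (n−4)/(n−2)). -/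
open scoped Classical

/-- `𝔚^p`: the class of proper weighted games. -/
def ProperWeightedClass : GameClass := fun n =>
  {v | v.IsWeighted ∧
    ∀ S : Finset (Fin n), v.win S = true → v.win (Finset.univ \ S) = false}
namespace CostLMProof

open Finset

lemma bool_le_false {b : Bool} (h : b ≤ false) : b = false := by
  cases b
  · rfl
  · exact absurd h (by decide)

/-- The raw Banzhaf index satisfies local monotonicity on all simple games. -/
lemma bz_lm {n : ℕ} (v : SimpleGame n) (i j : Fin n) (h : v.Dominates i j) :
    v.Bz j ≤ v.Bz i := by
  rcases eq_or_ne i j with rfl | hij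
  · exact le_refl _
  unfold SimpleGame.Bz
  apply Finset.card_le_card_of_injOn (fun S => if i ∈ S then S else (S ∪ {i}) \ {j})
  · intro S hS
    simp only [SimpleGame.Dset, Finset.mem_coe, Finset.mem_filter, Finset.mem_univ, true_and] at hS ⊢
    obtain ⟨hjS, hwin, hlose⟩ := hS
    by_cases hiS : i ∈ S
    · simp only [if_pos hiS]
      refine ⟨hiS, hwin, ?_⟩
      have hdom := h (S.erase i) (Finset.mem_erase.2 ⟨(Ne.symm hij), hjS⟩)
        (Finset.notMem_erase i S)
      have he : ((S.erase i) ∪ {i}) \ {j} = S.erase j := by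
        ext x
        simp only [Finset.mem_sdiff, Finset.mem_union, Finset.mem_singleton,
          Finset.mem_erase]
        constructor
        · rintro ⟨⟨hxi, hx⟩ | rfl, hxj⟩
          · exact ⟨hxj, hx⟩
          · exact ⟨hxj, hiS⟩
        · rintro ⟨hxj, hx⟩
          by_cases hxi : x = i
          · exact ⟨Or.inr hxi, hxj⟩
          · exact ⟨Or.inl ⟨hxi, hx⟩, hxj⟩
      rw [he, hlose] at hdom
      exact bool_le_false hdom
    · simp only [if_neg hiS]
      have hdom := h S hjS hiS
      rw [hwin] at hdom
      refine ⟨?_, ?_, ?_⟩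
      · simp [Finset.mem_sdiff, hij]
      · exact top_le_iff.mp hdom
      · have he : ((S ∪ {i}) \ {j}).erase i = S.erase j := by
          ext x
          simp only [Finset.mem_erase, Finset.mem_sdiff, Finset.mem_union,
            Finset.mem_singleton]
          constructor
          · rintro ⟨hxi, hx, hxj⟩
            exact ⟨hxj, hx.resolve_right hxi⟩
          · rintro ⟨hxj, hx⟩
            exact ⟨fun hxe => hiS (hxe ▸ hx), Or.inl hx, hxj⟩
        rw [he]
        exact hlose
  · intro S1 h1 S2 h2 heq
    simp only [SimpleGame.Dset, Finset.mem_coe, Finset.mem_filter, Finset.mem_univ,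
      true_and] at h1 h2
    have hj1 : j ∈ S1 := h1.1
    have hj2 : j ∈ S2 := h2.1
    have hjmem : ∀ S : Finset (Fin n), j ∈ S →
        (j ∈ (if i ∈ S then S else (S ∪ {i}) \ {j}) ↔ i ∈ S) := by
      intro S hjS
      by_cases hiS : i ∈ S <;> simp [hiS, hjS]
    simp only at heq
    by_cases c1 : i ∈ S1 <;> by_cases c2 : i ∈ S2
    · rwa [if_pos c1, if_pos c2] at heq
    · exfalso
      rw [if_pos c1, if_neg c2] at heq
      have : j ∈ (S2 ∪ {i}) \ {j} := heq ▸ hj1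
      simp at this
    · exfalso
      rw [if_neg c1, if_pos c2] at heq
      have : j ∈ (S1 ∪ {i}) \ {j} := heq ▸ hj2
      simp at this
    · rw [if_neg c1, if_neg c2] at heq
      have key : ∀ S : Finset (Fin n), j ∈ S → i ∉ S →
          insert j (((S ∪ {i}) \ {j}).erase i) = S := by
        intro S hjS hiS
        ext x
        simp only [Finset.mem_insert, Finset.mem_erase, Finset.mem_sdiff,
          Finset.mem_union, Finset.mem_singleton]
        constructor
        · rintro (rfl | ⟨hxi, hx | rfl, hxj⟩)
          · exact hjS
          · exact hx
          · exact absurd rfl hxi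
        · intro hx
          by_cases hxj : x = j
          · exact Or.inl hxj
          · exact Or.inr ⟨fun hxi => hiS (hxi ▸ hx), Or.inl hx, hxj⟩
      calc S1 = insert j (((S1 ∪ {i}) \ {j}).erase i) := (key S1 hj1 c1).symm
        _ = insert j (((S2 ∪ {i}) \ {j}).erase i) := by rw [heq]
        _ = S2 := key S2 hj2 c2
variable (m : ℕ)

def P0 : Fin (m + 3) := ⟨0, by omega⟩
def P1 : Fin (m + 3) := ⟨1, by omega⟩
def P2 : Fin (m + 3) := ⟨2, by omega⟩

lemma P0_ne_P1 : P0 m ≠ P1 m := by simp [P0, P1, Fin.ext_iff]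
lemma P0_ne_P2 : P0 m ≠ P2 m := by simp [P0, P2, Fin.ext_iff]
lemma P1_ne_P2 : P1 m ≠ P2 m := by simp [P1, P2, Fin.ext_iff]

/-- The weight-one part of a coalition. -/
def K (S : Finset (Fin (m + 3))) : Finset (Fin (m + 3)) := (S.erase (P0 m)).erase (P1 m)

lemma mem_K {S : Finset (Fin (m + 3))} {x : Fin (m + 3)} :
    x ∈ K m S ↔ x ∈ S ∧ x ≠ P0 m ∧ x ≠ P1 m := by
  simp only [K, Finset.mem_erase]
  tauto

lemma K_subset {S : Finset (Fin (m + 3))} : K m S ⊆ S :=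
  fun x hx => ((mem_K m).1 hx).1

/-- Total weight of a coalition. -/
def wt (S : Finset (Fin (m + 3))) : ℕ :=
  (if P0 m ∈ S then m + 1 else 0) + (if P1 m ∈ S then 2 else 0) + (K m S).card

lemma wt_mono {S T : Finset (Fin (m + 3))} (h : S ⊆ T) : wt m S ≤ wt m T := by
  unfold wt
  have h1 : (K m S).card ≤ (K m T).card := by
    apply Finset.card_le_card
    intro x hx
    rw [mem_K] at hx ⊢
    exact ⟨h hx.1, hx.2⟩
  have t0 : (if P0 m ∈ S then m + 1 else 0) ≤ (if P0 m ∈ T then m + 1 else 0) := by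
    by_cases a : P0 m ∈ S
    · simp [a, h a]
    · simp only [if_neg a]
      exact Nat.zero_le _
  have t1 : (if P1 m ∈ S then 2 else 0) ≤ (if P1 m ∈ T then 2 else 0) := by
    by_cases a : P1 m ∈ S
    · simp [a, h a]
    · simp only [if_neg a]
      exact Nat.zero_le _
  omega

/-- All players but `P0`. -/
def U0 : Finset (Fin (m + 3)) := Finset.univ.erase (P0 m)

/-- The weight-one players. -/
def Ones : Finset (Fin (m + 3)) := (U0 m).erase (P1 m)

lemma mem_Ones {x : Fin (m + 3)} : x ∈ Ones m ↔ x ≠ P0 m ∧ x ≠ P1 m := by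
  simp only [Ones, U0, Finset.mem_erase, Finset.mem_univ, and_true]
  tauto

lemma K_eq_inter (S : Finset (Fin (m + 3))) : K m S ⊆ Ones m := by
  intro x hx
  rw [mem_K] at hx
  exact (mem_Ones m).2 hx.2

lemma card_Ones : (Ones m).card = m + 1 := by
  rw [Ones, U0, Finset.card_erase_of_mem, Finset.card_erase_of_mem] <;>
    simp [Fintype.card_fin, (P0_ne_P1 m).symm]

lemma K_card_le (S : Finset (Fin (m + 3))) : (K m S).card ≤ m + 1 := by
  rw [← card_Ones m]
  exact Finset.card_le_card (K_eq_inter m S)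

/-- The game `[m+3; m+1, 2, 1, …, 1]`. -/
def G : SimpleGame (m + 3) where
  win S := decide (m + 3 ≤ wt m S)
  win_empty := by simp [wt, K]
  win_univ := by
    have : K m Finset.univ = Ones m := by
      ext x
      rw [mem_K, mem_Ones]
      simp
    simp [wt, this, card_Ones]
  win_mono := by
    intro S T hST h
    rw [decide_eq_true_eq] at h ⊢
    exact le_trans h (wt_mono m hST)

lemma win_iff (S : Finset (Fin (m + 3))) : (G m).win S = true ↔ m + 3 ≤ wt m S := by
  simp [G]

lemma lose_iff (S : Finset (Fin (m + 3))) : (G m).win S = false ↔ ¬ (m + 3 ≤ wt m S) := by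
  rw [← Bool.not_eq_true, win_iff]
lemma win_both {S : Finset (Fin (m + 3))} (h0 : P0 m ∈ S) (h1 : P1 m ∈ S) :
    (G m).win S = true := by
  rw [win_iff, wt, if_pos h0, if_pos h1]
  omega

lemma win_noP1 {S : Finset (Fin (m + 3))} (h0 : P0 m ∈ S) (h1 : P1 m ∉ S) :
    ((G m).win S = true ↔ 2 ≤ (K m S).card) := by
  rw [win_iff, wt, if_pos h0, if_neg h1]
  omega

lemma mem_U0 {x : Fin (m + 3)} : x ∈ U0 m ↔ x ≠ P0 m := by
  simp [U0]

lemma K_U0 : K m (U0 m) = Ones m := by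
  ext x
  rw [mem_K, mem_Ones, mem_U0]
  tauto

lemma win_noP0 {S : Finset (Fin (m + 3))} (h0 : P0 m ∉ S) :
    ((G m).win S = true ↔ S = U0 m) := by
  constructor
  · intro hw
    rw [win_iff, wt, if_neg h0] at hw
    have hk : (K m S).card ≤ m + 1 := K_card_le m S
    have h1 : P1 m ∈ S := by
      by_contra h1
      rw [if_neg h1] at hw
      omega
    rw [if_pos h1] at hw
    have hcard : (Ones m).card ≤ (K m S).card := by
      rw [card_Ones]
      omega
    have hKO : K m S = Ones m :=
      Finset.eq_of_subset_of_card_le (K_eq_inter m S) hcard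
    apply Finset.Subset.antisymm
    · intro x hx
      rw [mem_U0]
      rintro rfl
      exact h0 hx
    · intro x hx
      rw [mem_U0] at hx
      rcases eq_or_ne x (P1 m) with rfl | hx1
      · exact h1
      · have hxK : x ∈ K m S := by
          rw [hKO]
          exact (mem_Ones m).2 ⟨hx, hx1⟩
        exact K_subset m hxK
  · rintro rfl
    rw [win_iff, wt, if_neg h0, if_pos ((mem_U0 m).2 (P0_ne_P1 m).symm), K_U0, card_Ones]
    omega

lemma S_eq_noP1 {S : Finset (Fin (m + 3))} (h0 : P0 m ∈ S) (h1 : P1 m ∉ S) :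
    S = insert (P0 m) (K m S) := by
  ext x
  rw [Finset.mem_insert, mem_K]
  constructor
  · intro hx
    rcases eq_or_ne x (P0 m) with rfl | hx0
    · exact Or.inl rfl
    · exact Or.inr ⟨hx, hx0, fun h => h1 (h ▸ hx)⟩
  · rintro (rfl | ⟨hx, -⟩) <;> assumption

lemma S_eq_both {S : Finset (Fin (m + 3))} (h0 : P0 m ∈ S) (h1 : P1 m ∈ S) :
    S = insert (P0 m) (insert (P1 m) (K m S)) := by
  ext x
  rw [Finset.mem_insert, Finset.mem_insert, mem_K]
  constructor
  · intro hx
    rcases eq_or_ne x (P0 m) with rfl | hx0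
    · exact Or.inl rfl
    rcases eq_or_ne x (P1 m) with rfl | hx1
    · exact Or.inr (Or.inl rfl)
    · exact Or.inr (Or.inr ⟨hx, hx0, hx1⟩)
  · rintro (rfl | rfl | ⟨hx, -⟩) <;> assumption

lemma K_erase_P1 (S : Finset (Fin (m + 3))) : K m (S.erase (P1 m)) = K m S := by
  ext x
  simp only [mem_K, Finset.mem_erase]
  tauto

lemma K_erase_P2 (S : Finset (Fin (m + 3))) :
    K m (S.erase (P2 m)) = (K m S).erase (P2 m) := by
  ext x
  simp only [mem_K, Finset.mem_erase]
  tauto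
lemma win_eq_false_of_not {S : Finset (Fin (m + 3))} (h : ¬ ((G m).win S = true)) :
    (G m).win S = false := by
  cases h2 : (G m).win S
  · rfl
  · exact absurd h2 h

lemma P2_mem_Ones : P2 m ∈ Ones m :=
  (mem_Ones m).2 ⟨(P0_ne_P2 m).symm, (P1_ne_P2 m).symm⟩

lemma K_insert_P0 (A : Finset (Fin (m + 3))) : K m (insert (P0 m) A) = K m A := by
  ext x
  simp only [mem_K, Finset.mem_insert]
  tauto

lemma K_insert_P1 (A : Finset (Fin (m + 3))) : K m (insert (P1 m) A) = K m A := by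
  ext x
  simp only [mem_K, Finset.mem_insert]
  tauto

lemma K_of_subset_Ones {A : Finset (Fin (m + 3))} (h : A ⊆ Ones m) : K m A = A := by
  ext x
  rw [mem_K]
  constructor
  · exact fun hx => hx.1
  · intro hx
    exact ⟨hx, ((mem_Ones m).1 (h hx)).1, ((mem_Ones m).1 (h hx)).2⟩

lemma P0_not_mem_U0 : P0 m ∉ U0 m := by simp [mem_U0]

lemma win_U0 : (G m).win (U0 m) = true := (win_noP0 m (P0_not_mem_U0 m)).2 rfl

lemma lose_of_small {S : Finset (Fin (m + 3))} (h0 : P0 m ∈ S) (h1 : P1 m ∉ S)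
    (hc : (K m S).card < 2) : (G m).win S = false := by
  apply win_eq_false_of_not
  rw [win_noP1 m h0 h1]
  omega

/-- minimality helper -/
lemma mwc_eq_of_subset {S T : Finset (Fin (m + 3))} (hS : (G m).IsMWC S) (hT : T ⊆ S)
    (hw : (G m).win T = true) : T = S := by
  by_contra hne
  rw [hS.2 T (HasSubset.Subset.ssubset_of_ne hT hne)] at hw
  cases hw

/-- K of the pair {P0, P1} is empty -/
lemma K_P0P1 : K m {P0 m, P1 m} = ∅ := by
  have : ({P0 m, P1 m} : Finset (Fin (m + 3))) = insert (P0 m) (insert (P1 m) ∅) := by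
    simp
  rw [this, K_insert_P0, K_insert_P1]
  apply K_of_subset_Ones
  simp

lemma K_P0P1x {x : Fin (m + 3)} (hx : x ∈ Ones m) :
    K m {P0 m, P1 m, x} = {x} := by
  have : ({P0 m, P1 m, x} : Finset (Fin (m + 3))) = insert (P0 m) (insert (P1 m) {x}) := rfl
  rw [this, K_insert_P0, K_insert_P1]
  exact K_of_subset_Ones m (by simpa using hx)

lemma K_P0P2y {y : Fin (m + 3)} (hy : y ∈ Ones m) :
    K m {P0 m, P2 m, y} = {P2 m, y} := by
  have : ({P0 m, P2 m, y} : Finset (Fin (m + 3))) = insert (P0 m) {P2 m, y} := rfl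
  rw [this, K_insert_P0]
  apply K_of_subset_Ones
  intro z hz
  rcases Finset.mem_insert.1 hz with rfl | hz
  · exact P2_mem_Ones m
  · rwa [Finset.mem_singleton.1 hz]

/-- `D_{P1} = {U0, {P0,P1}} ∪ {{P0,P1,x} : x ∈ Ones}`. -/
lemma Dset_P1 : (G m).Dset (P1 m) =
    insert (U0 m) (insert {P0 m, P1 m}
      ((Ones m).image fun x => ({P0 m, P1 m, x} : Finset (Fin (m + 3))))) := by
  ext S
  simp only [SimpleGame.Dset, Finset.mem_filter, Finset.mem_univ, true_and,
    Finset.mem_insert, Finset.mem_image]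
  constructor
  · rintro ⟨h1, hw, hl⟩
    by_cases h0 : P0 m ∈ S
    · have hl2 : (K m S).card < 2 := by
        by_contra hc
        have hw2 : (G m).win (S.erase (P1 m)) = true := by
          rw [win_noP1 m (Finset.mem_erase.2 ⟨P0_ne_P1 m, h0⟩) (Finset.notMem_erase _ _),
            K_erase_P1]
          omega
        rw [hw2] at hl
        cases hl
      have hSeq := S_eq_both m h0 h1
      rcases Nat.lt_or_ge (K m S).card 1 with hc | hc
      · have hK : K m S = ∅ := Finset.card_eq_zero.1 (by omega)
        right; left
        rw [hSeq, hK]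
        simp
      · have hc1 : (K m S).card = 1 := by omega
        obtain ⟨x, hx⟩ := Finset.card_eq_one.1 hc1
        right; right
        refine ⟨x, ?_, ?_⟩
        · exact K_eq_inter m S (hx ▸ Finset.mem_singleton_self x)
        · rw [hSeq, hx]
    · exact Or.inl ((win_noP0 m h0).1 hw)
  · rintro (rfl | rfl | ⟨x, hx, rfl⟩)
    · refine ⟨(mem_U0 m).2 (P0_ne_P1 m).symm, win_U0 m, ?_⟩
      apply win_eq_false_of_not
      rw [win_noP0 m (fun hc => P0_not_mem_U0 m (Finset.mem_of_mem_erase hc))]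
      intro hc
      have : P1 m ∈ (U0 m).erase (P1 m) := by
        rw [hc]
        exact (mem_U0 m).2 (P0_ne_P1 m).symm
      exact Finset.notMem_erase _ _ this
    · refine ⟨by simp, win_both m (by simp) (by simp), ?_⟩
      apply lose_of_small m (Finset.mem_erase.2 ⟨P0_ne_P1 m, by simp⟩)
        (Finset.notMem_erase _ _)
      rw [K_erase_P1, K_P0P1]
      simp
    · have hx0 : x ≠ P0 m := ((mem_Ones m).1 hx).1
      have hx1 : x ≠ P1 m := ((mem_Ones m).1 hx).2
      refine ⟨by simp, win_both m (by simp) (by simp), ?_⟩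
      apply lose_of_small m (Finset.mem_erase.2 ⟨P0_ne_P1 m, by simp⟩)
        (Finset.notMem_erase _ _)
      rw [K_erase_P1, K_P0P1x m hx]
      simp
lemma K_mono {S T : Finset (Fin (m + 3))} (h : S ⊆ T) : K m S ⊆ K m T := by
  intro x hx
  rw [mem_K] at hx ⊢
  exact ⟨h hx.1, hx.2⟩

lemma P1_not_mem_P0P2y {y : Fin (m + 3)} (hy : y ∈ Ones m) :
    P1 m ∉ ({P0 m, P2 m, y} : Finset (Fin (m + 3))) := by
  simp only [Finset.mem_insert, Finset.mem_singleton]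
  push_neg
  exact ⟨(P0_ne_P1 m).symm, P1_ne_P2 m, fun h => ((mem_Ones m).1 hy).2 h.symm⟩

lemma card_K_P0P2y {y : Fin (m + 3)} (hy : y ∈ Ones m) (hy2 : y ≠ P2 m) :
    (K m {P0 m, P2 m, y}).card = 2 := by
  rw [K_P0P2y m hy,
    Finset.card_insert_of_notMem (fun h => hy2 (Finset.mem_singleton.1 h).symm),
    Finset.card_singleton]

lemma win_P0P2y {y : Fin (m + 3)} (hy : y ∈ Ones m) (hy2 : y ≠ P2 m) :
    (G m).win {P0 m, P2 m, y} = true := by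
  rw [win_noP1 m (by simp) (P1_not_mem_P0P2y m hy), card_K_P0P2y m hy hy2]

lemma lose_erase_P2_U0 : (G m).win ((U0 m).erase (P2 m)) = false := by
  apply win_eq_false_of_not
  rw [win_noP0 m (fun hc => P0_not_mem_U0 m (Finset.mem_of_mem_erase hc))]
  intro hc
  have : P2 m ∈ (U0 m).erase (P2 m) := by
    rw [hc]
    exact (mem_U0 m).2 (P0_ne_P2 m).symm
  exact Finset.notMem_erase _ _ this

/-- `D_{P2} = {U0} ∪ {{P0,P2,y} : y ∈ Ones \ {P2}}`. -/
lemma Dset_P2 : (G m).Dset (P2 m) =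
    insert (U0 m) (((Ones m).erase (P2 m)).image
      fun y => ({P0 m, P2 m, y} : Finset (Fin (m + 3)))) := by
  ext S
  simp only [SimpleGame.Dset, Finset.mem_filter, Finset.mem_univ, true_and,
    Finset.mem_insert, Finset.mem_image, Finset.mem_erase]
  constructor
  · rintro ⟨h2, hw, hl⟩
    by_cases h0 : P0 m ∈ S
    · by_cases h1 : P1 m ∈ S
      · exfalso
        rw [win_both m (Finset.mem_erase.2 ⟨P0_ne_P2 m, h0⟩)
          (Finset.mem_erase.2 ⟨P1_ne_P2 m, h1⟩)] at hl
        cases hl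
      · have hcK : 2 ≤ (K m S).card := (win_noP1 m h0 h1).1 hw
        have hP2K : P2 m ∈ K m S :=
          (mem_K m).2 ⟨h2, (P0_ne_P2 m).symm, (P1_ne_P2 m).symm⟩
        have hlK : ¬ (2 ≤ (K m (S.erase (P2 m))).card) := by
          intro hc
          rw [(win_noP1 m (Finset.mem_erase.2 ⟨P0_ne_P2 m, h0⟩)
            (fun hc2 => h1 (Finset.mem_of_mem_erase hc2))).2 hc] at hl
          cases hl
        rw [K_erase_P2, Finset.card_erase_of_mem hP2K] at hlK
        have hcK2 : (K m S).card = 2 := by omega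
        have hcE : ((K m S).erase (P2 m)).card = 1 := by
          rw [Finset.card_erase_of_mem hP2K, hcK2]
        obtain ⟨y, hy⟩ := Finset.card_eq_one.1 hcE
        have hyK : y ∈ K m S :=
          Finset.mem_of_mem_erase (hy ▸ Finset.mem_singleton_self y)
        have hy2 : y ≠ P2 m :=
          (Finset.mem_erase.1 (hy ▸ Finset.mem_singleton_self y)).1
        have hKS : K m S = {P2 m, y} := by
          rw [← Finset.insert_erase hP2K, hy]
        right
        refine ⟨y, ⟨hy2, K_eq_inter m S hyK⟩, ?_⟩
        rw [S_eq_noP1 m h0 h1, hKS]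
    · exact Or.inl ((win_noP0 m h0).1 hw)
  · rintro (rfl | ⟨y, ⟨hy2, hy⟩, rfl⟩)
    · exact ⟨(mem_U0 m).2 (P0_ne_P2 m).symm, win_U0 m, lose_erase_P2_U0 m⟩
    · refine ⟨by simp, win_P0P2y m hy hy2, ?_⟩
      apply lose_of_small m (Finset.mem_erase.2 ⟨P0_ne_P2 m, by simp⟩)
        (fun hc => P1_not_mem_P0P2y m hy (Finset.mem_of_mem_erase hc))
      rw [K_erase_P2, K_P0P2y m hy,
        Finset.erase_insert (fun h => hy2 (Finset.mem_singleton.1 h).symm)]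
      simp
lemma mwc_U0 : (G m).IsMWC (U0 m) := by
  refine ⟨win_U0 m, fun T hT => ?_⟩
  apply win_eq_false_of_not
  intro hw
  have h0 : P0 m ∉ T := fun hc => P0_not_mem_U0 m (hT.1 hc)
  rw [(win_noP0 m h0).1 hw] at hT
  exact hT.2 le_rfl

lemma mwc_P0P1 : (G m).IsMWC {P0 m, P1 m} := by
  refine ⟨win_both m (by simp) (by simp), fun T hT => ?_⟩
  apply win_eq_false_of_not
  intro hw
  by_cases t0 : P0 m ∈ T
  · by_cases t1 : P1 m ∈ T
    · exact hT.2 (Finset.insert_subset t0 (Finset.singleton_subset_iff.2 t1))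
    · have := (win_noP1 m t0 t1).1 hw
      have hsub : K m T ⊆ K m {P0 m, P1 m} := K_mono m hT.1
      rw [K_P0P1] at hsub
      have hcc := Finset.card_le_card hsub
      rw [Finset.card_empty] at hcc
      omega
  · have hTU := (win_noP0 m t0).1 hw
    have : P2 m ∈ T := by
      rw [hTU]
      exact (mem_U0 m).2 (P0_ne_P2 m).symm
    have := hT.1 this
    simp only [Finset.mem_insert, Finset.mem_singleton] at this
    rcases this with h | h
    · exact (P0_ne_P2 m) h.symm
    · exact (P1_ne_P2 m) h.symm

lemma mwc_P0P2y {y : Fin (m + 3)} (hy : y ∈ Ones m) (hy2 : y ≠ P2 m) :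
    (G m).IsMWC {P0 m, P2 m, y} := by
  refine ⟨win_P0P2y m hy hy2, fun T hT => ?_⟩
  apply win_eq_false_of_not
  intro hw
  have hP1S : P1 m ∉ ({P0 m, P2 m, y} : Finset (Fin (m + 3))) := P1_not_mem_P0P2y m hy
  by_cases t0 : P0 m ∈ T
  · have t1 : P1 m ∉ T := fun hc => hP1S (hT.1 hc)
    have hcT : 2 ≤ (K m T).card := (win_noP1 m t0 t1).1 hw
    have hsub : K m T ⊆ K m {P0 m, P2 m, y} := K_mono m hT.1
    have hKeq : K m T = K m {P0 m, P2 m, y} := by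
      apply Finset.eq_of_subset_of_card_le hsub
      rw [card_K_P0P2y m hy hy2]
      exact hcT
    have hself : ({P0 m, P2 m, y} : Finset (Fin (m + 3))) ⊆ T := by
      rw [S_eq_noP1 m (by simp) hP1S, ← hKeq]
      exact Finset.insert_subset t0 (K_subset m)
    exact hT.2 hself
  · have hTU := (win_noP0 m t0).1 hw
    have : P1 m ∈ T := by
      rw [hTU]
      exact (mem_U0 m).2 (P0_ne_P1 m).symm
    exact hP1S (hT.1 this)

/-- `M_{P1} = {{P0,P1}, U0}`. -/
lemma Mset_P1 : (G m).Mset (P1 m) = {({P0 m, P1 m} : Finset (Fin (m + 3))), U0 m} := by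
  ext S
  simp only [SimpleGame.Mset, Finset.mem_filter, Finset.mem_univ, true_and,
    Finset.mem_insert, Finset.mem_singleton]
  constructor
  · rintro ⟨hM, h1⟩
    by_cases h0 : P0 m ∈ S
    · left
      exact (mwc_eq_of_subset m hM
        (Finset.insert_subset h0 (Finset.singleton_subset_iff.2 h1))
        (win_both m (by simp) (by simp))).symm
    · exact Or.inr ((win_noP0 m h0).1 hM.1)
  · rintro (rfl | rfl)
    · exact ⟨mwc_P0P1 m, by simp⟩
    · exact ⟨mwc_U0 m, (mem_U0 m).2 (P0_ne_P1 m).symm⟩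

/-- `M_{P2} = {U0} ∪ {{P0,P2,y} : y ∈ Ones \ {P2}}`. -/
lemma Mset_P2 : (G m).Mset (P2 m) =
    insert (U0 m) (((Ones m).erase (P2 m)).image
      fun y => ({P0 m, P2 m, y} : Finset (Fin (m + 3)))) := by
  ext S
  simp only [SimpleGame.Mset, Finset.mem_filter, Finset.mem_univ, true_and,
    Finset.mem_insert, Finset.mem_image, Finset.mem_erase]
  constructor
  · rintro ⟨hM, h2⟩
    by_cases h0 : P0 m ∈ S
    · by_cases h1 : P1 m ∈ S
      · exfalso
        have := mwc_eq_of_subset m hM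
          (Finset.insert_subset h0 (Finset.singleton_subset_iff.2 h1))
          (win_both m (by simp) (by simp))
        rw [← this] at h2
        simp only [Finset.mem_insert, Finset.mem_singleton] at h2
        rcases h2 with h | h
        · exact (P0_ne_P2 m) h.symm
        · exact (P1_ne_P2 m) h.symm
      · have hcK : 2 ≤ (K m S).card := (win_noP1 m h0 h1).1 hM.1
        have hP2K : P2 m ∈ K m S :=
          (mem_K m).2 ⟨h2, (P0_ne_P2 m).symm, (P1_ne_P2 m).symm⟩
        have hne : ((K m S).erase (P2 m)).Nonempty := by
          rw [← Finset.card_pos, Finset.card_erase_of_mem hP2K]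
          omega
        obtain ⟨y, hy⟩ := hne
        have hy2 : y ≠ P2 m := (Finset.mem_erase.1 hy).1
        have hyK : y ∈ K m S := Finset.mem_of_mem_erase hy
        have hyO : y ∈ Ones m := K_eq_inter m S hyK
        have hsub : ({P0 m, P2 m, y} : Finset (Fin (m + 3))) ⊆ S := by
          refine Finset.insert_subset h0 (Finset.insert_subset h2 ?_)
          exact Finset.singleton_subset_iff.2 (K_subset m hyK)
        right
        exact ⟨y, ⟨hy2, hyO⟩, mwc_eq_of_subset m hM hsub (win_P0P2y m hyO hy2)⟩
    · exact Or.inl ((win_noP0 m h0).1 hM.1)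
  · rintro (rfl | ⟨y, ⟨hy2, hy⟩, rfl⟩)
    · exact ⟨mwc_U0 m, (mem_U0 m).2 (P0_ne_P2 m).symm⟩
    · exact ⟨mwc_P0P2y m hy hy2, by simp⟩
lemma U0_ne_three {x y : Fin (m + 3)} : U0 m ≠ ({P0 m, x, y} : Finset (Fin (m + 3))) := by
  intro h
  have : P0 m ∈ U0 m := by
    rw [h]
    simp
  exact P0_not_mem_U0 m this

lemma U0_ne_pair {x : Fin (m + 3)} : U0 m ≠ ({P0 m, x} : Finset (Fin (m + 3))) := by
  intro h
  have : P0 m ∈ U0 m := by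
    rw [h]
    simp
  exact P0_not_mem_U0 m this

lemma injOn_P0P2 : Set.InjOn (fun y => ({P0 m, P2 m, y} : Finset (Fin (m + 3))))
    ((Ones m).erase (P2 m)) := by
  intro y1 h1 y2 h2 heq
  have heq' : ({P0 m, P2 m, y1} : Finset (Fin (m + 3))) = {P0 m, P2 m, y2} := heq
  have hy1 : y1 ∈ ({P0 m, P2 m, y2} : Finset (Fin (m + 3))) := by
    rw [← heq']
    simp
  simp only [Finset.mem_insert, Finset.mem_singleton] at hy1
  rcases hy1 with h | h | h
  · exact absurd h ((mem_Ones m).1 (Finset.mem_of_mem_erase (Finset.mem_coe.1 h1))).1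
  · exact absurd h (Finset.mem_erase.1 (Finset.mem_coe.1 h1)).1
  · exact h

lemma U0_not_mem_image2 :
    U0 m ∉ ((Ones m).erase (P2 m)).image
      (fun y => ({P0 m, P2 m, y} : Finset (Fin (m + 3)))) := by
  rw [Finset.mem_image]
  rintro ⟨y, -, heq⟩
  exact U0_ne_three m heq.symm

lemma card_T2 :
    (insert (U0 m) (((Ones m).erase (P2 m)).image
      fun y => ({P0 m, P2 m, y} : Finset (Fin (m + 3))))).card = m + 1 := by
  rw [Finset.card_insert_of_notMem (U0_not_mem_image2 m),
    Finset.card_image_of_injOn (injOn_P0P2 m),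
    Finset.card_erase_of_mem (P2_mem_Ones m), card_Ones]
  omega

lemma Bz_P2 : (G m).Bz (P2 m) = m + 1 := by
  rw [SimpleGame.Bz, Dset_P2, card_T2]

lemma PGI_P2 : (G m).PGI (P2 m) = m + 1 := by
  rw [SimpleGame.PGI, Mset_P2, card_T2]

lemma PGI_P1 : (G m).PGI (P1 m) = 2 := by
  rw [SimpleGame.PGI, Mset_P1]
  rw [Finset.card_insert_of_notMem, Finset.card_singleton]
  rw [Finset.mem_singleton]
  exact fun h => U0_ne_pair m h.symm

lemma injOn_P0P1 : Set.InjOn (fun y => ({P0 m, P1 m, y} : Finset (Fin (m + 3))))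
    (Ones m) := by
  intro y1 h1 y2 h2 heq
  have heq' : ({P0 m, P1 m, y1} : Finset (Fin (m + 3))) = {P0 m, P1 m, y2} := heq
  have hy1 : y1 ∈ ({P0 m, P1 m, y2} : Finset (Fin (m + 3))) := by
    rw [← heq']
    simp
  simp only [Finset.mem_insert, Finset.mem_singleton] at hy1
  rcases hy1 with h | h | h
  · exact absurd h ((mem_Ones m).1 (Finset.mem_coe.1 h1)).1
  · exact absurd h ((mem_Ones m).1 (Finset.mem_coe.1 h1)).2
  · exact h

lemma pair_not_mem_image1 :
    ({P0 m, P1 m} : Finset (Fin (m + 3))) ∉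
      (Ones m).image (fun y => ({P0 m, P1 m, y} : Finset (Fin (m + 3)))) := by
  rw [Finset.mem_image]
  rintro ⟨y, hy, heq⟩
  have : y ∈ ({P0 m, P1 m} : Finset (Fin (m + 3))) := by
    rw [← heq]
    simp
  simp only [Finset.mem_insert, Finset.mem_singleton] at this
  rcases this with h | h
  · exact ((mem_Ones m).1 hy).1 h
  · exact ((mem_Ones m).1 hy).2 h

lemma U0_not_mem_image1 :
    U0 m ∉ insert ({P0 m, P1 m} : Finset (Fin (m + 3)))
      ((Ones m).image (fun y => ({P0 m, P1 m, y} : Finset (Fin (m + 3))))) := by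
  rw [Finset.mem_insert, Finset.mem_image]
  push_neg
  exact ⟨U0_ne_pair m, fun y hy heq => U0_ne_three m heq.symm⟩

lemma Bz_P1 : (G m).Bz (P1 m) = m + 3 := by
  rw [SimpleGame.Bz, Dset_P1]
  rw [Finset.card_insert_of_notMem (U0_not_mem_image1 m),
    Finset.card_insert_of_notMem (pair_not_mem_image1 m),
    Finset.card_image_of_injOn (injOn_P0P1 m), card_Ones]
lemma dominates_P1_P2 : (G m).Dominates (P1 m) (P2 m) := by
  intro S h2 h1
  cases hws : (G m).win S
  · exact Bool.false_le _
  · by_cases h0 : P0 m ∈ S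
    · have : (G m).win ((S ∪ {P1 m}) \ {P2 m}) = true := by
        apply win_both
        · rw [Finset.mem_sdiff, Finset.mem_union]
          exact ⟨Or.inl h0, by simpa using P0_ne_P2 m⟩
        · rw [Finset.mem_sdiff, Finset.mem_union]
          exact ⟨Or.inr (Finset.mem_singleton_self _), by simpa using P1_ne_P2 m⟩
      rw [this]
    · exfalso
      have := (win_noP0 m h0).1 hws
      apply h1
      rw [this]
      exact (mem_U0 m).2 (P0_ne_P1 m).symm

/-- The natural weights. -/
def wN : Fin (m + 3) → ℕ := fun i => if i = P0 m then m + 1 else if i = P1 m then 2 else 1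

lemma sum_wN (S : Finset (Fin (m + 3))) : ∑ i ∈ S, wN m i = wt m S := by
  have h0 : ∑ i ∈ S, wN m i =
      (if P0 m ∈ S then m + 1 else 0) + ∑ i ∈ S.erase (P0 m), wN m i := by
    by_cases h : P0 m ∈ S
    · rw [if_pos h, ← Finset.sum_erase_add S (wN m) h, wN, if_pos rfl]
      ring
    · rw [if_neg h, Finset.erase_eq_of_notMem h, zero_add]
  have h1 : ∑ i ∈ S.erase (P0 m), wN m i =
      (if P1 m ∈ S then 2 else 0) + ∑ i ∈ K m S, wN m i := by
    by_cases h : P1 m ∈ S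
    · have h' : P1 m ∈ S.erase (P0 m) := Finset.mem_erase.2 ⟨(P0_ne_P1 m).symm, h⟩
      rw [if_pos h, ← Finset.sum_erase_add _ (wN m) h', wN, if_neg (P0_ne_P1 m).symm,
        if_pos rfl]
      rw [show (S.erase (P0 m)).erase (P1 m) = K m S from rfl]
      ring
    · have h' : P1 m ∉ S.erase (P0 m) := fun hc => h (Finset.mem_of_mem_erase hc)
      rw [if_neg h, zero_add, show K m S = (S.erase (P0 m)).erase (P1 m) from rfl,
        Finset.erase_eq_of_notMem h']
  have h2 : ∑ i ∈ K m S, wN m i = (K m S).card := by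
    rw [Finset.card_eq_sum_ones]
    apply Finset.sum_congr rfl
    intro x hx
    rw [mem_K] at hx
    rw [wN, if_neg hx.2.1, if_neg hx.2.2]
  rw [h0, h1, h2, wt]
  ring

lemma G_weighted : (G m).IsWeighted := by
  refine ⟨(m + 3 : ℕ), fun i => (wN m i : ℝ), by positivity, fun i => Nat.cast_nonneg _, ?_⟩
  intro S
  rw [win_iff]
  rw [← Nat.cast_sum]
  rw [Nat.cast_le, sum_wN]

lemma univ_sdiff_U0 : Finset.univ \ U0 m = {P0 m} := by
  rw [U0, Finset.erase_eq, Finset.sdiff_sdiff_self_left, Finset.univ_inter]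

lemma lose_P0 : (G m).win {P0 m} = false := by
  apply lose_of_small m (Finset.mem_singleton_self _)
    (by simpa using (P0_ne_P1 m).symm)
  have : ({P0 m} : Finset (Fin (m + 3))) = insert (P0 m) ∅ := by simp
  rw [this, K_insert_P0]
  simp [K]

lemma G_proper : ∀ S : Finset (Fin (m + 3)), (G m).win S = true →
    (G m).win (Finset.univ \ S) = false := by
  intro S hws
  apply win_eq_false_of_not
  intro hw2
  by_cases h0 : P0 m ∈ S
  · have hP0 : P0 m ∉ Finset.univ \ S := by simp [h0]
    have hTU := (win_noP0 m hP0).1 hw2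
    have hS : S = {P0 m} := by
      have : Finset.univ \ (Finset.univ \ S) = S := by
        rw [Finset.sdiff_sdiff_self_left, Finset.univ_inter]
      rw [← this, hTU, univ_sdiff_U0]
    rw [hS, lose_P0] at hws
    cases hws
  · have hS := (win_noP0 m h0).1 hws
    rw [hS, univ_sdiff_U0, lose_P0] at hw2
    cases hw2

lemma G_mem : G m ∈ ProperWeightedClass (m + 3) :=
  ⟨G_weighted m, G_proper m⟩
end CostLMProof

/-- for `𝒫 = (Bz^r, PGI^r)` and `n ≥ 3`, the cost of local
monotonicity on proper weighted games is at least `max(0, (n-4)/(n-2))`. -/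
theorem costLM_Bz_PGI_proper_lower_bound (n : ℕ) (hn : 3 ≤ n) :
    max 0 (((n : ℝ) - 4) / ((n : ℝ) - 2)) ≤
      costLM ![BzPI, PGIPI] n ProperWeightedClass := by
  obtain ⟨m, rfl⟩ : ∃ m, n = m + 3 := ⟨n - 3, by omega⟩
  rw [costLM]
  apply le_csInf
  · refine ⟨1, ⟨zero_le_one, le_refl 1⟩, ?_⟩
    intro α hα h1α v hv i j hdom
    have hs : α 0 + α 1 = 1 := by
      have := hα.2
      rwa [Fin.sum_univ_two] at this
    have h1 : α 1 = 0 := by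
      have := hα.1 1
      linarith
    have h0 : α 0 = 1 := by linarith
    simp only [convexComb, Fin.sum_univ_two, Matrix.cons_val_zero, Matrix.cons_val_one,
      Matrix.head_cons, BzPI, PGIPI, h0, h1, one_mul, zero_mul, add_zero]
    exact_mod_cast CostLMProof.bz_lm v i j hdom
  · rintro b ⟨⟨hb0, hb1⟩, hb⟩
    apply max_le hb0
    have hmem : ![b, 1 - b] ∈ stdSimplex ℝ (Fin 2) := by
      constructor
      · intro x
        fin_cases x
        · simpa using hb0
        · show (0 : ℝ) ≤ 1 - b
          linarith
      · rw [Fin.sum_univ_two]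
        simp only [Matrix.cons_val_zero, Matrix.cons_val_one, Matrix.head_cons]
        ring
    have hlm := hb ![b, 1 - b] hmem (by simp)
    have hineq := hlm (CostLMProof.G m) (CostLMProof.G_mem m)
      (CostLMProof.P1 m) (CostLMProof.P2 m) (CostLMProof.dominates_P1_P2 m)
    simp only [convexComb, Fin.sum_univ_two, Matrix.cons_val_zero, Matrix.cons_val_one,
      Matrix.head_cons, BzPI, PGIPI] at hineq
    rw [CostLMProof.Bz_P1, CostLMProof.Bz_P2, CostLMProof.PGI_P1,
      CostLMProof.PGI_P2] at hineq
    push_cast at hineq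
    have hden : (0 : ℝ) < ((m + 3 : ℕ) : ℝ) - 2 := by
      push_cast
      linarith
    rw [div_le_iff₀ hden]
    push_cast
    linarith
end

section
/- For 𝒫 = (Bz^r, PGI^r) and all n ≥ 2, the cost of local monotonicity on the class 𝔚^c of constant-sum weighted games satisfies c_𝒫(n,𝔚^c) ≥ max(0, (n−5)/(n−1)). -/
open scoped Classical

/-- `𝔚^c`: the class of constant-sum weighted games (exactly one of `S`, `N \ S`
is winning). -/
def ConstantSumWeightedClass : GameClass := fun n =>
  {v | v.IsWeighted ∧
    ∀ S : Finset (Fin n), v.win S = true ↔ v.win (Finset.univ \ S) = false}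

namespace CLMAux

open Finset

variable (m : ℕ)

def a0 : Fin (m+6) := ⟨0, by omega⟩
def a1 : Fin (m+6) := ⟨1, by omega⟩
def a2 : Fin (m+6) := ⟨2, by omega⟩

lemma a01 : a0 m ≠ a1 m := by simp [a0, a1, Fin.ext_iff]
lemma a02 : a0 m ≠ a2 m := by simp [a0, a2, Fin.ext_iff]
lemma a12 : a1 m ≠ a2 m := by simp [a1, a2, Fin.ext_iff]

/-- weights -/
def w : Fin (m+6) → ℕ := fun i => if i = a0 m then m+3 else if i = a1 m then 2 else 1

lemma w_a0 : w m (a0 m) = m+3 := by simp [w]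
lemma w_a1 : w m (a1 m) = 2 := by simp [w, (a01 m).symm]
lemma w_a2 : w m (a2 m) = 1 := by simp [w, (a02 m).symm, (a12 m).symm]

/-- number of "small" players in S -/
def ks (S : Finset (Fin (m+6))) : ℕ := (S \ {a0 m, a1 m}).card

lemma sum_w (S : Finset (Fin (m+6))) :
    ∑ i ∈ S, w m i
      = (if a0 m ∈ S then m+3 else 0) + (if a1 m ∈ S then 2 else 0) + ks m S := by
  classical
  have hsplit := Finset.sum_inter_add_sum_sdiff S {a0 m, a1 m} (w m)
  have hdiff : ∑ i ∈ S \ {a0 m, a1 m}, w m i = ks m S := by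
    rw [ks, card_eq_sum_ones]
    refine Finset.sum_congr rfl fun x hx => ?_
    simp only [mem_sdiff, mem_insert, mem_singleton] at hx
    rcases hx with ⟨-, hx⟩
    push_neg at hx
    simp [w, hx.1, hx.2]
  have hinter : ∑ i ∈ S ∩ {a0 m, a1 m}, w m i
      = (if a0 m ∈ S then m+3 else 0) + (if a1 m ∈ S then 2 else 0) := by
    by_cases h0 : a0 m ∈ S <;> by_cases h1 : a1 m ∈ S
    · have hset : S ∩ {a0 m, a1 m} = {a0 m, a1 m} := by
        ext x
        simp only [mem_inter, mem_insert, mem_singleton]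
        constructor
        · tauto
        · rintro (rfl | rfl) <;> simp [h0, h1]
      rw [hset, Finset.sum_pair (a01 m), w_a0, w_a1, if_pos h0, if_pos h1]
    · have hset : S ∩ {a0 m, a1 m} = {a0 m} := by
        ext x
        simp only [mem_inter, mem_insert, mem_singleton]
        constructor
        · rintro ⟨hxS, rfl | rfl⟩
          · rfl
          · exact absurd hxS h1
        · rintro rfl; exact ⟨h0, Or.inl rfl⟩
      rw [hset, Finset.sum_singleton, w_a0, if_pos h0, if_neg h1]
    · have hset : S ∩ {a0 m, a1 m} = {a1 m} := by
        ext x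
        simp only [mem_inter, mem_insert, mem_singleton]
        constructor
        · rintro ⟨hxS, rfl | rfl⟩
          · exact absurd hxS h0
          · rfl
        · rintro rfl; exact ⟨h1, Or.inr rfl⟩
      rw [hset, Finset.sum_singleton, w_a1, if_neg h0, if_pos h1]
    · have hset : S ∩ {a0 m, a1 m} = ∅ := by
        ext x
        simp only [mem_inter, mem_insert, mem_singleton, notMem_empty, iff_false]
        rintro ⟨hxS, rfl | rfl⟩
        · exact h0 hxS
        · exact h1 hxS
      rw [hset, Finset.sum_empty, if_neg h0, if_neg h1]
      omega
  omega

lemma card_small : ((univ : Finset (Fin (m+6))) \ {a0 m, a1 m}).card = m+4 := by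
  rw [card_sdiff_of_subset (subset_univ _), card_univ, Fintype.card_fin, card_pair (a01 m)]
  omega

lemma ks_le (S : Finset (Fin (m+6))) : ks m S ≤ m+4 := by
  have h1 : S \ {a0 m, a1 m} ⊆ univ \ {a0 m, a1 m} :=
    sdiff_subset_sdiff (subset_univ S) le_rfl
  have h2 := card_le_card h1
  rw [card_small] at h2
  exact h2

lemma ks_univ : ks m (univ : Finset (Fin (m+6))) = m+4 := card_small m

def gwin (S : Finset (Fin (m+6))) : Bool := decide (m+5 ≤ ∑ i ∈ S, w m i)

lemma gwin_iff (S : Finset (Fin (m+6))) : gwin m S = true ↔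
    ((a0 m ∈ S ∧ a1 m ∈ S) ∨ (a0 m ∈ S ∧ a1 m ∉ S ∧ 2 ≤ ks m S) ∨
     (a0 m ∉ S ∧ a1 m ∈ S ∧ m+3 ≤ ks m S)) := by
  have hb := ks_le m S
  rw [gwin, decide_eq_true_eq, sum_w]
  by_cases h0 : a0 m ∈ S <;> by_cases h1 : a1 m ∈ S <;> simp [h0, h1] <;> omega

end CLMAux
namespace CLMAux

open Finset

variable (m : ℕ)

def G : SimpleGame (m+6) where
  win := gwin m
  win_empty := by simp [gwin]
  win_univ := by
    rw [gwin, decide_eq_true_eq, sum_w, ks_univ, if_pos (mem_univ _), if_pos (mem_univ _)]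
    omega
  win_mono := by
    intro S T hST h
    rw [gwin, decide_eq_true_eq] at h ⊢
    exact le_trans h (Finset.sum_le_sum_of_subset hST)

lemma G_win (S : Finset (Fin (m+6))) : (G m).win S = gwin m S := rfl

lemma sum_w_univ : ∑ i ∈ (univ : Finset (Fin (m+6))), w m i = 2*m+9 := by
  rw [sum_w, ks_univ, if_pos (mem_univ _), if_pos (mem_univ _)]
  omega

lemma G_mem : G m ∈ ConstantSumWeightedClass (m+6) := by
  constructor
  · refine ⟨((m+5 : ℕ) : ℝ), fun i => (w m i : ℝ), ?_, ?_, ?_⟩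
    · positivity
    · intro i; positivity
    · intro S
      rw [G_win, gwin, decide_eq_true_eq, ← Nat.cast_sum]
      exact Nat.cast_le.symm
  · intro S
    have hsd := Finset.sum_sdiff (f := w m) (subset_univ S)
    rw [sum_w_univ] at hsd
    rw [G_win, G_win, gwin, gwin, decide_eq_true_eq, decide_eq_false_iff_not]
    omega

lemma dom12 : (G m).Dominates (a1 m) (a2 m) := by
  intro S h2 h1
  have hUnion : S ∪ {a1 m} = insert (a1 m) S := by
    rw [union_comm, ← insert_eq]
  have key : ∑ i ∈ S, w m i ≤ ∑ i ∈ (S ∪ {a1 m}) \ {a2 m}, w m i := by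
    rw [hUnion, sdiff_singleton_eq_erase]
    have h2' : a2 m ∈ insert (a1 m) S := mem_insert_of_mem h2
    have e1 := Finset.sum_erase_add (insert (a1 m) S) (w m) h2'
    have e2 := Finset.sum_insert (f := w m) h1
    rw [w_a2] at e1
    rw [w_a1] at e2
    omega
  show gwin m S ≤ gwin m _
  cases hS : gwin m S
  · exact Bool.false_le _
  · have : gwin m ((S ∪ {a1 m}) \ {a2 m}) = true := by
      rw [gwin, decide_eq_true_eq] at hS ⊢
      omega
    rw [this]

end CLMAux
namespace CLMAux

open Finset

variable (m : ℕ)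

lemma ks_erase0 (S : Finset (Fin (m+6))) : ks m (S.erase (a0 m)) = ks m S := by
  rw [ks, ks]
  congr 1
  ext x
  simp only [mem_sdiff, mem_erase, mem_insert, mem_singleton]
  tauto

lemma ks_erase1 (S : Finset (Fin (m+6))) : ks m (S.erase (a1 m)) = ks m S := by
  rw [ks, ks]
  congr 1
  ext x
  simp only [mem_sdiff, mem_erase, mem_insert, mem_singleton]
  tauto

lemma ks_erase_small (S : Finset (Fin (m+6))) (x : Fin (m+6)) (hx : x ∈ S)
    (h0 : x ≠ a0 m) (h1 : x ≠ a1 m) : ks m (S.erase x) + 1 = ks m S := by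
  have hmem : x ∈ S \ {a0 m, a1 m} := by
    simp only [mem_sdiff, mem_insert, mem_singleton]
    exact ⟨hx, by tauto⟩
  have hset : (S.erase x) \ {a0 m, a1 m} = (S \ {a0 m, a1 m}).erase x := by
    ext y
    simp only [mem_sdiff, mem_erase, mem_insert, mem_singleton]
    tauto
  have hpos : 0 < (S \ {a0 m, a1 m}).card := card_pos.mpr ⟨x, hmem⟩
  rw [ks, ks, hset, card_erase_of_mem hmem]
  omega

lemma mem_erase_ne {x y : Fin (m+6)} (h : x ≠ y) (S : Finset (Fin (m+6))) :
    x ∈ S.erase y ↔ x ∈ S := by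
  simp [Finset.mem_erase, h]

lemma mem_Dset_a1 (S : Finset (Fin (m+6))) : S ∈ (G m).Dset (a1 m) ↔
    (a1 m ∈ S ∧ ((a0 m ∈ S ∧ ks m S ≤ 1) ∨ (a0 m ∉ S ∧ m+3 ≤ ks m S))) := by
  have hksle := ks_le m S
  rw [SimpleGame.Dset, mem_filter]
  simp only [mem_univ, true_and, G_win]
  rw [← Bool.not_eq_true (gwin m (S.erase (a1 m))), gwin_iff, gwin_iff,
    ks_erase1, mem_erase_ne m (a01 m)]
  simp only [notMem_erase, and_false, false_and, and_true, or_false, false_or]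
  by_cases h0 : a0 m ∈ S <;> by_cases h1 : a1 m ∈ S <;> simp [h0, h1] <;> omega

lemma mem_Dset_a2 (S : Finset (Fin (m+6))) : S ∈ (G m).Dset (a2 m) ↔
    (a2 m ∈ S ∧ ((a0 m ∈ S ∧ a1 m ∉ S ∧ ks m S = 2) ∨
      (a0 m ∉ S ∧ a1 m ∈ S ∧ ks m S = m+3))) := by
  have hksle := ks_le m S
  rw [SimpleGame.Dset, mem_filter]
  simp only [mem_univ, true_and, G_win]
  by_cases h2 : a2 m ∈ S
  · have hkse := ks_erase_small m S (a2 m) h2 (a02 m).symm (a12 m).symm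
    rw [← Bool.not_eq_true (gwin m (S.erase (a2 m))), gwin_iff, gwin_iff,
      mem_erase_ne m (a02 m), mem_erase_ne m (a12 m)]
    by_cases h0 : a0 m ∈ S <;> by_cases h1 : a1 m ∈ S <;> simp [h0, h1, h2] <;> omega
  · simp [h2]

lemma isMWC_iff {n : ℕ} (v : SimpleGame n) (S : Finset (Fin n)) :
    v.IsMWC S ↔ v.win S = true ∧ ∀ i ∈ S, v.win (S.erase i) = false := by
  constructor
  · rintro ⟨hw, hmin⟩
    exact ⟨hw, fun i hi => hmin _ (erase_ssubset hi)⟩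
  · rintro ⟨hw, hmin⟩
    refine ⟨hw, fun T hT => ?_⟩
    obtain ⟨i, hiS, hiT⟩ := exists_of_ssubset hT
    by_contra h
    have hT2 : T ⊆ S.erase i := subset_erase.mpr ⟨hT.subset, hiT⟩
    have hwT : v.win T = true := by
      cases hb : v.win T
      · exact absurd hb h
      · rfl
    have := v.win_mono hT2 hwT
    rw [hmin i hiS] at this
    exact Bool.noConfusion this

lemma gwin_false_iff (S : Finset (Fin (m+6))) : gwin m S = false ↔
    ¬((a0 m ∈ S ∧ a1 m ∈ S) ∨ (a0 m ∈ S ∧ a1 m ∉ S ∧ 2 ≤ ks m S) ∨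
     (a0 m ∉ S ∧ a1 m ∈ S ∧ m+3 ≤ ks m S)) := by
  rw [← Bool.not_eq_true, gwin_iff]

lemma mem_Mset_a1 (S : Finset (Fin (m+6))) : S ∈ (G m).Mset (a1 m) ↔
    (a1 m ∈ S ∧ ((a0 m ∈ S ∧ ks m S = 0) ∨ (a0 m ∉ S ∧ ks m S = m+3))) := by
  rw [SimpleGame.Mset, mem_filter]
  simp only [mem_univ, true_and]
  rw [isMWC_iff]
  constructor
  · rintro ⟨⟨hw, hmin⟩, h1⟩
    refine ⟨h1, ?_⟩
    rw [G_win, gwin_iff] at hw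
    by_cases h0 : a0 m ∈ S
    · left
      refine ⟨h0, ?_⟩
      by_contra hk
      obtain ⟨x, hx⟩ := card_pos.mp (Nat.pos_of_ne_zero hk)
      simp only [mem_sdiff, mem_insert, mem_singleton] at hx
      obtain ⟨hxS, hxne⟩ := hx
      push_neg at hxne
      have hlose := hmin x hxS
      have hwin : (G m).win (S.erase x) = true := by
        rw [G_win, gwin_iff]
        exact Or.inl ⟨(mem_erase_ne m hxne.1.symm _).mpr h0,
          (mem_erase_ne m hxne.2.symm _).mpr h1⟩
      rw [hlose] at hwin
      exact Bool.noConfusion hwin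
    · right
      refine ⟨h0, ?_⟩
      have hk : m+3 ≤ ks m S := by
        rcases hw with ⟨ha, -⟩ | ⟨ha, -⟩ | ⟨-, -, hk⟩
        · exact absurd ha h0
        · exact absurd ha h0
        · exact hk
      have hpos : 0 < ks m S := by omega
      obtain ⟨x, hx⟩ := card_pos.mp hpos
      simp only [mem_sdiff, mem_insert, mem_singleton] at hx
      obtain ⟨hxS, hxne⟩ := hx
      push_neg at hxne
      have hlose := hmin x hxS
      have hkse := ks_erase_small m S x hxS hxne.1 hxne.2
      rw [G_win, gwin_false_iff, mem_erase_ne m hxne.1.symm,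
        mem_erase_ne m hxne.2.symm] at hlose
      simp [h0, h1] at hlose
      omega
  · rintro ⟨h1, hcond⟩
    have hksle := ks_le m S
    refine ⟨⟨?_, ?_⟩, h1⟩
    · rw [G_win, gwin_iff]
      rcases hcond with ⟨h0, -⟩ | ⟨h0, hk⟩
      · exact Or.inl ⟨h0, h1⟩
      · exact Or.inr (Or.inr ⟨h0, h1, by omega⟩)
    · intro i hi
      rw [G_win, gwin_false_iff]
      by_cases hi0 : i = a0 m
      · subst hi0
        rcases hcond with ⟨-, hk⟩ | ⟨h0, -⟩
        · rw [mem_erase_ne m (a01 m).symm, ks_erase0]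
          simp [h1, hk]
        · exact absurd hi h0
      · by_cases hi1 : i = a1 m
        · subst hi1
          rw [mem_erase_ne m (a01 m), ks_erase1]
          rcases hcond with ⟨h0, hk⟩ | ⟨h0, hk⟩ <;> simp [h0, h1, hk]
        · have hkse := ks_erase_small m S i hi hi0 hi1
          have hiK : i ∈ S \ {a0 m, a1 m} := by
            simp only [mem_sdiff, mem_insert, mem_singleton]
            exact ⟨hi, by tauto⟩
          have hpos : 0 < ks m S := card_pos.mpr ⟨i, hiK⟩
          rw [mem_erase_ne m (fun h => hi0 h.symm), mem_erase_ne m (fun h => hi1 h.symm)]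
          rcases hcond with ⟨h0, hk⟩ | ⟨h0, hk⟩
          · exact absurd hk (by omega)
          · simp [h0, h1]
            omega

lemma mem_Mset_a2 (S : Finset (Fin (m+6))) : S ∈ (G m).Mset (a2 m) ↔
    (a2 m ∈ S ∧ ((a0 m ∈ S ∧ a1 m ∉ S ∧ ks m S = 2) ∨
      (a0 m ∉ S ∧ a1 m ∈ S ∧ ks m S = m+3))) := by
  rw [SimpleGame.Mset, mem_filter]
  simp only [mem_univ, true_and]
  rw [isMWC_iff]
  constructor
  · rintro ⟨⟨hw, hmin⟩, h2⟩
    refine ⟨h2, ?_⟩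
    rw [G_win, gwin_iff] at hw
    have h2K : a2 m ∈ S \ {a0 m, a1 m} := by
      simp only [mem_sdiff, mem_insert, mem_singleton]
      push_neg
      exact ⟨h2, (a02 m).symm, (a12 m).symm⟩
    have hpos : 0 < ks m S := card_pos.mpr ⟨a2 m, h2K⟩
    have hkse := ks_erase_small m S (a2 m) h2 (a02 m).symm (a12 m).symm
    have hlose := hmin (a2 m) h2
    rw [G_win, gwin_false_iff, mem_erase_ne m (a02 m), mem_erase_ne m (a12 m)] at hlose
    rcases hw with ⟨h0, h1⟩ | ⟨h0, h1, hk⟩ | ⟨h0, h1, hk⟩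
    · exact absurd (Or.inl ⟨h0, h1⟩) hlose
    · left
      refine ⟨h0, h1, ?_⟩
      simp [h0, h1] at hlose
      omega
    · right
      refine ⟨h0, h1, ?_⟩
      simp [h0, h1] at hlose
      omega
  · rintro ⟨h2, hcond⟩
    have hksle := ks_le m S
    refine ⟨⟨?_, ?_⟩, h2⟩
    · rw [G_win, gwin_iff]
      rcases hcond with ⟨h0, h1, hk⟩ | ⟨h0, h1, hk⟩
      · exact Or.inr (Or.inl ⟨h0, h1, by omega⟩)
      · exact Or.inr (Or.inr ⟨h0, h1, by omega⟩)
    · intro i hi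
      rw [G_win, gwin_false_iff]
      by_cases hi0 : i = a0 m
      · subst hi0
        rw [mem_erase_ne m (a01 m).symm, ks_erase0]
        rcases hcond with ⟨-, h1, hk⟩ | ⟨h0, -, -⟩
        · simp [h1, hk]
        · exact absurd hi h0
      · by_cases hi1 : i = a1 m
        · subst hi1
          rw [mem_erase_ne m (a01 m), ks_erase1]
          rcases hcond with ⟨-, h1, -⟩ | ⟨h0, -, hk⟩
          · exact absurd hi h1
          · simp [h0]
        · have hkse := ks_erase_small m S i hi hi0 hi1
          rw [mem_erase_ne m (fun h => hi0 h.symm), mem_erase_ne m (fun h => hi1 h.symm)]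
          rcases hcond with ⟨h0, h1, hk⟩ | ⟨h0, h1, hk⟩
          · simp [h0, h1]
            omega
          · simp [h0, h1]
            omega

end CLMAux
namespace CLMAux

open Finset

variable (m : ℕ)

def small : Finset (Fin (m+6)) := (univ : Finset (Fin (m+6))) \ {a0 m, a1 m}

lemma mem_small_powerset {K : Finset (Fin (m+6))} : K ∈ (small m).powerset ↔ K ⊆ (univ : Finset (Fin (m+6))) \ {a0 m, a1 m} := by rw [mem_powerset]; rfl

lemma card_cnt (b0 b1 : Prop) [Decidable b0] [Decidable b1]
    (q : Finset (Fin (m+6)) → Prop) :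
    ((univ : Finset (Finset (Fin (m+6)))).filter fun S =>
        ((a0 m ∈ S) ↔ b0) ∧ ((a1 m ∈ S) ↔ b1) ∧ q (S \ {a0 m, a1 m})).card
      = ((small m).powerset.filter q).card := by
  classical
  refine Finset.card_nbij' (fun S => S \ {a0 m, a1 m})
    (fun K => ((if b0 then {a0 m} else ∅) ∪ (if b1 then {a1 m} else ∅)) ∪ K)
    ?_ ?_ ?_ ?_
  · intro S hS
    rw [mem_coe, mem_filter] at hS
    rw [mem_coe, mem_filter, mem_small_powerset]
    exact ⟨sdiff_subset_sdiff (subset_univ S) le_rfl, hS.2.2.2⟩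
  · intro K hK
    rw [mem_coe, mem_filter, mem_small_powerset] at hK
    obtain ⟨hKsub, hKq⟩ := hK
    have hK0 : a0 m ∉ K := fun h => by
      have := hKsub h
      simp at this
    have hK1 : a1 m ∉ K := fun h => by
      have := hKsub h
      simp at this
    have hdiff : (((if b0 then {a0 m} else ∅) ∪ (if b1 then {a1 m} else ∅)) ∪ K)
        \ {a0 m, a1 m} = K := by
      ext x
      by_cases hb0 : b0 <;> by_cases hb1 : b1 <;>
        simp only [hb0, hb1, if_pos, if_neg, not_false_iff, if_true, if_false] <;>
        simp only [mem_sdiff, mem_union, mem_singleton, mem_insert, notMem_empty,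
          false_or, or_false] <;>
        constructor
      · tauto
      · intro hx
        refine ⟨Or.inr hx, ?_⟩
        push_neg
        exact ⟨fun h => hK0 (h ▸ hx), fun h => hK1 (h ▸ hx)⟩
      · tauto
      · intro hx
        refine ⟨Or.inr hx, ?_⟩
        push_neg
        exact ⟨fun h => hK0 (h ▸ hx), fun h => hK1 (h ▸ hx)⟩
      · tauto
      · intro hx
        refine ⟨Or.inr hx, ?_⟩
        push_neg
        exact ⟨fun h => hK0 (h ▸ hx), fun h => hK1 (h ▸ hx)⟩
      · tauto
      · intro hx
        refine ⟨hx, ?_⟩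
        push_neg
        exact ⟨fun h => hK0 (h ▸ hx), fun h => hK1 (h ▸ hx)⟩
    rw [mem_coe, mem_filter]
    refine ⟨mem_univ _, ?_, ?_, ?_⟩
    · by_cases hb0 : b0 <;> by_cases hb1 : b1 <;>
        simp [hb0, hb1, hK0, a01 m]
    · by_cases hb0 : b0 <;> by_cases hb1 : b1 <;>
        simp [hb0, hb1, hK1, (a01 m).symm]
    · rw [hdiff]; exact hKq
  · intro S hS
    rw [mem_coe, mem_filter] at hS
    obtain ⟨-, hS0, hS1, -⟩ := hS
    ext x
    simp only [mem_union, mem_sdiff, mem_insert, mem_singleton, notMem_empty]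
    by_cases hb0 : b0 <;> by_cases hb1 : b1 <;>
      simp only [hb0, hb1, if_true, if_false, iff_true, iff_false] at hS0 hS1 ⊢ <;>
      simp only [mem_union, mem_singleton, notMem_empty, false_or, or_false] <;>
      constructor
    · rintro ((rfl | rfl) | ⟨hx, -⟩) <;> first | exact hS0 | exact hS1 | exact hx
    · intro hx
      by_cases hx0 : x = a0 m
      · exact Or.inl (Or.inl hx0)
      · by_cases hx1 : x = a1 m
        · exact Or.inl (Or.inr hx1)
        · exact Or.inr ⟨hx, by tauto⟩
    · rintro (rfl | ⟨hx, -⟩) <;> first | exact hS0 | exact hx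
    · intro hx
      by_cases hx0 : x = a0 m
      · exact Or.inl hx0
      · by_cases hx1 : x = a1 m
        · exact absurd (hx1 ▸ hx) hS1
        · exact Or.inr ⟨hx, by tauto⟩
    · rintro (rfl | ⟨hx, -⟩) <;> first | exact hS1 | exact hx
    · intro hx
      by_cases hx1 : x = a1 m
      · exact Or.inl hx1
      · by_cases hx0 : x = a0 m
        · exact absurd (hx0 ▸ hx) hS0
        · exact Or.inr ⟨hx, by tauto⟩
    · rintro ⟨hx, -⟩
      exact hx
    · intro hx
      refine ⟨hx, ?_⟩
      push_neg
      exact ⟨fun h => hS0 (h ▸ hx), fun h => hS1 (h ▸ hx)⟩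
  · intro K hK
    rw [mem_coe, mem_filter, mem_small_powerset] at hK
    obtain ⟨hKsub, hKq⟩ := hK
    have hK0 : a0 m ∉ K := fun h => by
      have := hKsub h
      simp at this
    have hK1 : a1 m ∉ K := fun h => by
      have := hKsub h
      simp at this
    ext x
    by_cases hb0 : b0 <;> by_cases hb1 : b1 <;>
      simp only [hb0, hb1, if_true, if_false] <;>
      simp only [mem_sdiff, mem_union, mem_singleton, mem_insert, notMem_empty,
        false_or, or_false] <;>
      constructor
    · rintro ⟨(rfl | rfl) | hx, hne⟩ <;> tauto
    · intro hx
      exact ⟨Or.inr hx, by push_neg; exact ⟨fun h => hK0 (h ▸ hx), fun h => hK1 (h ▸ hx)⟩⟩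
    · rintro ⟨rfl | hx, hne⟩ <;> tauto
    · intro hx
      exact ⟨Or.inr hx, by push_neg; exact ⟨fun h => hK0 (h ▸ hx), fun h => hK1 (h ▸ hx)⟩⟩
    · rintro ⟨rfl | hx, hne⟩ <;> tauto
    · intro hx
      exact ⟨Or.inr hx, by push_neg; exact ⟨fun h => hK0 (h ▸ hx), fun h => hK1 (h ▸ hx)⟩⟩
    · rintro ⟨hx, hne⟩
      exact hx
    · intro hx
      exact ⟨hx, by push_neg; exact ⟨fun h => hK0 (h ▸ hx), fun h => hK1 (h ▸ hx)⟩⟩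

end CLMAux
namespace CLMAux

open Finset

variable (m : ℕ)

lemma card_powfilter_card (s : Finset (Fin (m+6))) (c : ℕ) :
    (s.powerset.filter fun K => K.card = c).card = s.card.choose c := by
  rw [← Finset.powersetCard_eq_filter, Finset.card_powersetCard]

lemma small_card : (small m).card = m+4 := card_small m

lemma count_le_one (inst : DecidablePred fun K : Finset (Fin (m+6)) => K.card ≤ 1) :
    (@filter _ _ inst (small m).powerset).card = m+5 := by
  rw [filter_congr_decidable]
  have hsplit : ((small m).powerset.filter fun K => K.card ≤ 1)
      = ((small m).powerset.filter fun K => K.card = 0)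
        ∪ ((small m).powerset.filter fun K => K.card = 1) := by
    rw [← filter_or]
    exact filter_congr fun K _ => by omega
  have hdisj : Disjoint ((small m).powerset.filter fun K => K.card = 0)
      ((small m).powerset.filter fun K => K.card = 1) := by
    rw [disjoint_left]
    intro K h1 h2
    rw [mem_filter] at h1 h2
    omega
  rw [hsplit, card_union_of_disjoint hdisj, card_powfilter_card, card_powfilter_card,
    small_card, Nat.choose_zero_right, Nat.choose_one_right]
  omega

lemma count_ge_m3 (inst : DecidablePred fun K : Finset (Fin (m+6)) => m+3 ≤ K.card) :
    (@filter _ _ inst (small m).powerset).card = m+5 := by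
  rw [filter_congr_decidable]
  have hsplit : ((small m).powerset.filter fun K => m+3 ≤ K.card)
      = ((small m).powerset.filter fun K => K.card = m+3)
        ∪ ((small m).powerset.filter fun K => K.card = m+4) := by
    rw [← filter_or]
    refine filter_congr fun K hK => ?_
    have : K.card ≤ m+4 := by
      rw [mem_powerset] at hK
      have := card_le_card hK
      rw [small_card] at this
      exact this
    constructor
    · intro h; omega
    · intro h; omega
  have hdisj : Disjoint ((small m).powerset.filter fun K => K.card = m+3)
      ((small m).powerset.filter fun K => K.card = m+4) := by
    rw [disjoint_left]
    intro K h1 h2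
    rw [mem_filter] at h1 h2
    omega
  have hch : (m+4).choose (m+3) = m+4 := by
    have h := Nat.choose_symm (show 1 ≤ m+4 by omega)
    rw [show m+4-1 = m+3 by omega] at h
    rw [h, Nat.choose_one_right]
  rw [hsplit, card_union_of_disjoint hdisj, card_powfilter_card, card_powfilter_card,
    small_card, hch, Nat.choose_self]

lemma count_eq_card (c : ℕ) (inst : DecidablePred fun K : Finset (Fin (m+6)) => K.card = c) :
    (@filter _ _ inst (small m).powerset).card = (m+4).choose c := by
  have h := card_powfilter_card m (small m) c
  rw [small_card] at h
  convert h using 2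
  all_goals congr!

lemma a2_mem_small : a2 m ∈ small m := by
  simp only [small, mem_sdiff, mem_univ, mem_insert, mem_singleton, true_and]
  push_neg
  exact ⟨(a02 m).symm, (a12 m).symm⟩

lemma count_mem_card (c : ℕ) (inst : DecidablePred fun K : Finset (Fin (m+6)) => a2 m ∈ K ∧ K.card = c + 1) :
    (@filter _ _ inst (small m).powerset).card
      = (m+3).choose c := by
  rw [filter_congr_decidable]
  have h2s := a2_mem_small m
  have hcard : ((small m).erase (a2 m)).card = m+3 := by
    rw [card_erase_of_mem h2s, small_card]
    omega
  have := card_powfilter_card m ((small m).erase (a2 m)) c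
  rw [hcard] at this
  rw [← this]
  refine Finset.card_nbij' (fun K => K.erase (a2 m)) (fun L => insert (a2 m) L)
    ?_ ?_ ?_ ?_
  · intro K hK
    rw [mem_coe, mem_filter, mem_powerset] at hK ⊢
    obtain ⟨hsub, h2K, hc⟩ := hK
    refine ⟨erase_subset_erase _ hsub, ?_⟩
    rw [card_erase_of_mem h2K, hc]
    omega
  · intro L hL
    rw [mem_coe, mem_filter, mem_powerset] at hL ⊢
    obtain ⟨hsub, hc⟩ := hL
    have h2L : a2 m ∉ L := fun h => notMem_erase _ _ (hsub h)
    refine ⟨?_, mem_insert_self _ _, ?_⟩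
    · exact insert_subset h2s (hsub.trans (erase_subset _ _))
    · rw [card_insert_of_notMem h2L, hc]
  · intro K hK
    rw [mem_coe, mem_filter] at hK
    exact insert_erase hK.2.1
  · intro L hL
    rw [mem_coe, mem_filter, mem_powerset] at hL
    have h2L : a2 m ∉ L := fun h => notMem_erase _ _ (hL.1 h)
    exact erase_insert h2L

end CLMAux
namespace CLMAux

open Finset

variable (m : ℕ)

lemma bz_a1 : (G m).Bz (a1 m) = 2*m+10 := by
  have h1 : ((univ : Finset (Finset (Fin (m+6)))).filter fun S =>
      ((a0 m ∈ S) ↔ True) ∧ ((a1 m ∈ S) ↔ True) ∧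
        (S \ {a0 m, a1 m}).card ≤ 1).card = m+5 := by
    convert (card_cnt m True True (fun K => K.card ≤ 1)).trans (count_le_one m _) using 2
    all_goals congr!
  have h2 : ((univ : Finset (Finset (Fin (m+6)))).filter fun S =>
      ((a0 m ∈ S) ↔ False) ∧ ((a1 m ∈ S) ↔ True) ∧
        m+3 ≤ (S \ {a0 m, a1 m}).card).card = m+5 := by
    convert (card_cnt m False True (fun K => m+3 ≤ K.card)).trans (count_ge_m3 m _) using 2
    all_goals congr!
  rw [SimpleGame.Bz]
  have hset : (G m).Dset (a1 m)
      = ((univ : Finset (Finset (Fin (m+6)))).filter fun S =>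
          ((a0 m ∈ S) ↔ True) ∧ ((a1 m ∈ S) ↔ True) ∧
            (S \ {a0 m, a1 m}).card ≤ 1)
        ∪ ((univ : Finset (Finset (Fin (m+6)))).filter fun S =>
          ((a0 m ∈ S) ↔ False) ∧ ((a1 m ∈ S) ↔ True) ∧
            m+3 ≤ (S \ {a0 m, a1 m}).card) := by
    ext S
    rw [mem_Dset_a1, mem_union, mem_filter, mem_filter]
    simp only [mem_univ, true_and, iff_true, iff_false, ks]
    tauto
  have hdisj : Disjoint
      ((univ : Finset (Finset (Fin (m+6)))).filter fun S =>
          ((a0 m ∈ S) ↔ True) ∧ ((a1 m ∈ S) ↔ True) ∧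
            (S \ {a0 m, a1 m}).card ≤ 1)
      ((univ : Finset (Finset (Fin (m+6)))).filter fun S =>
          ((a0 m ∈ S) ↔ False) ∧ ((a1 m ∈ S) ↔ True) ∧
            m+3 ≤ (S \ {a0 m, a1 m}).card) := by
    rw [disjoint_left]
    intro S hA hB
    rw [mem_filter] at hA hB
    tauto
  rw [hset, card_union_of_disjoint hdisj, h1, h2]
  omega

lemma bz_a2 : (G m).Bz (a2 m) = 2*m+6 := by
  have h1 : ((univ : Finset (Finset (Fin (m+6)))).filter fun S =>
      ((a0 m ∈ S) ↔ True) ∧ ((a1 m ∈ S) ↔ False) ∧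
        a2 m ∈ S \ {a0 m, a1 m} ∧ (S \ {a0 m, a1 m}).card = 1 + 1).card = (m+3).choose 1 := by
    convert (card_cnt m True False (fun K => a2 m ∈ K ∧ K.card = 1 + 1)).trans
      (count_mem_card m 1 _) using 2
    all_goals congr!
  have h2 : ((univ : Finset (Finset (Fin (m+6)))).filter fun S =>
      ((a0 m ∈ S) ↔ False) ∧ ((a1 m ∈ S) ↔ True) ∧
        a2 m ∈ S \ {a0 m, a1 m} ∧ (S \ {a0 m, a1 m}).card = (m+2) + 1).card = (m+3).choose (m+2) := by
    convert (card_cnt m False True (fun K => a2 m ∈ K ∧ K.card = (m+2) + 1)).trans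
      (count_mem_card m (m+2) _) using 2
    all_goals congr!
  rw [SimpleGame.Bz]
  have hset : (G m).Dset (a2 m)
      = ((univ : Finset (Finset (Fin (m+6)))).filter fun S =>
          ((a0 m ∈ S) ↔ True) ∧ ((a1 m ∈ S) ↔ False) ∧
            a2 m ∈ S \ {a0 m, a1 m} ∧ (S \ {a0 m, a1 m}).card = 1 + 1)
        ∪ ((univ : Finset (Finset (Fin (m+6)))).filter fun S =>
          ((a0 m ∈ S) ↔ False) ∧ ((a1 m ∈ S) ↔ True) ∧
            a2 m ∈ S \ {a0 m, a1 m} ∧ (S \ {a0 m, a1 m}).card = (m+2) + 1) := by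
    ext S
    rw [mem_Dset_a2, mem_union, mem_filter, mem_filter]
    simp only [mem_univ, true_and, iff_true, iff_false, ks]
    have hmem : a2 m ∈ S \ {a0 m, a1 m} ↔ a2 m ∈ S := by
      simp only [mem_sdiff, mem_insert, mem_singleton]
      constructor
      · tauto
      · intro h
        refine ⟨h, ?_⟩
        push_neg
        exact ⟨(a02 m).symm, (a12 m).symm⟩
    rw [hmem]
    constructor
    · rintro ⟨h2, ⟨h0, h1, hk⟩ | ⟨h0, h1, hk⟩⟩
      · exact Or.inl ⟨h0, h1, h2, by omega⟩
      · exact Or.inr ⟨h0, h1, h2, by omega⟩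
    · rintro (⟨h0, h1, h2, hk⟩ | ⟨h0, h1, h2, hk⟩)
      · exact ⟨h2, Or.inl ⟨h0, h1, by omega⟩⟩
      · exact ⟨h2, Or.inr ⟨h0, h1, by omega⟩⟩
  have hdisj : Disjoint
      ((univ : Finset (Finset (Fin (m+6)))).filter fun S =>
          ((a0 m ∈ S) ↔ True) ∧ ((a1 m ∈ S) ↔ False) ∧
            a2 m ∈ S \ {a0 m, a1 m} ∧ (S \ {a0 m, a1 m}).card = 1 + 1)
      ((univ : Finset (Finset (Fin (m+6)))).filter fun S =>
          ((a0 m ∈ S) ↔ False) ∧ ((a1 m ∈ S) ↔ True) ∧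
            a2 m ∈ S \ {a0 m, a1 m} ∧ (S \ {a0 m, a1 m}).card = (m+2) + 1) := by
    rw [disjoint_left]
    intro S hA hB
    rw [mem_filter] at hA hB
    tauto
  rw [hset, card_union_of_disjoint hdisj, h1, h2]
  have c1 : (m+3).choose 1 = m+3 := Nat.choose_one_right _
  have c2 : (m+3).choose (m+2) = m+3 := by
    have h := Nat.choose_symm (show 1 ≤ m+3 by omega)
    rw [show m+3-1 = m+2 by omega] at h
    rw [h, Nat.choose_one_right]
  rw [c1, c2]
  omega

lemma pgi_a1 : (G m).PGI (a1 m) = m+5 := by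
  have h1 : ((univ : Finset (Finset (Fin (m+6)))).filter fun S =>
      ((a0 m ∈ S) ↔ True) ∧ ((a1 m ∈ S) ↔ True) ∧
        (S \ {a0 m, a1 m}).card = 0).card = 1 := by
    convert (card_cnt m True True (fun K => K.card = 0)).trans
      ((count_eq_card m 0 _).trans (Nat.choose_zero_right _)) using 2
    all_goals congr!
  have hc : (m+4).choose (m+3) = m+4 := by
    have h := Nat.choose_symm (show 1 ≤ m+4 by omega)
    rw [show m+4-1 = m+3 by omega] at h
    rw [h, Nat.choose_one_right]
  have h2 : ((univ : Finset (Finset (Fin (m+6)))).filter fun S =>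
      ((a0 m ∈ S) ↔ False) ∧ ((a1 m ∈ S) ↔ True) ∧
        (S \ {a0 m, a1 m}).card = m+3).card = m+4 := by
    convert (card_cnt m False True (fun K => K.card = m+3)).trans
      ((count_eq_card m (m+3) _).trans hc) using 2
    all_goals congr!
  rw [SimpleGame.PGI]
  have hset : (G m).Mset (a1 m)
      = ((univ : Finset (Finset (Fin (m+6)))).filter fun S =>
          ((a0 m ∈ S) ↔ True) ∧ ((a1 m ∈ S) ↔ True) ∧
            (S \ {a0 m, a1 m}).card = 0)
        ∪ ((univ : Finset (Finset (Fin (m+6)))).filter fun S =>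
          ((a0 m ∈ S) ↔ False) ∧ ((a1 m ∈ S) ↔ True) ∧
            (S \ {a0 m, a1 m}).card = m+3) := by
    ext S
    rw [mem_Mset_a1, mem_union, mem_filter, mem_filter]
    simp only [mem_univ, true_and, iff_true, iff_false, ks]
    tauto
  have hdisj : Disjoint
      ((univ : Finset (Finset (Fin (m+6)))).filter fun S =>
          ((a0 m ∈ S) ↔ True) ∧ ((a1 m ∈ S) ↔ True) ∧
            (S \ {a0 m, a1 m}).card = 0)
      ((univ : Finset (Finset (Fin (m+6)))).filter fun S =>
          ((a0 m ∈ S) ↔ False) ∧ ((a1 m ∈ S) ↔ True) ∧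
            (S \ {a0 m, a1 m}).card = m+3) := by
    rw [disjoint_left]
    intro S hA hB
    rw [mem_filter] at hA hB
    tauto
  rw [hset, card_union_of_disjoint hdisj, h1, h2]
  omega

lemma pgi_a2 : (G m).PGI (a2 m) = 2*m+6 := by
  rw [SimpleGame.PGI]
  have hset : (G m).Mset (a2 m) = (G m).Dset (a2 m) := by
    ext S
    rw [mem_Mset_a2, mem_Dset_a2]
  rw [hset]
  exact bz_a2 m

end CLMAux
namespace CLMAux

open Finset

lemma bool_le_false {b : Bool} (h : b ≤ false) : b = false := by
  cases b
  · rfl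
  · exact absurd h (by decide)

lemma bool_true_le {b : Bool} (h : true ≤ b) : b = true := by
  cases b
  · exact absurd h (by decide)
  · rfl

lemma bz_mono {n : ℕ} (v : SimpleGame n) {i j : Fin n} (h : v.Dominates i j) :
    v.Bz j ≤ v.Bz i := by
  classical
  by_cases hij : i = j
  · subst hij; exact le_rfl
  have hji : j ≠ i := fun hh => hij hh.symm
  rw [SimpleGame.Bz, SimpleGame.Bz]
  apply Finset.card_le_card_of_injOn (fun S => if i ∈ S then S else insert i (S.erase j))
  · intro S hS
    rw [mem_coe, SimpleGame.Dset, mem_filter] at hS ⊢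
    obtain ⟨-, hjS, hwin, hlose⟩ := hS
    refine ⟨mem_univ _, ?_⟩
    by_cases hiS : i ∈ S
    · simp only [if_pos hiS]
      refine ⟨hiS, hwin, ?_⟩
      have hj' : j ∈ S.erase i := mem_erase.mpr ⟨hji, hjS⟩
      have hd := h (S.erase i) hj' (notMem_erase _ _)
      have hset : ((S.erase i) ∪ {i}) \ {j} = S.erase j := by
        ext x
        simp only [mem_sdiff, mem_union, mem_erase, mem_singleton]
        constructor
        · rintro ⟨hx1 | rfl, hxj⟩
          · exact ⟨hxj, hx1.2⟩
          · exact ⟨hxj, hiS⟩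
        · rintro ⟨hxj, hxS⟩
          by_cases hxi : x = i
          · exact ⟨Or.inr hxi, hxj⟩
          · exact ⟨Or.inl ⟨hxi, hxS⟩, hxj⟩
      rw [hset, hlose] at hd
      exact bool_le_false hd
    · simp only [if_neg hiS]
      have hd := h S hjS hiS
      have hset : (S ∪ {i}) \ {j} = insert i (S.erase j) := by
        ext x
        simp only [mem_sdiff, mem_union, mem_erase, mem_singleton, mem_insert]
        constructor
        · rintro ⟨hx1 | rfl, hxj⟩
          · exact Or.inr ⟨hxj, hx1⟩
          · exact Or.inl rfl
        · rintro (rfl | ⟨hxj, hxS⟩)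
          · exact ⟨Or.inr rfl, hij⟩
          · exact ⟨Or.inl hxS, hxj⟩
      rw [hset, hwin] at hd
      refine ⟨mem_insert_self _ _, bool_true_le hd, ?_⟩
      have hier : i ∉ S.erase j := fun hh => hiS (mem_of_mem_erase hh)
      rw [erase_insert hier]
      exact hlose
  · intro S hS T hT heq
    rw [Finset.mem_coe, SimpleGame.Dset, mem_filter] at hS hT
    simp only [mem_univ, true_and] at hS hT
    obtain ⟨hjS, -, -⟩ := hS
    obtain ⟨hjT, -, -⟩ := hT
    simp only at heq
    by_cases hiS : i ∈ S <;> by_cases hiT : i ∈ T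
    · rwa [if_pos hiS, if_pos hiT] at heq
    · rw [if_pos hiS, if_neg hiT] at heq
      exfalso
      have : j ∈ insert i (T.erase j) := heq ▸ hjS
      rcases mem_insert.mp this with hh | hh
      · exact hji hh
      · exact absurd hh (notMem_erase _ _)
    · rw [if_neg hiS, if_pos hiT] at heq
      exfalso
      have : j ∈ insert i (S.erase j) := heq ▸ hjT
      rcases mem_insert.mp this with hh | hh
      · exact hji hh
      · exact absurd hh (notMem_erase _ _)
    · rw [if_neg hiS, if_neg hiT] at heq
      have hierS : i ∉ S.erase j := fun hh => hiS (mem_of_mem_erase hh)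
      have hierT : i ∉ T.erase j := fun hh => hiT (mem_of_mem_erase hh)
      have herase : S.erase j = T.erase j := by
        have := congrArg (fun X => Finset.erase X i) heq
        simpa [erase_insert hierS, erase_insert hierT] using this
      have := congrArg (fun X => insert j X) herase
      simpa [insert_erase hjS, insert_erase hjT] using this

end CLMAux
/-- for `𝒫 = (Bz^r, PGI^r)` and `n ≥ 2`, the cost of local
monotonicity on constant-sum weighted games is at least `max(0, (n-5)/(n-1))`. -/
theorem costLM_Bz_PGI_constant_sum_lower_bound (n : ℕ) (hn : 2 ≤ n) :
    max 0 (((n : ℝ) - 5) / ((n : ℝ) - 1)) ≤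
      costLM ![BzPI, PGIPI] n ConstantSumWeightedClass := by
  have hn1 : (0:ℝ) < (n:ℝ) - 1 := by
    have h2 : (2:ℝ) ≤ (n:ℝ) := by exact_mod_cast hn
    linarith
  rw [costLM]
  by_cases hc : n < 6
  · have hmax : max 0 (((n : ℝ) - 5) / ((n : ℝ) - 1)) = 0 := by
      rw [max_eq_left]
      apply div_nonpos_of_nonpos_of_nonneg
      · have h5 : (n:ℝ) ≤ 5 := by
          have : n ≤ 5 := by omega
          exact_mod_cast this
        linarith
      · linarith
    rw [hmax]
    apply Real.sInf_nonneg
    rintro x ⟨⟨hx0, -⟩, -⟩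
    exact hx0
  · push_neg at hc
    obtain ⟨m, rfl⟩ : ∃ m, n = m + 6 := ⟨n - 6, by omega⟩
    have hcast : ((m+6 : ℕ) : ℝ) = (m : ℝ) + 6 := by push_cast; ring
    have hmax : max 0 ((((m+6 : ℕ) : ℝ) - 5) / (((m+6 : ℕ) : ℝ) - 1))
        = ((m:ℝ)+1)/((m:ℝ)+5) := by
      rw [hcast]
      rw [show ((m:ℝ)+6-5) = (m:ℝ)+1 by ring, show ((m:ℝ)+6-1) = (m:ℝ)+5 by ring]
      rw [max_eq_right]
      positivity
    rw [hmax]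
    apply le_csInf
    · refine ⟨1, ⟨by norm_num, by norm_num⟩, ?_⟩
      intro α hα h1
      obtain ⟨hpos, hsum⟩ := hα
      rw [Fin.sum_univ_two] at hsum
      have hα0 : α 0 = 1 := le_antisymm (by have := hpos 1; linarith) h1
      have hα1 : α 1 = 0 := by linarith
      intro v hv i j hdom
      simp only [convexComb, Fin.sum_univ_two, Matrix.cons_val_zero, Matrix.cons_val_one,
        Matrix.head_cons, hα0, hα1, one_mul, zero_mul, add_zero]
      show BzPI _ v j ≤ BzPI _ v i
      simp only [BzPI]
      exact_mod_cast CLMAux.bz_mono v hdom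
    · rintro β ⟨⟨hβ0, hβ1⟩, hLM⟩
      by_contra hlt
      push_neg at hlt
      set α : Fin 2 → ℝ := ![β, 1-β] with hαdef
      have hα0 : α 0 = β := rfl
      have hα1 : α 1 = 1 - β := rfl
      have hαmem : α ∈ stdSimplex ℝ (Fin 2) := by
        constructor
        · intro i
          fin_cases i
          · simpa [hαdef] using hβ0
          · simp [hαdef]; linarith
        · rw [Fin.sum_univ_two, hα0, hα1]; ring
      have hLM2 := hLM α hαmem (le_of_eq hα0.symm)
      have hineq := hLM2 (CLMAux.G m) (CLMAux.G_mem m) (CLMAux.a1 m) (CLMAux.a2 m)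
        (CLMAux.dom12 m)
      simp only [convexComb, Fin.sum_univ_two, Matrix.cons_val_zero, Matrix.cons_val_one,
        Matrix.head_cons, BzPI, PGIPI] at hineq
      rw [CLMAux.bz_a1, CLMAux.bz_a2, CLMAux.pgi_a1, CLMAux.pgi_a2, hα0, hα1] at hineq
      have hβm : β * ((m:ℝ)+5) < (m:ℝ)+1 := by
        rw [lt_div_iff₀ (by positivity : (0:ℝ) < (m:ℝ)+5)] at hlt
        exact hlt
      push_cast at hineq
      nlinarith [hineq, hβm]
end

section
/- Let k ≥ 1 be an integer, m ∈ {0,1,2}, n = 3k+3+m, t = 2k²+3k+1, and let v be the weighted game on n players with quota 2t+m(k+1) and weights: one player of weight t+1+m(k+1) (player 1), one player of weight t+m(k+1) (player 2), k players of weight 2k+3, and 2k+1+m players of weight k+1. Then Bz^r_1(v) = 2^{n−2}+1, Bz^r_2(v) = 2^{n−2}−1, S^r_1(v) = 1 if k = 1 and S^r_1(v) = 2 if k > 1, and S^r_2(v) = −1 + S^r_1(v) + Σ_{a=0}^{k} C(k,a) · C(2k+1+m, ⌈(t − a(2k+3))/(k+1)⌉). -/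
open scoped Classical

namespace Stmt18

variable {n : ℕ}

/-- A coalition `S` is winning in the weighted game `[q; w]` iff its total
weight reaches the quota. -/
def Win (q : ℕ) (w : Fin n → ℕ) (S : Finset (Fin n)) : Prop :=
  q ≤ ∑ i ∈ S, w i

/-- `S` is a minimal winning coalition of `[q; w]`. -/
def IsMWC (q : ℕ) (w : Fin n → ℕ) (S : Finset (Fin n)) : Prop :=
  Win q w S ∧ ∀ T ⊂ S, ¬ Win q w T

/-- Player `i` dominates player `j` in `[q; w]`:
`v((S ∪ {i}) \ {j}) ≥ v(S)` whenever `j ∈ S` and `i ∉ S`. -/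
def Dominates (q : ℕ) (w : Fin n → ℕ) (i j : Fin n) : Prop :=
  ∀ S : Finset (Fin n), j ∈ S → i ∉ S → Win q w S → Win q w ((S ∪ {i}) \ {j})

/-- `S` is a shift-minimal winning coalition of `[q; w]`. -/
def IsSMWC (q : ℕ) (w : Fin n → ℕ) (S : Finset (Fin n)) : Prop :=
  IsMWC q w S ∧ ∀ i ∈ S, ∀ j ∉ S, Dominates q w i j → ¬ Dominates q w j i →
    ¬ Win q w ((S \ {i}) ∪ {j})

/-- Raw Banzhaf index of player `i` in `[q; w]`: the number of coalitions
decisive for `i`. -/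
noncomputable def Bz (q : ℕ) (w : Fin n → ℕ) (i : Fin n) : ℕ :=
  (Finset.univ.filter fun S : Finset (Fin n) =>
    i ∈ S ∧ Win q w S ∧ ¬ Win q w (S.erase i)).card

/-- Raw Shift index of player `i` in `[q; w]`: the number of shift-minimal
winning coalitions containing `i`. -/
noncomputable def ShiftIdx (q : ℕ) (w : Fin n → ℕ) (i : Fin n) : ℕ :=
  (Finset.univ.filter fun S : Finset (Fin n) => IsSMWC q w S ∧ i ∈ S).card

-- counting helpers
noncomputable def f0 (S : Finset (Fin n)) : ℕ := (S.filter fun i : Fin n => (i:ℕ) = 0).card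
noncomputable def f1 (S : Finset (Fin n)) : ℕ := (S.filter fun i : Fin n => (i:ℕ) = 1).card
noncomputable def fb (k : ℕ) (S : Finset (Fin n)) : ℕ :=
  (S.filter fun i : Fin n => 2 ≤ (i:ℕ) ∧ (i:ℕ) < k+2).card
noncomputable def fs (k : ℕ) (S : Finset (Fin n)) : ℕ :=
  (S.filter fun i : Fin n => k+2 ≤ (i:ℕ)).card

theorem wsum (k m t : ℕ) (w : Fin n → ℕ)
    (hw : ∀ i : Fin n, w i =
      if (i : ℕ) = 0 then t + 1 + m * (k + 1)
      else if (i : ℕ) = 1 then t + m * (k + 1)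
      else if (i : ℕ) < k + 2 then 2 * k + 3
      else k + 1) (S : Finset (Fin n)) :
    ∑ i ∈ S, w i = f0 S * (t+1+m*(k+1)) + f1 S * (t+m*(k+1))
      + fb k S * (2*k+3) + fs k S * (k+1) := by
  rw [← Finset.sum_filter_add_sum_filter_not S (fun i : Fin n => (i:ℕ) = 0)]
  rw [← Finset.sum_filter_add_sum_filter_not (S.filter fun i : Fin n => ¬ (i:ℕ) = 0)
      (fun i : Fin n => (i:ℕ) = 1)]
  rw [← Finset.sum_filter_add_sum_filter_not
      ((S.filter fun i : Fin n => ¬ (i:ℕ) = 0).filter fun i : Fin n => ¬ (i:ℕ) = 1)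
      (fun i : Fin n => (i:ℕ) < k + 2)]
  simp only [Finset.filter_filter]
  have e1 : (S.filter fun i : Fin n => ¬(i:ℕ) = 0 ∧ (i:ℕ) = 1)
      = S.filter (fun i : Fin n => (i:ℕ) = 1) := by
    ext i; simp only [Finset.mem_filter]
    exact ⟨fun ⟨h, _, h2⟩ => ⟨h, h2⟩, fun ⟨h, h2⟩ => ⟨h, by omega, h2⟩⟩
  have eb : (S.filter fun i : Fin n => (¬(i:ℕ) = 0 ∧ ¬(i:ℕ) = 1) ∧ (i:ℕ) < k+2)
      = S.filter (fun i : Fin n => 2 ≤ (i:ℕ) ∧ (i:ℕ) < k+2) := by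
    ext i; simp only [Finset.mem_filter]
    exact ⟨fun ⟨h, ⟨a, b⟩, c⟩ => ⟨h, by omega, c⟩, fun ⟨h, a, c⟩ => ⟨h, ⟨by omega, by omega⟩, c⟩⟩
  have es : (S.filter fun i : Fin n => (¬(i:ℕ) = 0 ∧ ¬(i:ℕ) = 1) ∧ ¬(i:ℕ) < k+2)
      = S.filter (fun i : Fin n => k+2 ≤ (i:ℕ)) := by
    ext i; simp only [Finset.mem_filter]
    exact ⟨fun ⟨h, ⟨a, b⟩, c⟩ => ⟨h, by omega⟩, fun ⟨h, c⟩ => ⟨h, ⟨by omega, by omega⟩, by omega⟩⟩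
  rw [e1, eb, es]
  have c0 : ∑ i ∈ S.filter (fun i : Fin n => (i:ℕ) = 0), w i = f0 S * (t+1+m*(k+1)) := by
    rw [Finset.sum_congr rfl (fun i hi => ?_), Finset.sum_const, smul_eq_mul]
    · rfl
    · simp only [Finset.mem_filter] at hi; rw [hw]; simp [hi.2]
  have c1 : ∑ i ∈ S.filter (fun i : Fin n => (i:ℕ) = 1), w i = f1 S * (t+m*(k+1)) := by
    rw [Finset.sum_congr rfl (fun i hi => ?_), Finset.sum_const, smul_eq_mul]
    · rfl
    · simp only [Finset.mem_filter] at hi; rw [hw]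
      have : ¬ (i:ℕ) = 0 := by omega
      simp [this, hi.2]
  have cb : ∑ i ∈ S.filter (fun i : Fin n => 2 ≤ (i:ℕ) ∧ (i:ℕ) < k+2), w i
      = fb k S * (2*k+3) := by
    rw [Finset.sum_congr rfl (fun i hi => ?_), Finset.sum_const, smul_eq_mul]
    · rfl
    · simp only [Finset.mem_filter] at hi; rw [hw]
      have h0 : ¬ (i:ℕ) = 0 := by omega
      have h1 : ¬ (i:ℕ) = 1 := by omega
      simp [h0, h1, hi.2.2]
  have cs : ∑ i ∈ S.filter (fun i : Fin n => k+2 ≤ (i:ℕ)), w i = fs k S * (k+1) := by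
    rw [Finset.sum_congr rfl (fun i hi => ?_), Finset.sum_const, smul_eq_mul]
    · rfl
    · simp only [Finset.mem_filter] at hi; rw [hw]
      have h0 : ¬ (i:ℕ) = 0 := by omega
      have h1 : ¬ (i:ℕ) = 1 := by omega
      have h2 : ¬ (i:ℕ) < k + 2 := by omega
      simp [h0, h1, h2]
  rw [c0, c1, cb, cs]; ring


-- counting Fin-filters via range
theorem card_val_filter (p : ℕ → Prop) [DecidablePred p] :
    ((Finset.univ.filter fun i : Fin n => p (i:ℕ)).card
      = ((Finset.range n).filter p).card) := by
  apply Finset.card_bij (fun (i : Fin n) _ => (i:ℕ))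
  · intro a ha
    simp only [Finset.mem_filter, Finset.mem_range, Finset.mem_univ, true_and] at *
    exact ⟨a.isLt, ha⟩
  · intro a ha b hb hab
    exact Fin.ext hab
  · intro x hx
    simp only [Finset.mem_filter, Finset.mem_range] at hx
    exact ⟨⟨x, hx.1⟩, by simp [hx.2], rfl⟩

def Pset (n : ℕ) : Finset (Fin n) :=
  Finset.univ.filter fun i : Fin n => 2 ≤ (i:ℕ)

theorem mem_Pset {n : ℕ} {i : Fin n} : i ∈ Pset n ↔ 2 ≤ (i:ℕ) := by
  unfold Pset; simp

theorem card_Pset (h2 : 2 ≤ n) : (Pset n).card = n - 2 := by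
  unfold Pset
  rw [card_val_filter (p := fun x => 2 ≤ x)]
  have : (Finset.range n).filter (fun x => 2 ≤ x) = Finset.Ico 2 n := by
    ext x
    simp only [Finset.mem_filter, Finset.mem_range, Finset.mem_Ico]
    omega
  rw [this, Nat.card_Ico]

def BigS (k n : ℕ) : Finset (Fin n) :=
  Finset.univ.filter fun i : Fin n => 2 ≤ (i:ℕ) ∧ (i:ℕ) < k+2

def SmS (k n : ℕ) : Finset (Fin n) :=
  Finset.univ.filter fun i : Fin n => k+2 ≤ (i:ℕ)

theorem card_BigS (k : ℕ) (hkn : k + 2 ≤ n) : (BigS k n).card = k := by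
  unfold BigS
  rw [card_val_filter (p := fun x => 2 ≤ x ∧ x < k + 2)]
  have : (Finset.range n).filter (fun x => 2 ≤ x ∧ x < k+2) = Finset.Ico 2 (k+2) := by
    ext x
    simp only [Finset.mem_filter, Finset.mem_range, Finset.mem_Ico]
    omega
  rw [this, Nat.card_Ico]
  omega

theorem card_SmS (k : ℕ) (hkn : k + 2 ≤ n) : (SmS k n).card = n - (k+2) := by
  unfold SmS
  rw [card_val_filter (p := fun x => k + 2 ≤ x)]
  have : (Finset.range n).filter (fun x => k+2 ≤ x) = Finset.Ico (k+2) n := by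
    ext x
    simp only [Finset.mem_filter, Finset.mem_range, Finset.mem_Ico]
    omega
  rw [this, Nat.card_Ico]

theorem fb_le (k : ℕ) (S : Finset (Fin n)) (hkn : k + 2 ≤ n) : fb k S ≤ k := by
  have h : (S.filter fun i : Fin n => 2 ≤ (i:ℕ) ∧ (i:ℕ) < k+2) ⊆ BigS k n := by
    intro i hi
    simp only [Finset.mem_filter, BigS, Finset.mem_univ, true_and] at *
    exact hi.2
  calc fb k S ≤ (BigS k n).card := Finset.card_le_card h
    _ = k := card_BigS k hkn

theorem fs_le (k : ℕ) (S : Finset (Fin n)) (hkn : k + 2 ≤ n) : fs k S ≤ n - (k+2) := by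
  have h : (S.filter fun i : Fin n => k+2 ≤ (i:ℕ)) ⊆ SmS k n := by
    intro i hi
    simp only [Finset.mem_filter, SmS, Finset.mem_univ, true_and] at *
    exact hi.2
  calc fs k S ≤ (SmS k n).card := Finset.card_le_card h
    _ = n - (k+2) := card_SmS k hkn

theorem f0_eq (S : Finset (Fin n)) (i0 : Fin n) (h0 : (i0:ℕ) = 0) :
    f0 S = if i0 ∈ S then 1 else 0 := by
  unfold f0
  have : (S.filter fun i : Fin n => (i:ℕ) = 0) = if i0 ∈ S then {i0} else ∅ := by
    split_ifs with h
    · ext i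
      simp only [Finset.mem_filter, Finset.mem_singleton]
      constructor
      · rintro ⟨hi, hv⟩; exact Fin.ext (by omega)
      · rintro rfl; exact ⟨h, h0⟩
    · ext i
      simp only [Finset.mem_filter, Finset.notMem_empty, iff_false]
      rintro ⟨hi, hv⟩
      exact h (by rwa [show i0 = i from Fin.ext (by omega)])
  rw [this]
  split_ifs <;> simp

theorem f1_eq (S : Finset (Fin n)) (i1 : Fin n) (h1 : (i1:ℕ) = 1) :
    f1 S = if i1 ∈ S then 1 else 0 := by
  unfold f1
  have : (S.filter fun i : Fin n => (i:ℕ) = 1) = if i1 ∈ S then {i1} else ∅ := by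
    split_ifs with h
    · ext i
      simp only [Finset.mem_filter, Finset.mem_singleton]
      constructor
      · rintro ⟨hi, hv⟩; exact Fin.ext (by omega)
      · rintro rfl; exact ⟨h, h1⟩
    · ext i
      simp only [Finset.mem_filter, Finset.notMem_empty, iff_false]
      rintro ⟨hi, hv⟩
      exact h (by rwa [show i1 = i from Fin.ext (by omega)])
  rw [this]
  split_ifs <;> simp

theorem win_mono {q : ℕ} {w : Fin n → ℕ} {S T : Finset (Fin n)} (hST : S ⊆ T)
    (h : Win q w S) : Win q w T :=
  le_trans h (Finset.sum_le_sum_of_subset hST)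

theorem swap_set {S : Finset (Fin n)} {i j : Fin n} (hi : i ∈ S) (hj : j ∉ S) :
    (S \ {i}) ∪ {j} = insert j (S.erase i) := by
  ext x
  simp only [Finset.mem_union, Finset.mem_sdiff, Finset.mem_singleton, Finset.mem_insert,
    Finset.mem_erase]
  tauto

theorem swap_set' {S : Finset (Fin n)} {i j : Fin n} (hi : i ∈ S) (hj : j ∉ S) :
    (S ∪ {j}) \ {i} = insert j (S.erase i) := by
  have hij : i ≠ j := fun h => hj (h ▸ hi)
  ext x
  simp only [Finset.mem_union, Finset.mem_sdiff, Finset.mem_singleton, Finset.mem_insert,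
    Finset.mem_erase]
  constructor
  · rintro ⟨h1 | h1, h2⟩
    · exact Or.inr ⟨h2, h1⟩
    · exact Or.inl h1
  · rintro (rfl | ⟨h1, h2⟩)
    · exact ⟨Or.inr rfl, fun h => hij h.symm⟩
    · exact ⟨Or.inl h2, h1⟩

theorem sum_swap_eq {w : Fin n → ℕ} {S : Finset (Fin n)} {i j : Fin n}
    (hi : i ∈ S) (hj : j ∉ S) :
    ∑ x ∈ insert j (S.erase i), w x + w i = ∑ x ∈ S, w x + w j := by
  rw [Finset.sum_insert (fun h => hj (Finset.mem_of_mem_erase h))]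
  have := Finset.sum_erase_add S w hi
  omega

theorem dominates_of_le {q : ℕ} {w : Fin n → ℕ} {i j : Fin n} (h : w j ≤ w i) :
    Dominates q w i j := by
  intro S hj hi hWin
  have hij : i ≠ j := fun hEq => hi (hEq ▸ hj)
  rw [swap_set' hj hi]
  unfold Win at *
  have := sum_swap_eq (w := w) hj hi
  omega

theorem lt_of_not_dominates {q : ℕ} {w : Fin n → ℕ} {i j : Fin n}
    (h : ¬ Dominates q w j i) : w j < w i := by
  by_contra hc
  exact h (dominates_of_le (by omega))

theorem mwc_iff {q : ℕ} {w : Fin n → ℕ} {S : Finset (Fin n)} :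
    IsMWC q w S ↔ Win q w S ∧ ∀ i ∈ S, ¬ Win q w (S.erase i) := by
  constructor
  · rintro ⟨hW, hmin⟩
    exact ⟨hW, fun i hi => hmin _ (Finset.erase_ssubset hi)⟩
  · rintro ⟨hW, hmin⟩
    refine ⟨hW, fun T hT hWT => ?_⟩
    obtain ⟨i, hiS, hiT⟩ := Finset.exists_of_ssubset hT
    exact hmin i hiS (win_mono (fun x hx => Finset.mem_erase.mpr
      ⟨fun hEq => hiT (hEq ▸ hx), hT.subset hx⟩) hWT)


-- the forced number of small players given a big players
def Ea (k t a : ℕ) : ℕ := (t - a*(2*k+3) + k)/(k+1)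

theorem div_bounds (d u : ℕ) (hu : 0 < u) : (d/u)*u ≤ d ∧ d < (d/u + 1)*u := by
  refine ⟨Nat.div_mul_le_self d u, ?_⟩
  have h1 := Nat.div_add_mod d u
  have h2 := Nat.mod_lt d hu
  have h3 : u * (d/u) = (d/u) * u := Nat.mul_comm _ _
  have h4 : (d/u + 1)*u = (d/u)*u + u := by ring
  omega

theorem ceil_toNat (k t A : ℕ) (hk : 1 ≤ k) (hA : A + 1 ≤ t) :
    (⌈((t:ℚ) - (A:ℚ)) / ((k:ℚ) + 1)⌉).toNat = (t - A + k)/(k+1) := by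
  have hd : ((t - A : ℕ) : ℚ) = (t:ℚ) - (A:ℚ) := by
    rw [Nat.cast_sub (by omega)]
  set d := t - A with hddef
  set z := (d + k)/(k+1) with hz
  obtain ⟨hz1, hz2⟩ := div_bounds (d+k) (k+1) (by omega)
  rw [← hz] at hz1 hz2
  have hzq1 : (z:ℚ)*((k:ℚ)+1) ≤ (d:ℚ)+(k:ℚ) := by exact_mod_cast hz1
  have hzq2 : (d:ℚ)+(k:ℚ) < ((z:ℚ)+1)*((k:ℚ)+1) := by exact_mod_cast hz2
  have hkq : (0:ℚ) < (k:ℚ)+1 := by positivity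
  have hceil : ⌈((t:ℚ) - (A:ℚ)) / ((k:ℚ) + 1)⌉ = (z:ℤ) := by
    rw [← hd, Int.ceil_eq_iff]
    constructor
    · push_cast
      rw [lt_div_iff₀ hkq]
      nlinarith
    · have hle : d ≤ z*(k+1) := by
        have hexp : (z+1)*(k+1) = z*(k+1)+(k+1) := by ring
        omega
      rw [div_le_iff₀ hkq]
      exact_mod_cast hle
  rw [hceil]
  exact Int.toNat_natCast z

structure Setup (k m n t q : ℕ) (w : Fin n → ℕ) : Prop where
  hk : 1 ≤ k
  hm : m ≤ 2
  hn : n = 3*k+3+m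
  ht : t = 2*k^2+3*k+1
  hq : q = 2*t+m*(k+1)
  hw : ∀ i : Fin n, w i =
      if (i : ℕ) = 0 then t + 1 + m * (k + 1)
      else if (i : ℕ) = 1 then t + m * (k + 1)
      else if (i : ℕ) < k + 2 then 2 * k + 3
      else k + 1

namespace Setup

variable {k m t q : ℕ} {w : Fin n → ℕ} (hs : Setup k m n t q w)
include hs

theorem ht' : t = k*(2*k+3)+1 := by rw [hs.ht]; ring

theorem hkn : k + 2 ≤ n := by have := hs.hn; have := hs.hk; omega

theorem hsm : n - (k+2) = 2*k+1+m := by have := hs.hn; have := hs.hk; omega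

theorem w_val0 {i : Fin n} (h : (i:ℕ) = 0) : w i = t+1+m*(k+1) := by
  rw [hs.hw]; simp [h]

theorem w_val1 {i : Fin n} (h : (i:ℕ) = 1) : w i = t+m*(k+1) := by
  rw [hs.hw]; simp [h]

theorem w_big {i : Fin n} (h2 : 2 ≤ (i:ℕ)) (hlt : (i:ℕ) < k+2) : w i = 2*k+3 := by
  rw [hs.hw]
  have e0 : ¬ (i:ℕ) = 0 := by omega
  have e1 : ¬ (i:ℕ) = 1 := by omega
  simp [e0, e1, hlt]

theorem w_sm {i : Fin n} (h2 : k+2 ≤ (i:ℕ)) : w i = k+1 := by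
  rw [hs.hw]
  have e0 : ¬ (i:ℕ) = 0 := by omega
  have e1 : ¬ (i:ℕ) = 1 := by omega
  have e2 : ¬ (i:ℕ) < k+2 := by omega
  simp [e0, e1, e2]

theorem w_le_of_ge2 {i : Fin n} (h2 : 2 ≤ (i:ℕ)) : w i ≤ 2*k+3 := by
  by_cases h : (i:ℕ) < k+2
  · rw [hs.w_big h2 h]
  · rw [hs.w_sm (by omega)]; omega

theorem w_ge {i : Fin n} : k+1 ≤ w i := by
  have h1 := hs.ht'
  rw [hs.hw]
  have hk := hs.hk
  split_ifs <;> nlinarith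

theorem w_pos {i : Fin n} : 1 ≤ w i := le_trans (by omega) hs.w_ge

theorem sum_BigS : ∑ i ∈ BigS k n, w i = k*(2*k+3) := by
  rw [Finset.sum_congr rfl (fun i hi => ?_), Finset.sum_const, smul_eq_mul,
    card_BigS k hs.hkn]
  unfold BigS at hi
  simp only [Finset.mem_filter, Finset.mem_univ, true_and] at hi
  exact hs.w_big hi.1 hi.2

theorem sum_SmS : ∑ i ∈ SmS k n, w i = (2*k+1+m)*(k+1) := by
  rw [Finset.sum_congr rfl (fun i hi => ?_), Finset.sum_const, smul_eq_mul,
    card_SmS k hs.hkn, hs.hsm]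
  unfold SmS at hi
  simp only [Finset.mem_filter, Finset.mem_univ, true_and] at hi
  exact hs.w_sm hi

theorem mem_BigS {i : Fin n} : i ∈ BigS k n ↔ 2 ≤ (i:ℕ) ∧ (i:ℕ) < k+2 := by
  unfold BigS; simp

theorem mem_SmS {i : Fin n} : i ∈ SmS k n ↔ k+2 ≤ (i:ℕ) := by
  unfold SmS; simp

theorem sum_insert0_BigS {i0 : Fin n} (h0 : (i0:ℕ) = 0) :
    ∑ i ∈ insert i0 (BigS k n), w i = q := by
  have hni : i0 ∉ BigS k n := by rw [hs.mem_BigS]; omega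
  rw [Finset.sum_insert hni, hs.sum_BigS, hs.w_val0 h0, hs.hq, hs.ht']
  ring

theorem sum_insert1_BigS {i1 : Fin n} (h1 : (i1:ℕ) = 1) :
    ∑ i ∈ insert i1 (BigS k n), w i = q - 1 := by
  have hni : i1 ∉ BigS k n := by rw [hs.mem_BigS]; omega
  rw [Finset.sum_insert hni, hs.sum_BigS, hs.w_val1 h1, hs.hq, hs.ht']
  have : 1 ≤ k*(2*k+3)+1 := by omega
  omega

theorem sum_insert1_SmS {i1 : Fin n} (h1 : (i1:ℕ) = 1) :
    ∑ i ∈ insert i1 (SmS k n), w i = 2*t + 2*(m*(k+1)) := by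
  have hni : i1 ∉ SmS k n := by rw [hs.mem_SmS]; omega
  rw [Finset.sum_insert hni, hs.sum_SmS, hs.w_val1 h1, hs.ht']
  ring

theorem not_dom_10 {i0 i1 : Fin n} (h0 : (i0:ℕ) = 0) (h1 : (i1:ℕ) = 1) :
    ¬ Dominates q w i1 i0 := by
  intro h
  have hi0 : i0 ∈ insert i0 (BigS k n) := Finset.mem_insert_self _ _
  have hi1 : i1 ∉ insert i0 (BigS k n) := by
    simp only [Finset.mem_insert, hs.mem_BigS]
    omega
  have hWin : Win q w (insert i0 (BigS k n)) := le_of_eq (hs.sum_insert0_BigS h0).symm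
  have := h _ hi0 hi1 hWin
  rw [swap_set' hi0 hi1] at this
  unfold Win at this
  have hq1 := sum_swap_eq (w := w) hi0 hi1
  rw [hs.sum_insert0_BigS h0, hs.w_val0 h0, hs.w_val1 h1] at hq1
  have hqpos : 1 ≤ q := by rw [hs.hq, hs.ht']; omega
  omega

theorem not_dom_b1 {i1 jb : Fin n} (h1 : (i1:ℕ) = 1) (hjb : (jb:ℕ) = 2) :
    ¬ Dominates q w jb i1 := by
  intro h
  have hi1 : i1 ∈ insert i1 (SmS k n) := Finset.mem_insert_self _ _
  have hjb' : jb ∉ insert i1 (SmS k n) := by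
    simp only [Finset.mem_insert, hs.mem_SmS]
    have := hs.hk
    intro hc
    rcases hc with hc | hc
    · exact absurd (congrArg Fin.val hc) (by omega)
    · omega
  have hWin : Win q w (insert i1 (SmS k n)) := by
    unfold Win
    rw [hs.sum_insert1_SmS h1, hs.hq]
    omega
  have := h _ hi1 hjb' hWin
  rw [swap_set' hi1 hjb'] at this
  unfold Win at this
  have hq1 := sum_swap_eq (w := w) hi1 hjb'
  rw [hs.sum_insert1_SmS h1, hs.w_val1 h1,
    hs.w_big (i := jb) (by omega) (by have := hs.hk; omega)] at hq1
  rw [hs.hq, hs.ht'] at *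
  have hk := hs.hk
  nlinarith [this, hq1]


omit hs in
theorem count_pos {S : Finset (Fin n)} {p : Fin n → Prop} [DecidablePred p]
    {i : Fin n} (hi : i ∈ S) (hp : p i) : 1 ≤ (S.filter p).card :=
  Finset.card_pos.mpr ⟨i, Finset.mem_filter.mpr ⟨hi, hp⟩⟩

-- unique representation of t-1 = k*(2k+3)
theorem uniq_t1 {a e : ℕ} (ha : a ≤ k) (h : a*(2*k+3) + e*(k+1) = k*(2*k+3)) :
    a = k ∧ e = 0 := by
  have hk := hs.hk
  obtain ⟨c, hc⟩ : ∃ c, a + c = k := ⟨k - a, by omega⟩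
  have h2 : e * (k+1) = c * (2*k+3) := by nlinarith [h, hc]
  rcases Nat.eq_zero_or_pos c with hc0 | hcpos
  · constructor
    · omega
    · have : e * (k+1) = 0 := by rw [h2, hc0]; ring
      have : k + 1 > 0 := by omega
      exact Nat.mul_eq_zero.mp ‹e * (k+1) = 0› |>.resolve_right (by omega)
  · exfalso
    rcases le_or_gt e (2*c) with he | he
    · nlinarith
    · nlinarith

-- every coalition of total weight exactly q is shift-minimal winning
theorem smwc_of_exact {S : Finset (Fin n)} (hWin : ∑ i ∈ S, w i = q) :
    IsSMWC q w S := by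
  constructor
  · rw [mwc_iff]
    refine ⟨le_of_eq hWin.symm, fun i hi hWe => ?_⟩
    have hsum := Finset.sum_erase_add S w hi
    have := hs.w_pos (i := i)
    unfold Win at hWe
    omega
  · intro i hi j hj _ hnd
    have hwlt : w j < w i := lt_of_not_dominates hnd
    rw [swap_set hi hj]
    have hq1 := sum_swap_eq (w := w) hi hj
    unfold Win
    omega

theorem sum_pair01 {i0 i1 : Fin n} (h0 : (i0:ℕ) = 0) (h1 : (i1:ℕ) = 1) :
    ∑ i ∈ ({i0, i1} : Finset (Fin n)), w i = 2*t + 1 + 2*(m*(k+1)) := by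
  have hne : i0 ≠ i1 := fun h => by rw [h, h1] at h0; omega
  rw [Finset.sum_pair hne, hs.w_val0 h0, hs.w_val1 h1]
  ring

theorem smwc_01 (hk2 : 2 ≤ k) {i0 i1 : Fin n} (h0 : (i0:ℕ) = 0) (h1 : (i1:ℕ) = 1) :
    IsSMWC q w ({i0, i1} : Finset (Fin n)) := by
  have hne : i0 ≠ i1 := fun h => by rw [h, h1] at h0; omega
  have hsum := hs.sum_pair01 h0 h1
  have ht1 := hs.ht'
  have htk : 2*k + 4 < t := by nlinarith
  constructor
  · rw [mwc_iff]
    constructor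
    · unfold Win; rw [hsum, hs.hq]; omega
    · intro i hi hWe
      have hiS : i ∈ ({i0, i1} : Finset (Fin n)) := hi
      have hsum2 := Finset.sum_erase_add ({i0, i1} : Finset (Fin n)) w hi
      have hwi : w i = t+1+m*(k+1) ∨ w i = t+m*(k+1) := by
        rcases Finset.mem_insert.mp hi with rfl | hmem
        · exact Or.inl (hs.w_val0 h0)
        · rw [Finset.mem_singleton.mp hmem]; exact Or.inr (hs.w_val1 h1)
      unfold Win at hWe
      rw [hs.hq] at hWe
      omega
  · intro i hi j hj _ hnd
    have hwlt : w j < w i := lt_of_not_dominates hnd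
    have hj2 : 2 ≤ (j:ℕ) := by
      rcases Nat.lt_or_ge (j:ℕ) 2 with hlt | hge
      · exfalso
        interval_cases hjv : (j:ℕ)
        · exact hj (by rw [show j = i0 from Fin.ext (by omega)]; simp)
        · exact hj (by rw [show j = i1 from Fin.ext (by omega)]; simp)
      · exact hge
    have hwj : w j ≤ 2*k+3 := hs.w_le_of_ge2 hj2
    have hwi : t + m*(k+1) ≤ w i := by
      rcases Finset.mem_insert.mp hi with rfl | hmem
      · rw [hs.w_val0 h0]; omega
      · rw [Finset.mem_singleton.mp hmem, hs.w_val1 h1]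
    rw [swap_set hi hj]
    have hq1 := sum_swap_eq (w := w) hi hj
    unfold Win
    rw [hs.hq]
    omega

theorem fb_lt_of_not_mem {S : Finset (Fin n)} {j : Fin n} (hj : j ∉ S)
    (h2 : 2 ≤ (j:ℕ)) (hlt : (j:ℕ) < k+2) : fb k S + 1 ≤ k := by
  have hjB : j ∈ BigS k n := hs.mem_BigS.mpr ⟨h2, hlt⟩
  have hsub : (S.filter fun i : Fin n => 2 ≤ (i:ℕ) ∧ (i:ℕ) < k+2) ⊆ (BigS k n).erase j := by
    intro x hx
    rw [Finset.mem_filter] at hx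
    exact Finset.mem_erase.mpr ⟨fun h => hj (h ▸ hx.1), hs.mem_BigS.mpr hx.2⟩
  have := Finset.card_le_card hsub
  rw [Finset.card_erase_of_mem hjB, card_BigS k hs.hkn] at this
  have := hs.hk
  unfold fb
  omega

set_option maxHeartbeats 1000000 in
theorem smwc_fam {S : Finset (Fin n)} {i1 : Fin n} (h1 : (i1:ℕ) = 1) (hmem : i1 ∈ S)
    (hf0 : f0 S = 0)
    (hD1 : t ≤ fb k S * (2*k+3) + fs k S * (k+1))
    (hD2 : fb k S * (2*k+3) + fs k S * (k+1) ≤ t + k) :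
    IsSMWC q w S := by
  have hf1 : f1 S = 1 := by rw [f1_eq S i1 h1, if_pos hmem]
  have hsum : ∑ i ∈ S, w i
      = (t + m*(k+1)) + (fb k S * (2*k+3) + fs k S * (k+1)) := by
    rw [wsum k m t w hs.hw S, hf0, hf1]; ring
  have ht1 := hs.ht'
  have hk := hs.hk
  have hkle : k ≤ k*(2*k+3) := Nat.le_mul_of_pos_right k (by omega)
  have hkle1 : 1*(2*k+3) ≤ k*(2*k+3) := Nat.mul_le_mul_right _ hk
  constructor
  · rw [mwc_iff]
    constructor
    · unfold Win; rw [hsum, hs.hq]; omega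
    · intro i hi hWe
      have hsum2 := Finset.sum_erase_add S w hi
      unfold Win at hWe
      rw [hs.hq] at hWe
      rcases Nat.lt_or_ge (i:ℕ) 2 with hv | hv
      · rcases Nat.lt_or_ge (i:ℕ) 1 with hv0 | hv1
        · have : 1 ≤ f0 S := by
            unfold f0; exact count_pos hi (by omega)
          omega
        · have hwi := hs.w_val1 (i := i) (by omega)
          omega
      · rcases Nat.lt_or_ge (i:ℕ) (k+2) with hvb | hvs
        · have hwi := hs.w_big hv hvb
          omega
        · have hwi := hs.w_sm hvs
          omega
  · intro i hi j hj hd hnd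
    have hwlt : w j < w i := lt_of_not_dominates hnd
    rw [swap_set hi hj]
    have hq1 := sum_swap_eq (w := w) hi hj
    unfold Win
    rw [hs.hq]
    -- classify i
    rcases Nat.lt_or_ge (i:ℕ) 2 with hv | hv
    · rcases Nat.lt_or_ge (i:ℕ) 1 with hv0 | hv1
      · have : 1 ≤ f0 S := by unfold f0; exact count_pos hi (by omega)
        omega
      · -- i is the val-1 player
        have hwi := hs.w_val1 (i := i) (by omega)
        -- classify j
        rcases Nat.lt_or_ge (j:ℕ) 2 with hjv | hjv
        · rcases Nat.lt_or_ge (j:ℕ) 1 with hjv0 | hjv1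
          · have hwj := hs.w_val0 (i := j) (by omega)
            omega
          · exfalso
            exact hj (by rw [show j = i from Fin.ext (by omega)]; exact hi)
        · rcases Nat.lt_or_ge (j:ℕ) (k+2) with hjb | hjs
          · -- j is big and not in S
            have hwj := hs.w_big hjv hjb
            have hfb := hs.fb_lt_of_not_mem hj hjv hjb
            rcases Nat.lt_or_ge k 2 with hk2 | hk2
            · -- k = 1
              have hk1 : k = 1 := by omega
              subst hk1
              have hm := hs.hm
              rcases Nat.eq_zero_or_pos m with hm0 | hm1
              · subst hm0
                have hfb0 : fb 1 S = 0 := by omega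
                rw [hfb0] at hsum hD1 hD2
                omega
              · omega
            · have : 2*(2*k+3) ≤ k*(2*k+3) := Nat.mul_le_mul_right _ hk2
              omega
          · have hwj := hs.w_sm hjs
            omega
    · rcases Nat.lt_or_ge (i:ℕ) (k+2) with hvb | hvs
      · -- i big
        have hwi := hs.w_big hv hvb
        -- j must be small
        rcases Nat.lt_or_ge (j:ℕ) 2 with hjv | hjv
        · rcases Nat.lt_or_ge (j:ℕ) 1 with hjv0 | hjv1
          · have hwj := hs.w_val0 (i := j) (by omega)
            omega
          · have hwj := hs.w_val1 (i := j) (by omega)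
            omega
        · rcases Nat.lt_or_ge (j:ℕ) (k+2) with hjb | hjs
          · have hwj := hs.w_big hjv hjb
            omega
          · have hwj := hs.w_sm hjs
            omega
      · -- i small: impossible since w j < w i = k+1
        have hwi := hs.w_sm hvs
        have := hs.w_ge (i := j)
        omega

theorem smwc1_bounds {S : Finset (Fin n)} {i0 i1 : Fin n} (h0 : (i0:ℕ) = 0)
    (h1 : (i1:ℕ) = 1) (hS : IsSMWC q w S) (hmem1 : i1 ∈ S) (hmem0 : i0 ∉ S) :
    t ≤ fb k S * (2*k+3) + fs k S * (k+1)
      ∧ fb k S * (2*k+3) + fs k S * (k+1) ≤ t + k := by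
  have hf0 : f0 S = 0 := by rw [f0_eq S i0 h0, if_neg hmem0]
  have hf1 : f1 S = 1 := by rw [f1_eq S i1 h1, if_pos hmem1]
  have hsum : ∑ i ∈ S, w i
      = (t + m*(k+1)) + (fb k S * (2*k+3) + fs k S * (k+1)) := by
    rw [wsum k m t w hs.hw S, hf0, hf1]; ring
  have ht1 := hs.ht'
  have hWin := hS.1.1
  unfold Win at hWin
  rw [hs.hq] at hWin
  have hD1 : t ≤ fb k S * (2*k+3) + fs k S * (k+1) := by omega
  refine ⟨hD1, ?_⟩
  -- there is a small player in S
  have hfs : 1 ≤ fs k S := by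
    by_contra hc
    have hfs0 : fs k S = 0 := by omega
    have hfb := fb_le k S hs.hkn
    have h1' : fb k S * (2*k+3) ≤ k*(2*k+3) := Nat.mul_le_mul_right _ hfb
    rw [hfs0] at hD1
    omega
  obtain ⟨i, hi⟩ := Finset.card_pos.mp (by unfold fs at hfs; omega :
    0 < (S.filter fun i : Fin n => k+2 ≤ (i:ℕ)).card)
  rw [Finset.mem_filter] at hi
  have hmwc := (mwc_iff.mp hS.1).2 i hi.1
  unfold Win at hmwc
  rw [hs.hq] at hmwc
  have hsum2 := Finset.sum_erase_add S w hi.1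
  have hwi := hs.w_sm hi.2
  omega

theorem smwc0_char {S : Finset (Fin n)} {i0 i1 : Fin n} (h0 : (i0:ℕ) = 0)
    (h1 : (i1:ℕ) = 1) (hS : IsSMWC q w S) (hmem0 : i0 ∈ S) :
    S = insert i0 (BigS k n) ∨ (2 ≤ k ∧ S = ({i0, i1} : Finset (Fin n))) := by
  have ht1 := hs.ht'
  have hk := hs.hk
  by_cases hmem1 : i1 ∈ S
  · right
    have hsub : ({i0, i1} : Finset (Fin n)) ⊆ S := by
      intro x hx
      rcases Finset.mem_insert.mp hx with rfl | hx
      · exact hmem0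
      · rw [Finset.mem_singleton.mp hx]; exact hmem1
    have hwin_pair : Win q w ({i0, i1} : Finset (Fin n)) := by
      unfold Win
      rw [hs.sum_pair01 h0 h1, hs.hq]
      omega
    have hSeq : S = ({i0, i1} : Finset (Fin n)) := by
      by_contra hne
      exact hS.1.2 _ (lt_of_le_of_ne hsub (fun h => hne h.symm)) hwin_pair
    refine ⟨?_, hSeq⟩
    -- show 2 ≤ k
    by_contra hk2
    have hk1 : k = 1 := by omega
    subst hk1
    have h2n : 2 < n := by have := hs.hn; omega
    set jb : Fin n := ⟨2, h2n⟩ with hjbdef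
    have hjbv : (jb:ℕ) = 2 := rfl
    have hjnot : jb ∉ S := by
      rw [hSeq]
      simp only [Finset.mem_insert, Finset.mem_singleton]
      rintro (h | h)
      · have := congrArg Fin.val h; rw [hjbv] at this; omega
      · have := congrArg Fin.val h; rw [hjbv] at this; omega
    have hd : Dominates q w i1 jb := by
      apply dominates_of_le
      rw [hs.w_val1 h1, hs.w_big (i := jb) (by omega) (by omega)]
      omega
    have hnd := hs.not_dom_b1 h1 hjbv
    have happ := hS.2 i1 hmem1 jb hjnot hd hnd
    apply happ
    rw [swap_set hmem1 hjnot, hSeq]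
    have hmp : i1 ∈ ({i0, i1} : Finset (Fin n)) := by simp
    have hjp : jb ∉ ({i0, i1} : Finset (Fin n)) := hSeq ▸ hjnot
    have hq1 := sum_swap_eq (w := w) hmp hjp
    rw [hs.sum_pair01 h0 h1, hs.w_val1 h1,
      hs.w_big (i := jb) (by omega) (by omega)] at hq1
    unfold Win
    rw [hs.hq]
    omega
  · left
    have hd : Dominates q w i0 i1 := by
      apply dominates_of_le
      rw [hs.w_val1 h1, hs.w_val0 h0]
      omega
    have hnd := hs.not_dom_10 h0 h1
    have happ := hS.2 i0 hmem0 i1 hmem1 hd hnd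
    rw [swap_set hmem0 hmem1] at happ
    unfold Win at happ
    have hq1 := sum_swap_eq (w := w) hmem0 hmem1
    rw [hs.w_val0 h0, hs.w_val1 h1] at hq1
    have hWin := hS.1.1
    unfold Win at hWin
    have hsumq : ∑ i ∈ S, w i = q := by omega
    have hf0 : f0 S = 1 := by rw [f0_eq S i0 h0, if_pos hmem0]
    have hf1 : f1 S = 0 := by rw [f1_eq S i1 h1, if_neg hmem1]
    have hsum : ∑ i ∈ S, w i
        = (t + 1 + m*(k+1)) + (fb k S * (2*k+3) + fs k S * (k+1)) := by
      rw [wsum k m t w hs.hw S, hf0, hf1]; ring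
    have hDt : fb k S * (2*k+3) + fs k S * (k+1) = k*(2*k+3) := by
      rw [hs.hq] at hsumq
      omega
    obtain ⟨hfbk, hfs0⟩ := hs.uniq_t1 (fb_le k S hs.hkn) hDt
    -- conclude S = insert i0 (BigS k n)
    have hBsub : (S.filter fun i : Fin n => 2 ≤ (i:ℕ) ∧ (i:ℕ) < k+2) = BigS k n := by
      apply Finset.eq_of_subset_of_card_le
      · intro x hx
        rw [Finset.mem_filter] at hx
        exact hs.mem_BigS.mpr hx.2
      · rw [card_BigS k hs.hkn]
        unfold fb at hfbk
        omega
    ext i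
    constructor
    · intro hi
      rcases Nat.lt_or_ge (i:ℕ) 2 with hv | hv
      · rcases Nat.lt_or_ge (i:ℕ) 1 with hv0 | hv1
        · have : i = i0 := Fin.ext (by omega)
          rw [this]; exact Finset.mem_insert_self _ _
        · exfalso
          exact hmem1 (by rwa [show i1 = i from Fin.ext (by omega)])
      · rcases Nat.lt_or_ge (i:ℕ) (k+2) with hvb | hvs
        · exact Finset.mem_insert_of_mem (hs.mem_BigS.mpr ⟨hv, hvb⟩)
        · exfalso
          have : 1 ≤ fs k S := by unfold fs; exact count_pos hi hvs
          omega
    · intro hi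
      rcases Finset.mem_insert.mp hi with rfl | hi
      · exact hmem0
      · rw [← hBsub] at hi
        exact Finset.mem_of_mem_filter i hi

theorem window_iff {a : ℕ} (ha : a ≤ k) (e : ℕ) :
    (t ≤ a*(2*k+3) + e*(k+1) ∧ a*(2*k+3) + e*(k+1) ≤ t+k) ↔ e = Ea k t a := by
  have ht1 := hs.ht'
  have hk := hs.hk
  have hAle : a*(2*k+3) ≤ k*(2*k+3) := Nat.mul_le_mul_right _ ha
  have hd : a*(2*k+3) + (t - a*(2*k+3)) = t := by omega
  have hEa : Ea k t a = ((t - a*(2*k+3)) + k)/(k+1) := rfl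
  obtain ⟨hz1, hz2⟩ := div_bounds ((t - a*(2*k+3)) + k) (k+1) (by omega)
  constructor
  · rintro ⟨hl, hr⟩
    rw [hEa]
    symm
    apply Nat.div_eq_of_lt_le
    · omega
    · have : (e+1)*(k+1) = e*(k+1) + (k+1) := by ring
      omega
  · intro he
    rw [hEa] at he
    subst he
    have hexp : (((t - a*(2*k+3)) + k)/(k+1) + 1)*(k+1)
        = (((t - a*(2*k+3)) + k)/(k+1))*(k+1) + (k+1) := by ring
    omega

omit hs in
theorem f1_eq_zero {S : Finset (Fin n)} (h : ∀ x ∈ S, (x:ℕ) ≠ 1) : f1 S = 0 := by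
  unfold f1
  rw [Finset.card_eq_zero, Finset.filter_eq_empty_iff]
  exact h

omit hs in
theorem f0_eq_zero {S : Finset (Fin n)} (h : ∀ x ∈ S, (x:ℕ) ≠ 0) : f0 S = 0 := by
  unfold f0
  rw [Finset.card_eq_zero, Finset.filter_eq_empty_iff]
  exact h

theorem filter_big_insert {i1 : Fin n} (h1 : (i1:ℕ) = 1) {X Y : Finset (Fin n)}
    (hX : X ⊆ BigS k n) (hY : Y ⊆ SmS k n) :
    ((insert i1 (X ∪ Y)).filter fun i : Fin n => 2 ≤ (i:ℕ) ∧ (i:ℕ) < k+2) = X := by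
  ext x
  simp only [Finset.mem_filter, Finset.mem_insert, Finset.mem_union]
  constructor
  · rintro ⟨(rfl | hx | hx), hp⟩
    · omega
    · exact hx
    · have := hs.mem_SmS.mp (hY hx)
      omega
  · intro hx
    have := hs.mem_BigS.mp (hX hx)
    exact ⟨Or.inr (Or.inl hx), this⟩

theorem filter_sm_insert {i1 : Fin n} (h1 : (i1:ℕ) = 1) {X Y : Finset (Fin n)}
    (hX : X ⊆ BigS k n) (hY : Y ⊆ SmS k n) :
    ((insert i1 (X ∪ Y)).filter fun i : Fin n => k+2 ≤ (i:ℕ)) = Y := by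
  ext x
  simp only [Finset.mem_filter, Finset.mem_insert, Finset.mem_union]
  constructor
  · rintro ⟨(rfl | hx | hx), hp⟩
    · exfalso; have := hs.hk; omega
    · have := hs.mem_BigS.mp (hX hx)
      omega
    · exact hx
  · intro hx
    have := hs.mem_SmS.mp (hY hx)
    exact ⟨Or.inr (Or.inr hx), this⟩

set_option maxHeartbeats 1000000 in
theorem card_fiber {i0 i1 : Fin n} (h0 : (i0:ℕ) = 0) (h1 : (i1:ℕ) = 1) {a : ℕ}
    (ha : a ≤ k) :
    (Finset.univ.filter fun S : Finset (Fin n) =>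
      ((IsSMWC q w S ∧ i1 ∈ S) ∧ i0 ∉ S) ∧ fb k S = a).card
    = Nat.choose k a * Nat.choose (2*k+1+m) (Ea k t a) := by
  have hcard : ((BigS k n).powersetCard a ×ˢ (SmS k n).powersetCard (Ea k t a)).card
      = Nat.choose k a * Nat.choose (2*k+1+m) (Ea k t a) := by
    rw [Finset.card_product, Finset.card_powersetCard, Finset.card_powersetCard,
      card_BigS k hs.hkn, card_SmS k hs.hkn, hs.hsm]
  rw [← hcard]
  apply Finset.card_nbij'
    (i := fun S => (S.filter (fun i : Fin n => 2 ≤ (i:ℕ) ∧ (i:ℕ) < k+2),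
                    S.filter (fun i : Fin n => k+2 ≤ (i:ℕ))))
    (j := fun p => insert i1 (p.1 ∪ p.2))
  · -- forward membership
    intro S hS
    simp only [Finset.mem_coe, Finset.mem_filter, Finset.mem_univ, true_and] at hS
    obtain ⟨⟨⟨hsmwc, hm1⟩, hm0⟩, hfb⟩ := hS
    obtain ⟨hD1, hD2⟩ := hs.smwc1_bounds h0 h1 hsmwc hm1 hm0
    have hfs : fs k S = Ea k t a := by
      have := (hs.window_iff (a := fb k S) (fb_le k S hs.hkn) (fs k S)).mp ⟨hD1, hD2⟩
      rw [hfb] at this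
      exact this
    rw [Finset.mem_coe, Finset.mem_product]
    constructor
    · rw [Finset.mem_powersetCard]
      refine ⟨fun x hx => ?_, hfb⟩
      rw [Finset.mem_filter] at hx
      exact hs.mem_BigS.mpr hx.2
    · rw [Finset.mem_powersetCard]
      refine ⟨fun x hx => ?_, hfs⟩
      rw [Finset.mem_filter] at hx
      exact hs.mem_SmS.mpr hx.2
  · -- backward membership
    intro p hp
    rw [Finset.mem_coe, Finset.mem_product, Finset.mem_powersetCard, Finset.mem_powersetCard] at hp
    obtain ⟨⟨hX, hXc⟩, ⟨hY, hYc⟩⟩ := hp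
    have hfbS : fb k (insert i1 (p.1 ∪ p.2)) = a := by
      unfold fb; rw [hs.filter_big_insert h1 hX hY, hXc]
    have hfsS : fs k (insert i1 (p.1 ∪ p.2)) = Ea k t a := by
      unfold fs; rw [hs.filter_sm_insert h1 hX hY, hYc]
    have hm1 : i1 ∈ insert i1 (p.1 ∪ p.2) := Finset.mem_insert_self _ _
    have hm0 : i0 ∉ insert i1 (p.1 ∪ p.2) := by
      simp only [Finset.mem_insert, Finset.mem_union]
      rintro (h | h | h)
      · have := congrArg Fin.val h; omega
      · have := hs.mem_BigS.mp (hX h); omega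
      · have := hs.mem_SmS.mp (hY h); have := hs.hk; omega
    have hf0 : f0 (insert i1 (p.1 ∪ p.2)) = 0 := by
      apply f0_eq_zero
      intro x hx
      simp only [Finset.mem_insert, Finset.mem_union] at hx
      rcases hx with rfl | h | h
      · omega
      · have := hs.mem_BigS.mp (hX h); omega
      · have := hs.mem_SmS.mp (hY h); have := hs.hk; omega
    obtain ⟨hD1, hD2⟩ := (hs.window_iff ha (Ea k t a)).mpr rfl
    have hD1' : t ≤ fb k (insert i1 (p.1 ∪ p.2)) * (2*k+3)
        + fs k (insert i1 (p.1 ∪ p.2)) * (k+1) := by rw [hfbS, hfsS]; exact hD1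
    have hD2' : fb k (insert i1 (p.1 ∪ p.2)) * (2*k+3)
        + fs k (insert i1 (p.1 ∪ p.2)) * (k+1) ≤ t + k := by rw [hfbS, hfsS]; exact hD2
    simp only [Finset.mem_coe, Finset.mem_filter, Finset.mem_univ, true_and]
    exact ⟨⟨⟨hs.smwc_fam h1 hm1 hf0 hD1' hD2', hm1⟩, hm0⟩, hfbS⟩
  · -- left inverse
    intro S hS
    simp only [Finset.mem_coe, Finset.mem_filter, Finset.mem_univ, true_and] at hS
    obtain ⟨⟨⟨hsmwc, hm1⟩, hm0⟩, hfb⟩ := hS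
    ext x
    simp only [Finset.mem_insert, Finset.mem_union, Finset.mem_filter]
    constructor
    · rintro (rfl | ⟨hx, _⟩ | ⟨hx, _⟩) <;> first | exact hm1 | exact hx
    · intro hx
      rcases Nat.lt_or_ge (x:ℕ) 2 with hv | hv
      · rcases Nat.lt_or_ge (x:ℕ) 1 with hv0 | hv1
        · exfalso
          exact hm0 (show i0 ∈ S by rwa [show i0 = x from Fin.ext (by omega)])
        · exact Or.inl (Fin.ext (by omega))
      · rcases Nat.lt_or_ge (x:ℕ) (k+2) with hvb | hvs
        · exact Or.inr (Or.inl ⟨hx, hv, hvb⟩)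
        · exact Or.inr (Or.inr ⟨hx, hvs⟩)
  · -- right inverse
    intro p hp
    rw [Finset.mem_coe, Finset.mem_product, Finset.mem_powersetCard, Finset.mem_powersetCard] at hp
    obtain ⟨⟨hX, _⟩, ⟨hY, _⟩⟩ := hp
    have e1 := hs.filter_big_insert h1 hX hY
    have e2 := hs.filter_sm_insert h1 hX hY
    exact Prod.ext e1 e2

theorem shiftIdx0 {i0 i1 : Fin n} (h0 : (i0:ℕ) = 0) (h1 : (i1:ℕ) = 1) :
    ShiftIdx q w i0 = if k = 1 then 1 else 2 := by
  unfold ShiftIdx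
  have hset : (Finset.univ.filter fun S : Finset (Fin n) => IsSMWC q w S ∧ i0 ∈ S)
      = if k = 1 then {insert i0 (BigS k n)}
        else {insert i0 (BigS k n), ({i0, i1} : Finset (Fin n))} := by
    ext S
    simp only [Finset.mem_coe, Finset.mem_filter, Finset.mem_univ, true_and]
    split_ifs with hk1
    · simp only [Finset.mem_singleton]
      constructor
      · rintro ⟨hS, hm0⟩
        rcases hs.smwc0_char h0 h1 hS hm0 with h | ⟨hk2, _⟩
        · exact h
        · omega
      · rintro rfl
        exact ⟨hs.smwc_of_exact (hs.sum_insert0_BigS h0), Finset.mem_insert_self _ _⟩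
    · have hk2 : 2 ≤ k := by have := hs.hk; omega
      simp only [Finset.mem_insert, Finset.mem_singleton]
      constructor
      · rintro ⟨hS, hm0⟩
        rcases hs.smwc0_char h0 h1 hS hm0 with h | ⟨_, h⟩
        · exact Or.inl h
        · exact Or.inr h
      · rintro (rfl | rfl)
        · exact ⟨hs.smwc_of_exact (hs.sum_insert0_BigS h0), Finset.mem_insert_self _ _⟩
        · exact ⟨hs.smwc_01 hk2 h0 h1, Finset.mem_insert_self _ _⟩
  rw [hset]
  split_ifs
  · exact Finset.card_singleton _
  · rw [Finset.card_insert_of_notMem, Finset.card_singleton]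
    have h2n : 2 < n := by have := hs.hn; have := hs.hk; omega
    intro hmem
    rw [Finset.mem_singleton] at hmem
    have hv : ((⟨2, h2n⟩ : Fin n) : ℕ) = 2 := rfl
    have hjb : (⟨2, h2n⟩ : Fin n) ∈ insert i0 (BigS k n) :=
      Finset.mem_insert_of_mem (hs.mem_BigS.mpr (by rw [hv]; have := hs.hk; omega))
    rw [hmem] at hjb
    rcases Finset.mem_insert.mp hjb with h | h
    · have := congrArg Fin.val h; simp at this; omega
    · rw [Finset.mem_singleton] at h
      have := congrArg Fin.val h; simp at this; omega

theorem shiftIdx1 {i0 i1 : Fin n} (h0 : (i0:ℕ) = 0) (h1 : (i1:ℕ) = 1) :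
    ShiftIdx q w i1 = (if k = 1 then 0 else 1)
      + ∑ a ∈ Finset.range (k+1), Nat.choose k a * Nat.choose (2*k+1+m) (Ea k t a) := by
  unfold ShiftIdx
  rw [← Finset.card_filter_add_card_filter_not
    (p := fun S : Finset (Fin n) => i0 ∈ S), Finset.filter_filter, Finset.filter_filter]
  congr 1
  · -- coalitions containing both i0 and i1
    have hset : (Finset.univ.filter fun S : Finset (Fin n) =>
        (IsSMWC q w S ∧ i1 ∈ S) ∧ i0 ∈ S)
        = if k = 1 then (∅ : Finset (Finset (Fin n)))
          else {({i0, i1} : Finset (Fin n))} := by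
      ext S
      simp only [Finset.mem_coe, Finset.mem_filter, Finset.mem_univ, true_and]
      split_ifs with hk1
      · simp only [Finset.notMem_empty, iff_false]
        rintro ⟨⟨hS, hm1⟩, hm0⟩
        rcases hs.smwc0_char h0 h1 hS hm0 with h | ⟨hk2, _⟩
        · rw [h] at hm1
          rcases Finset.mem_insert.mp hm1 with hh | hh
          · have := congrArg Fin.val hh; omega
          · have := hs.mem_BigS.mp hh; omega
        · omega
      · have hk2 : 2 ≤ k := by have := hs.hk; omega
        simp only [Finset.mem_singleton]
        constructor
        · rintro ⟨⟨hS, hm1⟩, hm0⟩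
          rcases hs.smwc0_char h0 h1 hS hm0 with h | ⟨_, h⟩
          · rw [h] at hm1
            rcases Finset.mem_insert.mp hm1 with hh | hh
            · exact absurd (congrArg Fin.val hh) (by omega)
            · exact absurd (hs.mem_BigS.mp hh) (by omega)
          · exact h
        · rintro rfl
          refine ⟨⟨hs.smwc_01 hk2 h0 h1, ?_⟩, Finset.mem_insert_self _ _⟩
          exact Finset.mem_insert_of_mem (Finset.mem_singleton_self _)
    rw [hset]
    split_ifs
    · exact Finset.card_empty
    · exact Finset.card_singleton _
  · -- coalitions containing i1 but not i0
    rw [Finset.card_eq_sum_card_fiberwise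
      (f := fun S : Finset (Fin n) => fb k S) (t := Finset.range (k+1))
      (fun S _ => Finset.mem_range.mpr
        (by show fb k S < k+1; have := fb_le k S hs.hkn; omega))]
    apply Finset.sum_congr rfl
    intro a ha
    rw [Finset.mem_range] at ha
    rw [Finset.filter_filter]
    exact hs.card_fiber h0 h1 (by omega)

theorem sum_subset_P {X : Finset (Fin n)} (hX : X ⊆ Pset n) :
    ∑ i ∈ X, w i = fb k X * (2*k+3) + fs k X * (k+1) := by
  have hf0 : f0 X = 0 := f0_eq_zero (fun x hx => by have := mem_Pset.mp (hX hx); omega)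
  have hf1 : f1 X = 0 := f1_eq_zero (fun x hx => by have := mem_Pset.mp (hX hx); omega)
  rw [wsum k m t w hs.hw X, hf0, hf1]
  ring

theorem sum_P_le {X : Finset (Fin n)} (hX : X ⊆ Pset n) :
    ∑ i ∈ X, w i + 1 ≤ 2*t + m*(k+1) := by
  have h := hs.sum_subset_P hX
  have h1 : fb k X * (2*k+3) ≤ k * (2*k+3) := Nat.mul_le_mul_right _ (fb_le k X hs.hkn)
  have h2 : fs k X * (k+1) ≤ (2*k+1+m) * (k+1) := by
    apply Nat.mul_le_mul_right
    rw [← hs.hsm]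
    exact fs_le k X hs.hkn
  have h3 : (2*k+1+m)*(k+1) = t + m*(k+1) := by rw [hs.ht]; ring
  have ht1 := hs.ht'
  omega

theorem filter_sum_t1 :
    ((Pset n).powerset.filter fun X : Finset (Fin n) => ∑ i ∈ X, w i + 1 = t)
      = {BigS k n} := by
  ext X
  simp only [Finset.mem_coe, Finset.mem_filter, Finset.mem_powerset, Finset.mem_singleton]
  constructor
  · rintro ⟨hX, hsum⟩
    have hsx := hs.sum_subset_P hX
    have ht1 := hs.ht'
    have hD : fb k X * (2*k+3) + fs k X * (k+1) = k*(2*k+3) := by omega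
    obtain ⟨hfb, hfs⟩ := hs.uniq_t1 (fb_le k X hs.hkn) hD
    have hBsub : (X.filter fun i : Fin n => 2 ≤ (i:ℕ) ∧ (i:ℕ) < k+2) = BigS k n := by
      apply Finset.eq_of_subset_of_card_le
      · intro x hx
        rw [Finset.mem_filter] at hx
        exact hs.mem_BigS.mpr hx.2
      · rw [card_BigS k hs.hkn]
        unfold fb at hfb
        omega
    ext x
    constructor
    · intro hx
      have hv := mem_Pset.mp (hX hx)
      rcases Nat.lt_or_ge (x:ℕ) (k+2) with hvb | hvs
      · rw [← hBsub]
        exact Finset.mem_filter.mpr ⟨hx, hv, hvb⟩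
      · exfalso
        have : 1 ≤ fs k X := by unfold fs; exact count_pos hx hvs
        omega
    · intro hx
      rw [← hBsub] at hx
      exact Finset.mem_of_mem_filter x hx
  · rintro rfl
    refine ⟨fun x hx => mem_Pset.mpr (hs.mem_BigS.mp hx).1, ?_⟩
    rw [hs.sum_BigS]
    have := hs.ht'
    omega

theorem bz0 {i0 i1 : Fin n} (h0 : (i0:ℕ) = 0) (h1 : (i1:ℕ) = 1) :
    Bz q w i0 = 2^(n-2) + 1 := by
  have hne10 : i1 ≠ i0 := fun h => by have := congrArg Fin.val h; omega
  unfold Bz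
  rw [← Finset.card_filter_add_card_filter_not
    (p := fun S : Finset (Fin n) => i1 ∈ S), Finset.filter_filter, Finset.filter_filter]
  have hA : (Finset.univ.filter fun S : Finset (Fin n) =>
      (i0 ∈ S ∧ Win q w S ∧ ¬ Win q w (S.erase i0)) ∧ i1 ∈ S).card
      = ((Pset n).powerset.filter fun X : Finset (Fin n) => ∑ i ∈ X, w i < t).card := by
    apply Finset.card_nbij' (i := fun S => (S.erase i0).erase i1)
      (j := fun X => insert i0 (insert i1 X))
    · intro S hS
      simp only [Finset.mem_coe, Finset.mem_filter, Finset.mem_univ, true_and] at hS ⊢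
      obtain ⟨⟨hm0, hWin, hWe⟩, hm1⟩ := hS
      constructor
      · rw [Finset.mem_powerset]
        intro x hx
        rw [Finset.mem_erase, Finset.mem_erase] at hx
        obtain ⟨hx1, hx0, hxS⟩ := hx
        apply mem_Pset.mpr
        have hv0 : (x:ℕ) ≠ 0 := fun h => hx0 (Fin.ext (by omega))
        have hv1 : (x:ℕ) ≠ 1 := fun h => hx1 (Fin.ext (by omega))
        omega
      · have hm1' : i1 ∈ S.erase i0 := Finset.mem_erase.mpr ⟨hne10, hm1⟩
        have e1 := Finset.sum_erase_add (S.erase i0) w hm1'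
        rw [hs.w_val1 h1] at e1
        unfold Win at hWe
        rw [hs.hq] at hWe
        omega
    · intro X hX
      simp only [Finset.mem_coe, Finset.mem_filter, Finset.mem_powerset, Finset.mem_univ, true_and] at hX ⊢
      obtain ⟨hXP, hXlt⟩ := hX
      have hi1X : i1 ∉ X := fun h => by have := mem_Pset.mp (hXP h); omega
      have hi0X : i0 ∉ insert i1 X := by
        rw [Finset.mem_insert]
        rintro (h | h)
        · exact hne10 h.symm
        · have := mem_Pset.mp (hXP h); omega
      have hsum : ∑ i ∈ insert i0 (insert i1 X), w i
          = (t+1+m*(k+1)) + ((t+m*(k+1)) + ∑ i ∈ X, w i) := by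
        rw [Finset.sum_insert hi0X, Finset.sum_insert hi1X, hs.w_val0 h0, hs.w_val1 h1]
      refine ⟨⟨Finset.mem_insert_self _ _, ?_, ?_⟩,
        Finset.mem_insert_of_mem (Finset.mem_insert_self _ _)⟩
      · unfold Win
        rw [hsum, hs.hq]
        omega
      · rw [Finset.erase_insert hi0X]
        unfold Win
        rw [Finset.sum_insert hi1X, hs.w_val1 h1, hs.hq]
        omega
    · intro S hS
      simp only [Finset.mem_coe, Finset.mem_filter, Finset.mem_univ, true_and] at hS
      obtain ⟨⟨hm0, _, _⟩, hm1⟩ := hS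
      have hm1' : i1 ∈ S.erase i0 := Finset.mem_erase.mpr ⟨hne10, hm1⟩
      beta_reduce
      rw [Finset.insert_erase hm1', Finset.insert_erase hm0]
    · intro X hX
      simp only [Finset.mem_coe, Finset.mem_filter, Finset.mem_powerset] at hX
      have hi1X : i1 ∉ X := fun h => by have := mem_Pset.mp (hX.1 h); omega
      have hi0X : i0 ∉ insert i1 X := by
        rw [Finset.mem_insert]
        rintro (h | h)
        · exact hne10 h.symm
        · have := mem_Pset.mp (hX.1 h); omega
      beta_reduce
      rw [Finset.erase_insert hi0X, Finset.erase_insert hi1X]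
  have hB : (Finset.univ.filter fun S : Finset (Fin n) =>
      (i0 ∈ S ∧ Win q w S ∧ ¬ Win q w (S.erase i0)) ∧ ¬ i1 ∈ S).card
      = ((Pset n).powerset.filter fun X : Finset (Fin n) => t ≤ ∑ i ∈ X, w i + 1).card := by
    apply Finset.card_nbij' (i := fun S => S.erase i0) (j := fun X => insert i0 X)
    · intro S hS
      simp only [Finset.mem_coe, Finset.mem_filter, Finset.mem_univ, true_and] at hS ⊢
      obtain ⟨⟨hm0, hWin, hWe⟩, hm1⟩ := hS
      constructor
      · rw [Finset.mem_powerset]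
        intro x hx
        rw [Finset.mem_erase] at hx
        obtain ⟨hx0, hxS⟩ := hx
        apply mem_Pset.mpr
        have hv0 : (x:ℕ) ≠ 0 := fun h => hx0 (Fin.ext (by omega))
        have hv1 : (x:ℕ) ≠ 1 := fun h => hm1 (by rwa [show i1 = x from Fin.ext (by omega)])
        omega
      · have e1 := Finset.sum_erase_add S w hm0
        rw [hs.w_val0 h0] at e1
        unfold Win at hWin
        rw [hs.hq] at hWin
        omega
    · intro X hX
      simp only [Finset.mem_coe, Finset.mem_filter, Finset.mem_powerset, Finset.mem_univ, true_and] at hX ⊢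
      obtain ⟨hXP, hXge⟩ := hX
      have hi0X : i0 ∉ X := fun h => by have := mem_Pset.mp (hXP h); omega
      have hble := hs.sum_P_le hXP
      refine ⟨⟨Finset.mem_insert_self _ _, ?_, ?_⟩, ?_⟩
      · unfold Win
        rw [Finset.sum_insert hi0X, hs.w_val0 h0, hs.hq]
        omega
      · rw [Finset.erase_insert hi0X]
        unfold Win
        rw [hs.hq]
        omega
      · rw [Finset.mem_insert]
        rintro (h | h)
        · exact hne10 h
        · have := mem_Pset.mp (hXP h); omega
    · intro S hS
      simp only [Finset.mem_coe, Finset.mem_filter, Finset.mem_univ, true_and] at hS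
      exact Finset.insert_erase hS.1.1
    · intro X hX
      simp only [Finset.mem_coe, Finset.mem_filter, Finset.mem_powerset] at hX
      have hi0X : i0 ∉ X := fun h => by have := mem_Pset.mp (hX.1 h); omega
      exact Finset.erase_insert hi0X
  rw [hA, hB]
  have hunion := Finset.card_union_add_card_inter
    ((Pset n).powerset.filter fun X : Finset (Fin n) => ∑ i ∈ X, w i < t)
    ((Pset n).powerset.filter fun X : Finset (Fin n) => t ≤ ∑ i ∈ X, w i + 1)
  rw [Finset.filter_union_right, ← Finset.filter_and] at hunion
  have huniv : ((Pset n).powerset.filter fun X : Finset (Fin n) =>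
      (∑ i ∈ X, w i < t ∨ t ≤ ∑ i ∈ X, w i + 1)) = (Pset n).powerset :=
    Finset.filter_true_of_mem (fun X _ => by omega)
  have hcongr : ((Pset n).powerset.filter fun X : Finset (Fin n) =>
      (∑ i ∈ X, w i < t ∧ t ≤ ∑ i ∈ X, w i + 1))
      = ((Pset n).powerset.filter fun X : Finset (Fin n) => ∑ i ∈ X, w i + 1 = t) :=
    Finset.filter_congr (fun X _ => by omega)
  rw [huniv, hcongr] at hunion
  rw [hs.filter_sum_t1, Finset.card_singleton, Finset.card_powerset,
    card_Pset (by have := hs.hn; have := hs.hk; omega)] at hunion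
  omega

theorem bz1 {i0 i1 : Fin n} (h0 : (i0:ℕ) = 0) (h1 : (i1:ℕ) = 1) :
    Bz q w i1 = 2^(n-2) - 1 := by
  have hne10 : i1 ≠ i0 := fun h => by have := congrArg Fin.val h; omega
  unfold Bz
  rw [← Finset.card_filter_add_card_filter_not
    (p := fun S : Finset (Fin n) => i0 ∈ S), Finset.filter_filter, Finset.filter_filter]
  have hA : (Finset.univ.filter fun S : Finset (Fin n) =>
      (i1 ∈ S ∧ Win q w S ∧ ¬ Win q w (S.erase i1)) ∧ i0 ∈ S).card
      = ((Pset n).powerset.filter fun X : Finset (Fin n) => ∑ i ∈ X, w i + 2 ≤ t).card := by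
    apply Finset.card_nbij' (i := fun S => (S.erase i1).erase i0)
      (j := fun X => insert i1 (insert i0 X))
    · intro S hS
      simp only [Finset.mem_coe, Finset.mem_filter, Finset.mem_univ, true_and] at hS ⊢
      obtain ⟨⟨hm1, hWin, hWe⟩, hm0⟩ := hS
      constructor
      · rw [Finset.mem_powerset]
        intro x hx
        rw [Finset.mem_erase, Finset.mem_erase] at hx
        obtain ⟨hx0, hx1, hxS⟩ := hx
        apply mem_Pset.mpr
        have hv0 : (x:ℕ) ≠ 0 := fun h => hx0 (Fin.ext (by omega))
        have hv1 : (x:ℕ) ≠ 1 := fun h => hx1 (Fin.ext (by omega))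
        omega
      · have hm0' : i0 ∈ S.erase i1 := Finset.mem_erase.mpr ⟨fun h => hne10 h.symm, hm0⟩
        have e1 := Finset.sum_erase_add (S.erase i1) w hm0'
        rw [hs.w_val0 h0] at e1
        unfold Win at hWe
        rw [hs.hq] at hWe
        omega
    · intro X hX
      simp only [Finset.mem_coe, Finset.mem_filter, Finset.mem_powerset, Finset.mem_univ, true_and] at hX ⊢
      obtain ⟨hXP, hXlt⟩ := hX
      have hi0X : i0 ∉ X := fun h => by have := mem_Pset.mp (hXP h); omega
      have hi1X : i1 ∉ insert i0 X := by
        rw [Finset.mem_insert]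
        rintro (h | h)
        · exact hne10 h
        · have := mem_Pset.mp (hXP h); omega
      have hsum : ∑ i ∈ insert i1 (insert i0 X), w i
          = (t+m*(k+1)) + ((t+1+m*(k+1)) + ∑ i ∈ X, w i) := by
        rw [Finset.sum_insert hi1X, Finset.sum_insert hi0X, hs.w_val0 h0, hs.w_val1 h1]
      refine ⟨⟨Finset.mem_insert_self _ _, ?_, ?_⟩,
        Finset.mem_insert_of_mem (Finset.mem_insert_self _ _)⟩
      · unfold Win
        rw [hsum, hs.hq]
        omega
      · rw [Finset.erase_insert hi1X]
        unfold Win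
        rw [Finset.sum_insert hi0X, hs.w_val0 h0, hs.hq]
        omega
    · intro S hS
      simp only [Finset.mem_coe, Finset.mem_filter, Finset.mem_univ, true_and] at hS
      obtain ⟨⟨hm1, _, _⟩, hm0⟩ := hS
      have hm0' : i0 ∈ S.erase i1 := Finset.mem_erase.mpr ⟨fun h => hne10 h.symm, hm0⟩
      beta_reduce
      rw [Finset.insert_erase hm0', Finset.insert_erase hm1]
    · intro X hX
      simp only [Finset.mem_coe, Finset.mem_filter, Finset.mem_powerset] at hX
      have hi0X : i0 ∉ X := fun h => by have := mem_Pset.mp (hX.1 h); omega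
      have hi1X : i1 ∉ insert i0 X := by
        rw [Finset.mem_insert]
        rintro (h | h)
        · exact hne10 h
        · have := mem_Pset.mp (hX.1 h); omega
      beta_reduce
      rw [Finset.erase_insert hi1X, Finset.erase_insert hi0X]
  have hB : (Finset.univ.filter fun S : Finset (Fin n) =>
      (i1 ∈ S ∧ Win q w S ∧ ¬ Win q w (S.erase i1)) ∧ ¬ i0 ∈ S).card
      = ((Pset n).powerset.filter fun X : Finset (Fin n) => t ≤ ∑ i ∈ X, w i).card := by
    apply Finset.card_nbij' (i := fun S => S.erase i1) (j := fun X => insert i1 X)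
    · intro S hS
      simp only [Finset.mem_coe, Finset.mem_filter, Finset.mem_univ, true_and] at hS ⊢
      obtain ⟨⟨hm1, hWin, hWe⟩, hm0⟩ := hS
      constructor
      · rw [Finset.mem_powerset]
        intro x hx
        rw [Finset.mem_erase] at hx
        obtain ⟨hx1, hxS⟩ := hx
        apply mem_Pset.mpr
        have hv0 : (x:ℕ) ≠ 0 := fun h => hm0 (by rwa [show i0 = x from Fin.ext (by omega)])
        have hv1 : (x:ℕ) ≠ 1 := fun h => hx1 (Fin.ext (by omega))
        omega
      · have e1 := Finset.sum_erase_add S w hm1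
        rw [hs.w_val1 h1] at e1
        unfold Win at hWin
        rw [hs.hq] at hWin
        omega
    · intro X hX
      simp only [Finset.mem_coe, Finset.mem_filter, Finset.mem_powerset, Finset.mem_univ, true_and] at hX ⊢
      obtain ⟨hXP, hXge⟩ := hX
      have hi1X : i1 ∉ X := fun h => by have := mem_Pset.mp (hXP h); omega
      have hble := hs.sum_P_le hXP
      refine ⟨⟨Finset.mem_insert_self _ _, ?_, ?_⟩, ?_⟩
      · unfold Win
        rw [Finset.sum_insert hi1X, hs.w_val1 h1, hs.hq]
        omega
      · rw [Finset.erase_insert hi1X]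
        unfold Win
        rw [hs.hq]
        omega
      · rw [Finset.mem_insert]
        rintro (h | h)
        · exact hne10 h.symm
        · have := mem_Pset.mp (hXP h); omega
    · intro S hS
      simp only [Finset.mem_coe, Finset.mem_filter, Finset.mem_univ, true_and] at hS
      exact Finset.insert_erase hS.1.1
    · intro X hX
      simp only [Finset.mem_coe, Finset.mem_filter, Finset.mem_powerset] at hX
      have hi1X : i1 ∉ X := fun h => by have := mem_Pset.mp (hX.1 h); omega
      exact Finset.erase_insert hi1X
  rw [hA, hB]
  have hsplit := Finset.card_filter_add_card_filter_not
    (s := (Pset n).powerset) (p := fun X : Finset (Fin n) => ∑ i ∈ X, w i + 1 = t)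
  have hdisj : Disjoint
      ((Pset n).powerset.filter fun X : Finset (Fin n) => ∑ i ∈ X, w i + 2 ≤ t)
      ((Pset n).powerset.filter fun X : Finset (Fin n) => t ≤ ∑ i ∈ X, w i) := by
    rw [Finset.disjoint_left]
    intro X hX1 hX2
    rw [Finset.mem_filter] at hX1 hX2
    omega
  have hcup := Finset.card_union_of_disjoint hdisj
  rw [Finset.filter_union_right] at hcup
  have hcongr : ((Pset n).powerset.filter fun X : Finset (Fin n) =>
      (∑ i ∈ X, w i + 2 ≤ t ∨ t ≤ ∑ i ∈ X, w i))
      = ((Pset n).powerset.filter fun X : Finset (Fin n) => ¬ (∑ i ∈ X, w i + 1 = t)) :=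
    Finset.filter_congr (fun X _ => by omega)
  rw [hcongr] at hcup
  rw [hs.filter_sum_t1, Finset.card_singleton, Finset.card_powerset,
    card_Pset (by have := hs.hn; have := hs.hk; omega)] at hsplit
  have hpow : 1 ≤ 2^(n-2) := Nat.one_le_two_pow
  omega

end Setup



/-- for the weighted game
`[2t+m(k+1); t+1+m(k+1), t+m(k+1), 2k+3 (k times), k+1 (2k+1+m times)]`
with `k ≥ 1`, `m ∈ {0,1,2}`, `n = 3k+3+m` and `t = 2k²+3k+1`, one has
`Bz^r_1 = 2^{n-2}+1`, `Bz^r_2 = 2^{n-2}-1`, `S^r_1 = 1` if `k = 1`,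
`S^r_1 = 2` if `k > 1`, and
`S^r_2 = -1 + S^r_1 + Σ_{a=0}^{k} C(k,a)·C(2k+1+m, ⌈(t-a(2k+3))/(k+1)⌉)`. -/
theorem banzhaf_shift_of_parametric_game (k m : ℕ) (hk : 1 ≤ k) (hm : m ≤ 2)
    (n t q : ℕ) (hn : n = 3 * k + 3 + m) (ht : t = 2 * k ^ 2 + 3 * k + 1)
    (hq : q = 2 * t + m * (k + 1)) (w : Fin n → ℕ)
    (hw : ∀ i : Fin n, w i =
      if (i : ℕ) = 0 then t + 1 + m * (k + 1)
      else if (i : ℕ) = 1 then t + m * (k + 1)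
      else if (i : ℕ) < k + 2 then 2 * k + 3
      else k + 1) :
    Bz q w ⟨0, by omega⟩ = 2 ^ (n - 2) + 1 ∧
    Bz q w ⟨1, by omega⟩ = 2 ^ (n - 2) - 1 ∧
    (k = 1 → ShiftIdx q w ⟨0, by omega⟩ = 1) ∧
    (1 < k → ShiftIdx q w ⟨0, by omega⟩ = 2) ∧
    ShiftIdx q w ⟨1, by omega⟩ + 1 =
      ShiftIdx q w ⟨0, by omega⟩ +
        ∑ a ∈ Finset.range (k + 1),
          Nat.choose k a *
            Nat.choose (2 * k + 1 + m)
              (⌈((t : ℚ) - (a : ℚ) * (2 * (k : ℚ) + 3)) / ((k : ℚ) + 1)⌉.toNat) := by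
  have hs : Setup k m n t q w := ⟨hk, hm, hn, ht, hq, hw⟩
  have h0 : ((⟨0, by omega⟩ : Fin n) : ℕ) = 0 := rfl
  have h1 : ((⟨1, by omega⟩ : Fin n) : ℕ) = 1 := rfl
  have hsum : ∑ a ∈ Finset.range (k + 1), Nat.choose k a * Nat.choose (2 * k + 1 + m)
        (⌈((t : ℚ) - (a : ℚ) * (2 * (k : ℚ) + 3)) / ((k : ℚ) + 1)⌉.toNat)
      = ∑ a ∈ Finset.range (k + 1), Nat.choose k a * Nat.choose (2 * k + 1 + m)
        (Ea k t a) := by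
    apply Finset.sum_congr rfl
    intro a ha
    rw [Finset.mem_range] at ha
    congr 1
    have ha' : a ≤ k := by omega
    have hAle : a * (2 * k + 3) + 1 ≤ t := by
      have h1' : a * (2 * k + 3) ≤ k * (2 * k + 3) := Nat.mul_le_mul_right _ ha'
      have h2' := hs.ht'
      omega
    have hcast : ((a * (2 * k + 3) : ℕ) : ℚ) = (a : ℚ) * (2 * (k : ℚ) + 3) := by
      push_cast; ring
    have hcl := ceil_toNat k t (a * (2 * k + 3)) hk hAle
    rw [hcast] at hcl
    rw [hcl]
    rfl
  refine ⟨hs.bz0 h0 h1, hs.bz1 h0 h1, ?_, ?_, ?_⟩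
  · intro hk1
    rw [hs.shiftIdx0 h0 h1, if_pos hk1]
  · intro hk2
    rw [hs.shiftIdx0 h0 h1, if_neg (by omega)]
  · rw [hs.shiftIdx1 h0 h1, hs.shiftIdx0 h0 h1, hsum]
    split_ifs <;> omega


end Stmt18
end
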